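/- arXiv:2009.04510 — 10 statements merged into one kernel-verified Lean document; each statement's English description precedes it below -/
import Mathlib

section
/- For all integers n ≥ 2, L ≥ 2 and d ≥ 2, the polynomial p_d attains its global minimum over the standard simplex Δ_m at the barycenter x* = (1/m)(1,…,1); that is, p_d(x*) ≤ p_d(x) for every x ∈ Δ_m. -/
open Finset

/-- The set of edges of the complete `L`-uniform hypergraph on `n` vertices. -/
abbrev Edge (n L : ℕ) := {e : Finset (Fin n) // e.card = L}

/-- The polynomial `p_d(x) = ∑_{(e_1,…,e_d) ∈ E^d} (1/|e_1 ∪ ⋯ ∪ e_d|) x_{e_1} ⋯ x_{e_d}`. -/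
noncomputable def pPoly (n L d : ℕ) (x : Edge n L → ℝ) : ℝ :=
  ∑ t : Fin d → Edge n L,
    ((Finset.univ.biUnion fun i => (t i).1).card : ℝ)⁻¹ * ∏ i, x (t i)

namespace StmtAux

variable {n L d : ℕ}

/-- union of the edges of a tuple -/
def tU (t : Fin d → Edge n L) : Finset (Fin n) := Finset.univ.biUnion fun i => (t i).1

noncomputable def qFun (x : Edge n L → ℝ) (s : ℝ) : ℝ :=
  ∑ t : Fin d → Edge n L, s ^ ((tU t).card - 1) * ∏ i, x (t i)

noncomputable def fM (M : Finset (Fin n)) (x : Edge n L → ℝ) : ℝ :=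
  ∑ e : Edge n L, if e.1 ⊆ M then x e else 0

noncomputable def hFun (s : ℝ) (x : Edge n L → ℝ) : ℝ :=
  ∑ M : Finset (Fin n), s ^ (M.card - 1) * (1 - s) ^ (n - M.card) * fM M x ^ d

lemma sumA (S : Finset (Fin n)) (hS : S.Nonempty) (s : ℝ) :
    (∑ M : Finset (Fin n),
      if S ⊆ M then s ^ (M.card - 1) * (1 - s) ^ (n - M.card) else 0)
      = s ^ (S.card - 1) := by
  rw [← Finset.sum_filter]
  have hbij : ∑ M ∈ Finset.univ.filter (fun M => S ⊆ M),
      s ^ (M.card - 1) * (1 - s) ^ (n - M.card)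
      = ∑ T ∈ Sᶜ.powerset, s ^ ((S ∪ T).card - 1) * (1 - s) ^ (n - (S ∪ T).card) := by
    refine Finset.sum_nbij' (fun M => M \ S) (fun T => S ∪ T) ?_ ?_ ?_ ?_ ?_
    · intro M hM
      simp only [Finset.mem_powerset]
      intro a ha
      simp only [Finset.mem_sdiff] at ha
      simp [Finset.mem_compl, ha.2]
    · intro T hT
      simp
    · intro M hM
      simp only [Finset.mem_filter] at hM
      exact Finset.union_sdiff_of_subset hM.2
    · intro T hT
      simp only [Finset.mem_powerset] at hT
      refine Finset.union_sdiff_cancel_left ?_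
      rw [Finset.disjoint_left]
      intro a haS haT
      have := hT haT
      simp [Finset.mem_compl] at this
      exact this haS
    · intro M hM
      simp only [Finset.mem_filter] at hM
      rw [Finset.union_sdiff_of_subset hM.2]
  rw [hbij]
  have hScard : 1 ≤ S.card := Finset.card_pos.mpr hS
  have hcompl : Sᶜ.card = n - S.card := by
    rw [Finset.card_compl, Fintype.card_fin]
  have hstep : ∀ T ∈ Sᶜ.powerset,
      s ^ ((S ∪ T).card - 1) * (1 - s) ^ (n - (S ∪ T).card)
      = s ^ (S.card - 1) * (s ^ T.card * (1 - s) ^ (Sᶜ.card - T.card)) := by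
    intro T hT
    simp only [Finset.mem_powerset] at hT
    have hdisj : Disjoint S T := by
      rw [Finset.disjoint_left]
      intro a haS haT
      have := hT haT
      simp [Finset.mem_compl] at this
      exact this haS
    have hcard : (S ∪ T).card = S.card + T.card := Finset.card_union_of_disjoint hdisj
    have hTle : T.card ≤ Sᶜ.card := Finset.card_le_card hT
    have hSn : S.card ≤ n := by
      have := Finset.card_le_card (Finset.subset_univ S)
      simpa using this
    rw [hcard]
    have h1 : S.card + T.card - 1 = (S.card - 1) + T.card := by omega
    have h2 : n - (S.card + T.card) = Sᶜ.card - T.card := by omega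
    rw [h1, h2, pow_add, mul_assoc]
  rw [Finset.sum_congr rfl hstep, ← Finset.mul_sum]
  rw [Finset.sum_pow_mul_eq_add_pow s (1 - s) Sᶜ]
  simp

lemma tU_nonempty (hL : 1 ≤ L) (hd : 1 ≤ d) (t : Fin d → Edge n L) : (tU t).Nonempty := by
  have i0 : Fin d := ⟨0, hd⟩
  have h1 : (t i0).1.Nonempty := Finset.card_pos.mp (by rw [(t i0).2]; omega)
  exact h1.mono (Finset.subset_biUnion_of_mem (fun i => (t i).1) (Finset.mem_univ i0))

lemma hq (hL : 1 ≤ L) (hd : 1 ≤ d) (x : Edge n L → ℝ) (s : ℝ) :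
    hFun (d := d) s x = qFun (d := d) x s := by
  unfold hFun qFun fM
  have hpow : ∀ M : Finset (Fin n), (∑ e : Edge n L, if e.1 ⊆ M then x e else 0) ^ d
      = ∑ t : Fin d → Edge n L, if tU t ⊆ M then ∏ i, x (t i) else 0 := by
    intro M
    rw [Finset.sum_pow' Finset.univ (fun e : Edge n L => if e.1 ⊆ M then x e else 0) d]
    rw [Fintype.piFinset_univ]
    refine Finset.sum_congr rfl fun t _ => ?_
    by_cases h : tU t ⊆ M
    · rw [if_pos h]
      refine Finset.prod_congr rfl fun i _ => ?_
      exact if_pos (Finset.Subset.trans (Finset.subset_biUnion_of_mem (fun i => (t i).1)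
        (Finset.mem_univ i)) h)
    · rw [if_neg h]
      rw [tU, Finset.biUnion_subset] at h
      push_neg at h
      obtain ⟨i, _, hi⟩ := h
      exact Finset.prod_eq_zero (Finset.mem_univ i) (if_neg hi)
  calc ∑ M : Finset (Fin n), s ^ (M.card - 1) * (1 - s) ^ (n - M.card) *
          (∑ e : Edge n L, if e.1 ⊆ M then x e else 0) ^ d
      = ∑ M : Finset (Fin n), ∑ t : Fin d → Edge n L,
          (if tU t ⊆ M then s ^ (M.card - 1) * (1 - s) ^ (n - M.card) * ∏ i, x (t i) else 0) := by
        refine Finset.sum_congr rfl fun M _ => ?_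
        rw [hpow M, Finset.mul_sum]
        refine Finset.sum_congr rfl fun t _ => ?_
        split <;> simp
    _ = ∑ t : Fin d → Edge n L, ∑ M : Finset (Fin n),
          (if tU t ⊆ M then s ^ (M.card - 1) * (1 - s) ^ (n - M.card) else 0) * ∏ i, x (t i) := by
        rw [Finset.sum_comm]
        refine Finset.sum_congr rfl fun t _ => Finset.sum_congr rfl fun M _ => ?_
        split <;> simp
    _ = ∑ t : Fin d → Edge n L, s ^ ((tU t).card - 1) * ∏ i, x (t i) := by
        refine Finset.sum_congr rfl fun t _ => ?_
        rw [← Finset.sum_mul, sumA (tU t) (tU_nonempty hL hd t) s]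

lemma integral_q (hL : 1 ≤ L) (hd : 1 ≤ d) (x : Edge n L → ℝ) :
    ∫ s in (0:ℝ)..1, qFun (d := d) x s = pPoly n L d x := by
  unfold qFun pPoly
  rw [intervalIntegral.integral_finset_sum]
  · refine Finset.sum_congr rfl fun t _ => ?_
    rw [intervalIntegral.integral_mul_const, integral_pow]
    have hk : 1 ≤ (tU t).card := Finset.card_pos.mpr (tU_nonempty hL hd t)
    have h1 : (tU t).card - 1 + 1 = (tU t).card := by omega
    have h2 : ((#(tU t) - 1 : ℕ) : ℝ) + 1 = (#(tU t) : ℝ) := by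
      exact_mod_cast congrArg (fun m : ℕ => (m : ℝ)) h1
    rw [one_pow, zero_pow (Nat.succ_ne_zero _), sub_zero, h2, one_div]
    rfl
  · intro t _
    exact ((continuous_pow _).mul continuous_const).intervalIntegrable _ _


def actE (σ : Equiv.Perm (Fin n)) (e : Edge n L) : Edge n L :=
  ⟨e.1.image σ, by rw [Finset.card_image_of_injective _ σ.injective, e.2]⟩

lemma actE_one (e : Edge n L) : actE 1 e = e := by
  apply Subtype.ext
  simp [actE]

lemma actE_mul (σ τ : Equiv.Perm (Fin n)) (e : Edge n L) :
    actE (σ * τ) e = actE σ (actE τ e) := by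
  apply Subtype.ext
  simp [actE, Finset.image_image, Function.comp_def]

/-- `actE σ` as an equivalence of edges. -/
def permE (σ : Equiv.Perm (Fin n)) : Edge n L ≃ Edge n L where
  toFun := actE σ
  invFun := actE σ⁻¹
  left_inv e := by rw [← actE_mul, inv_mul_cancel, actE_one]
  right_inv e := by rw [← actE_mul, mul_inv_cancel, actE_one]

lemma exists_perm (e e' : Edge n L) : ∃ τ : Equiv.Perm (Fin n), actE τ e = e' := by
  classical
  have hcard : Fintype.card {a // a ∈ e.1} = Fintype.card {a // a ∈ e'.1} := by
    simp only [Fintype.card_coe, e.2, e'.2]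
  let f : {a // a ∈ e.1} ≃ {a // a ∈ e'.1} := Fintype.equivOfCardEq hcard
  refine ⟨f.extendSubtype, ?_⟩
  apply Subtype.ext
  have hsub : e.1.image f.extendSubtype ⊆ e'.1 := by
    intro a ha
    simp only [Finset.mem_image] at ha
    obtain ⟨b, hb, rfl⟩ := ha
    exact f.extendSubtype_mem b hb
  have hc : (e.1.image f.extendSubtype).card = e'.1.card := by
    rw [Finset.card_image_of_injective _ f.extendSubtype.injective, e.2, e'.2]
  exact Finset.eq_of_subset_of_card_le hsub (le_of_eq hc.symm)

lemma sum_perm_const (x : Edge n L → ℝ) (e e' : Edge n L) :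
    ∑ σ : Equiv.Perm (Fin n), x (actE σ e) = ∑ σ : Equiv.Perm (Fin n), x (actE σ e') := by
  obtain ⟨τ, hτ⟩ := exists_perm e' e
  refine Fintype.sum_equiv (Equiv.mulRight τ) _ _ fun σ => ?_
  simp only [Equiv.coe_mulRight]
  rw [actE_mul, hτ]

lemma sum_act_edges (x : Edge n L → ℝ) (σ : Equiv.Perm (Fin n)) :
    ∑ e : Edge n L, x (actE σ e) = ∑ e : Edge n L, x e :=
  Fintype.sum_equiv (permE σ) _ _ fun e => rfl

lemma card_edge : Fintype.card (Edge n L) = n.choose L := by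
  rw [Fintype.card_finset_len, Fintype.card_fin]

lemma sum_perm_eq (x : Edge n L → ℝ) (hx1 : ∑ e : Edge n L, x e = 1) (e : Edge n L) :
    ∑ σ : Equiv.Perm (Fin n), x (actE σ e) = (n.factorial : ℝ) / (n.choose L : ℝ) := by
  have hne : Nonempty (Edge n L) := ⟨e⟩
  have hm : (0 : ℕ) < n.choose L := by
    rw [← card_edge (n := n) (L := L)]
    exact Fintype.card_pos
  have htot : ∑ e' : Edge n L, ∑ σ : Equiv.Perm (Fin n), x (actE σ e')
      = (n.factorial : ℝ) := by
    rw [Finset.sum_comm]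
    have : ∀ σ : Equiv.Perm (Fin n), ∑ e' : Edge n L, x (actE σ e') = 1 := fun σ => by
      rw [sum_act_edges, hx1]
    rw [Finset.sum_congr rfl (fun σ _ => this σ)]
    simp [Fintype.card_perm]
  have hconst : ∑ e' : Edge n L, ∑ σ : Equiv.Perm (Fin n), x (actE σ e')
      = (n.choose L : ℝ) * ∑ σ : Equiv.Perm (Fin n), x (actE σ e) := by
    rw [Finset.sum_congr rfl (fun e' _ => sum_perm_const x e' e)]
    rw [Finset.sum_const, Finset.card_univ, card_edge, nsmul_eq_mul]
  rw [hconst] at htot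
  field_simp at htot ⊢
  linarith [htot]


lemma pPoly_comp (σ : Equiv.Perm (Fin n)) (x : Edge n L → ℝ) :
    pPoly n L d (fun e => x (actE σ e)) = pPoly n L d x := by
  unfold pPoly
  refine Fintype.sum_equiv (Equiv.piCongrRight fun _ : Fin d => permE (L := L) σ) _ _ fun t => ?_
  have hcard : (Finset.univ.biUnion fun i => (actE σ (t i)).1)
      = (Finset.univ.biUnion fun i => (t i).1).image σ := by
    rw [Finset.biUnion_image]
    rfl
  have h2 : ((Finset.univ.biUnion fun i => (actE σ (t i)).1).card : ℝ)
      = ((Finset.univ.biUnion fun i => (t i).1).card : ℝ) := by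
    rw [hcard, Finset.card_image_of_injective _ σ.injective]
  calc ((Finset.univ.biUnion fun i => (t i).1).card : ℝ)⁻¹ * ∏ i, x (actE σ (t i))
      = ((Finset.univ.biUnion fun i => (actE σ (t i)).1).card : ℝ)⁻¹
        * ∏ i, x (actE σ (t i)) := by rw [h2]
    _ = _ := rfl

lemma fM_nonneg (M : Finset (Fin n)) (x : Edge n L → ℝ) (hx : ∀ e, 0 ≤ x e) :
    0 ≤ fM M x := by
  refine Finset.sum_nonneg fun e _ => ?_
  split
  · exact hx e
  · exact le_refl _

lemma fM_bary (x : Edge n L → ℝ) (hx1 : ∑ e : Edge n L, x e = 1) (M : Finset (Fin n)) :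
    fM M (fun _ : Edge n L => ((n.choose L : ℝ))⁻¹)
      = ∑ σ : Equiv.Perm (Fin n), ((n.factorial : ℝ))⁻¹ * fM M (fun e => x (actE σ e)) := by
  have hfac : (n.factorial : ℝ) ≠ 0 := Nat.cast_ne_zero.mpr (Nat.factorial_ne_zero n)
  unfold fM
  symm
  calc ∑ σ : Equiv.Perm (Fin n), (n.factorial : ℝ)⁻¹
          * ∑ e : Edge n L, (if e.1 ⊆ M then x (actE σ e) else 0)
      = ∑ e : Edge n L, ∑ σ : Equiv.Perm (Fin n),
          (n.factorial : ℝ)⁻¹ * (if e.1 ⊆ M then x (actE σ e) else 0) := by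
        simp only [Finset.mul_sum]
        rw [Finset.sum_comm]
    _ = ∑ e : Edge n L, (if e.1 ⊆ M
          then ∑ σ : Equiv.Perm (Fin n), (n.factorial : ℝ)⁻¹ * x (actE σ e) else 0) := by
        refine Finset.sum_congr rfl fun e _ => ?_
        by_cases h : e.1 ⊆ M
        · simp only [if_pos h]
        · simp [if_neg h]
    _ = ∑ e : Edge n L, (if e.1 ⊆ M then ((n.choose L : ℝ))⁻¹ else 0) := by
        refine Finset.sum_congr rfl fun e _ => ?_
        by_cases h : e.1 ⊆ M
        · rw [if_pos h, if_pos h, ← Finset.mul_sum, sum_perm_eq x hx1 e,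
            div_eq_mul_inv, ← mul_assoc, inv_mul_cancel₀ hfac, one_mul]
        · simp [h]

lemma weight_sum_one : ∑ _σ : Equiv.Perm (Fin n), ((n.factorial : ℝ))⁻¹ = 1 := by
  have hfac : (n.factorial : ℝ) ≠ 0 := Nat.cast_ne_zero.mpr (Nat.factorial_ne_zero n)
  rw [Finset.sum_const, Finset.card_univ, Fintype.card_perm, Fintype.card_fin,
    nsmul_eq_mul, mul_inv_cancel₀ hfac]

lemma h_bary_le (x : Edge n L → ℝ) (hx : x ∈ stdSimplex ℝ (Edge n L))
    {s : ℝ} (hs0 : 0 ≤ s) (hs1 : s ≤ 1) :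
    hFun (d := d) s (fun _ : Edge n L => ((n.choose L : ℝ))⁻¹)
      ≤ ∑ σ : Equiv.Perm (Fin n),
          ((n.factorial : ℝ))⁻¹ * hFun (d := d) s (fun e => x (actE σ e)) := by
  have hrhs : ∑ σ : Equiv.Perm (Fin n),
        ((n.factorial : ℝ))⁻¹ * hFun (d := d) s (fun e => x (actE σ e))
      = ∑ M : Finset (Fin n), s ^ (M.card - 1) * (1 - s) ^ (n - M.card)
          * ∑ σ : Equiv.Perm (Fin n),
              ((n.factorial : ℝ))⁻¹ * fM M (fun e => x (actE σ e)) ^ d := by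
    unfold hFun
    simp only [Finset.mul_sum]
    rw [Finset.sum_comm]
    refine Finset.sum_congr rfl fun M _ => ?_
    refine Finset.sum_congr rfl fun σ _ => by ring
  rw [hrhs]
  unfold hFun
  refine Finset.sum_le_sum fun M _ => ?_
  refine mul_le_mul_of_nonneg_left ?_
    (mul_nonneg (pow_nonneg hs0 _) (pow_nonneg (by linarith) _))
  rw [fM_bary x hx.2 M]
  exact Real.pow_arith_mean_le_arith_mean_pow Finset.univ _ _
    (fun _ _ => inv_nonneg.mpr (Nat.cast_nonneg _)) weight_sum_one
    (fun σ _ => fM_nonneg M _ (fun e => hx.1 _)) d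

lemma cont_h (x : Edge n L → ℝ) : Continuous fun s : ℝ => hFun (d := d) s x := by
  refine continuous_finset_sum _ fun M _ => ?_
  exact ((continuous_pow _).mul ((continuous_const.sub continuous_id).pow _)).mul
    continuous_const

end StmtAux


open StmtAux in
/-- `p_d` attains its global minimum over the standard simplex at the barycenter. -/
theorem stmt0 (n L d : ℕ) (hn : 2 ≤ n) (hL : 2 ≤ L) (hd : 2 ≤ d) :
    ∀ x ∈ stdSimplex ℝ (Edge n L),
      pPoly n L d (fun _ => ((n.choose L : ℝ))⁻¹) ≤ pPoly n L d x := by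
  intro x hx
  have hL1 : 1 ≤ L := le_trans (by norm_num) hL
  have hd1 : 1 ≤ d := le_trans (by norm_num) hd
  have hPz : ∀ z : Edge n L → ℝ,
      ∫ s in (0:ℝ)..1, hFun (d := d) s z = pPoly n L d z := by
    intro z
    simp only [hq hL1 hd1 z]
    exact integral_q hL1 hd1 z
  have hintc : ∀ z : Edge n L → ℝ,
      IntervalIntegrable (fun s => hFun (d := d) s z) MeasureTheory.volume 0 1 :=
    fun z => (cont_h z).intervalIntegrable 0 1
  calc pPoly n L d (fun _ => ((n.choose L : ℝ))⁻¹)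
      = ∫ s in (0:ℝ)..1, hFun (d := d) s (fun _ : Edge n L => ((n.choose L : ℝ))⁻¹) :=
        (hPz _).symm
    _ ≤ ∫ s in (0:ℝ)..1, ∑ σ : Equiv.Perm (Fin n),
          ((n.factorial : ℝ))⁻¹ * hFun (d := d) s (fun e => x (actE σ e)) := by
        refine intervalIntegral.integral_mono_on (by norm_num) (hintc _) ?_ ?_
        · exact (continuous_finset_sum _ fun σ _ =>
            continuous_const.mul (cont_h _)).intervalIntegrable 0 1
        · intro s hs
          exact h_bary_le x hx hs.1 hs.2
    _ = ∑ σ : Equiv.Perm (Fin n), ((n.factorial : ℝ))⁻¹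
          * ∫ s in (0:ℝ)..1, hFun (d := d) s (fun e => x (actE σ e)) := by
        rw [intervalIntegral.integral_finset_sum
          (f := fun σ s => ((n.factorial : ℝ))⁻¹ * hFun (d := d) s (fun e => x (actE σ e)))
          (fun σ _ => (continuous_const.mul (cont_h _)).intervalIntegrable 0 1)]
        exact Finset.sum_congr rfl fun σ _ => intervalIntegral.integral_const_mul _ _
    _ = ∑ σ : Equiv.Perm (Fin n), ((n.factorial : ℝ))⁻¹ * pPoly n L d x := by
        refine Finset.sum_congr rfl fun σ _ => ?_
        rw [hPz, pPoly_comp]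
    _ = pPoly n L d x := by
        rw [← Finset.sum_mul, weight_sum_one, one_mul]
end

section
/- For all integers n ≥ 2, L ≥ 2 and d ≥ 2, the polynomial p_d is convex on the standard simplex Δ_m; equivalently, its Hessian matrix H(p_d)(x) = (∂²p_d(x)/∂x_e ∂x_f)_{e,f ∈ E} is positive semidefinite at every point x ∈ Δ_m. -/
open Finset

lemma binom_sum (M m : ℕ) (h : m ≤ M) :
    ∑ r ∈ range (m+1), ((m.choose r : ℝ) / (M.choose r)) =
      ((M : ℝ)+1) / ((M : ℝ)+1-m) := by
  have key : ∀ r ∈ range (m+1),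
      ((m.choose r : ℝ) / (M.choose r)) = ((M-r).choose (M-m) : ℝ) / (M.choose m) := by
    intro r hr
    rw [mem_range, Nat.lt_succ_iff] at hr
    have h1 : (M.choose m : ℝ) * (m.choose r) = (M.choose r) * ((M-r).choose (m-r)) := by
      exact_mod_cast congrArg (Nat.cast : ℕ → ℝ) (Nat.choose_mul hr)
    have h2 : (M-r).choose (m-r) = (M-r).choose (M-m) := by
      rw [← Nat.choose_symm (by omega : m - r ≤ M - r)]
      congr 1; omega
    have hMr : (M.choose r : ℝ) ≠ 0 := by
      exact_mod_cast Nat.choose_pos (hr.trans h) |>.ne'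
    have hMm : (M.choose m : ℝ) ≠ 0 := by
      exact_mod_cast (Nat.choose_pos h).ne'
    rw [← h2]
    field_simp
    linarith [h1]
  rw [Finset.sum_congr rfl key, ← Finset.sum_div]
  have hsum : ∑ r ∈ range (m+1), ((M-r).choose (M-m) : ℝ)
      = ((M+1).choose m : ℝ) := by
    have : ∑ r ∈ range (m+1), (M-r).choose (M-m) = (M+1).choose m := by
      have hbij : ∑ r ∈ range (m+1), (M-r).choose (M-m)
          = ∑ i ∈ Icc (M-m) M, i.choose (M-m) := by
        apply Finset.sum_nbij' (fun r => M - r) (fun i => M - i)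
        · intro r hr; rw [mem_range, Nat.lt_succ_iff] at hr; simp [mem_Icc]; omega
        · intro i hi; rw [mem_Icc] at hi; simp [mem_range]; omega
        · intro r hr; rw [mem_range, Nat.lt_succ_iff] at hr; omega
        · intro i hi; rw [mem_Icc] at hi; omega
        · intro r hr; rfl
      rw [hbij, Nat.sum_Icc_choose]
      rw [← Nat.choose_symm (by omega : m ≤ M + 1)]
      congr 1; omega
    exact_mod_cast congrArg (Nat.cast : ℕ → ℝ) this
  rw [hsum]
  have hid : (M.choose m : ℝ) * ((M:ℝ)+1) = ((M+1).choose m : ℝ) * ((M:ℝ)+1-m) := by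
    have := Nat.choose_mul_succ_eq M m
    have hc : ((M:ℝ)+1-m) = ((M + 1 - m : ℕ) : ℝ) := by
      rw [Nat.cast_sub (by omega)]; push_cast; ring
    rw [hc]
    exact_mod_cast congrArg (Nat.cast : ℕ → ℝ) this
  have hMm : (M.choose m : ℝ) ≠ 0 := by exact_mod_cast (Nat.choose_pos h).ne'
  have hd : ((M:ℝ)+1-m) ≠ 0 := by
    have : (m:ℝ) ≤ M := by exact_mod_cast h
    linarith
  field_simp
  linarith [hid]

noncomputable def cw (n r : ℕ) : ℝ := ((n : ℝ) * ((n-1).choose r))⁻¹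

lemma cw_nonneg (n r : ℕ) : 0 ≤ cw n r := by
  unfold cw; positivity

lemma inv_card_eq_sum {n : ℕ} (hn : 1 ≤ n) (S : Finset (Fin n)) (hS : S.Nonempty) :
    ((S.card : ℝ))⁻¹ =
      ∑ R ∈ univ.filter (fun R : Finset (Fin n) => Disjoint R S), cw n R.card := by
  classical
  have hfilt : univ.filter (fun R : Finset (Fin n) => Disjoint R S) = Sᶜ.powerset := by
    ext R; simp only [Finset.mem_filter, Finset.mem_univ, true_and, Finset.mem_powerset]
    constructor
    · intro h a ha
      simp only [Finset.mem_compl]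
      exact fun hS => (Finset.disjoint_left.mp h ha) hS
    · intro h
      exact Finset.disjoint_left.mpr fun a ha hS => by have := h ha; simp at this; exact this hS
  rw [hfilt, Finset.powerset_card_biUnion,
    Finset.sum_biUnion ((Finset.pairwise_disjoint_powersetCard _).set_pairwise _)]
  have hinner : ∀ r ∈ range (Sᶜ.card + 1),
      ∑ R ∈ Finset.powersetCard r Sᶜ, cw n R.card = (Sᶜ.card.choose r : ℝ) * cw n r := by
    intro r _
    rw [Finset.sum_congr rfl (fun R hR => by rw [(Finset.mem_powersetCard.mp hR).2]),
      Finset.sum_const, Finset.card_powersetCard, nsmul_eq_mul]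
  rw [Finset.sum_congr rfl hinner]
  set k := S.card with hk
  have hk1 : 1 ≤ k := hS.card_pos
  have hkn : k ≤ n := by simpa using S.card_le_univ
  have hcompl : Sᶜ.card = n - k := by simp [Finset.card_compl, hk]
  have hstep : ∀ r, (((n-k : ℕ)).choose r : ℝ) * cw n r
      = (n:ℝ)⁻¹ * (((n-k:ℕ).choose r : ℝ) / ((n-1).choose r)) := by
    intro r; unfold cw; rw [mul_inv]; ring
  rw [hcompl, Finset.sum_congr rfl (fun r _ => hstep r), ← Finset.mul_sum,
    binom_sum (n-1) (n-k) (by omega)]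
  have h1 : ((n-1 : ℕ) : ℝ) + 1 = (n : ℝ) := by
    rw [Nat.cast_sub hn]; ring
  have h2 : ((n-k : ℕ) : ℝ) = (n : ℝ) - k := Nat.cast_sub hkn
  rw [h1, h2]
  have hn0 : (n : ℝ) ≠ 0 := by positivity
  have hk0 : (k : ℝ) ≠ 0 := by positivity
  field_simp
  rw [sub_sub_cancel, div_self hk0]


lemma pPoly_eq (n L d : ℕ) (hn : 1 ≤ n) (hL : 1 ≤ L) (hd : 1 ≤ d) (x : Edge n L → ℝ) :
    pPoly n L d x = ∑ R : Finset (Fin n), cw n R.card *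
      (∑ e ∈ univ.filter (fun e : Edge n L => Disjoint R e.1), x e) ^ d := by
  classical
  have mid : pPoly n L d x = ∑ t : Fin d → Edge n L, ∑ R : Finset (Fin n),
      (if ∀ i, Disjoint R (t i).1 then cw n R.card * ∏ i, x (t i) else 0) := by
    unfold pPoly
    apply Finset.sum_congr rfl
    intro t _
    have hdis : ∀ R : Finset (Fin n),
        (∀ i, Disjoint R (t i).1) ↔ Disjoint R (Finset.univ.biUnion fun i => (t i).1) := by
      intro R
      rw [Finset.disjoint_biUnion_right]
      simp
    have hne : (Finset.univ.biUnion fun i => (t i).1).Nonempty := by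
      have i0 : Fin d := ⟨0, by omega⟩
      have h1 : (t i0).1.Nonempty := Finset.card_pos.mp (by rw [(t i0).2]; omega)
      obtain ⟨a, ha⟩ := h1
      exact ⟨a, Finset.mem_biUnion.mpr ⟨i0, Finset.mem_univ _, ha⟩⟩
    rw [← Finset.sum_filter, ← Finset.sum_mul]
    congr 1
    rw [Finset.filter_congr (fun R _ => hdis R)]
    exact (inv_card_eq_sum hn _ hne).symm ▸ rfl
  rw [mid, Finset.sum_comm]
  apply Finset.sum_congr rfl
  intro R _
  rw [← Finset.sum_filter]
  have hfil : (univ.filter fun t : Fin d → Edge n L => ∀ i, Disjoint R (t i).1)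
      = Fintype.piFinset (fun _ : Fin d => univ.filter fun e : Edge n L => Disjoint R e.1) := by
    ext t
    simp [Fintype.mem_piFinset]
  rw [hfil, ← Finset.mul_sum, ← Finset.prod_univ_sum]
  congr 1
  rw [Finset.prod_const, Finset.card_univ, Fintype.card_fin]

lemma convexOn_sum' {E : Type*} [AddCommGroup E] [Module ℝ E] {ι : Type*} (s : Finset ι)
    {t : Set E} (ht : Convex ℝ t) (f : ι → E → ℝ) :
    (∀ i ∈ s, ConvexOn ℝ t (f i)) → ConvexOn ℝ t (fun x => ∑ i ∈ s, f i x) := by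
  classical
  induction s using Finset.cons_induction with
  | empty => intro _; simpa using convexOn_const (0:ℝ) ht
  | cons a s ha ih =>
      intro h
      simp only [Finset.sum_cons]
      exact (h a (by simp)).add (ih fun i hi => h i (by simp [hi]))

/-- `p_d` is convex on the standard simplex. -/
theorem stmt1 (n L d : ℕ) (hn : 2 ≤ n) (hL : 2 ≤ L) (hd : 2 ≤ d) :
    ConvexOn ℝ (stdSimplex ℝ (Edge n L)) (pPoly n L d) := by
  classical
  have heq : pPoly n L d = fun x => ∑ R : Finset (Fin n), cw n R.card *
      (∑ e ∈ univ.filter (fun e : Edge n L => Disjoint R e.1), x e) ^ d :=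
    funext fun x => pPoly_eq n L d (by omega) (by omega) (by omega) x
  rw [heq]
  have hconv : Convex ℝ (stdSimplex ℝ (Edge n L)) := convex_stdSimplex ℝ _
  apply convexOn_sum' _ hconv
  intro R _
  have hnn := cw_nonneg n R.card
  set F := univ.filter (fun e : Edge n L => Disjoint R e.1) with hF
  have base : ConvexOn ℝ (stdSimplex ℝ (Edge n L))
      (fun x : Edge n L → ℝ => (∑ e ∈ F, x e) ^ d) := by
    set ℓ : (Edge n L → ℝ) →ₗ[ℝ] ℝ := ∑ e ∈ F, LinearMap.proj e with hℓdef
    have hℓ : ∀ x : Edge n L → ℝ, ℓ x = ∑ e ∈ F, x e := by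
      intro x
      rw [hℓdef, LinearMap.coe_sum, Finset.sum_apply]
      rfl
    have hfun : (fun x : Edge n L → ℝ => (∑ e ∈ F, x e) ^ d)
        = (fun y : ℝ => y ^ d) ∘ ℓ.toAffineMap := by
      funext x
      simp only [Function.comp_apply, LinearMap.coe_toAffineMap, hℓ]
    rw [hfun]
    refine ((convexOn_pow d).comp_affineMap ℓ.toAffineMap).subset ?_ hconv
    intro x hx
    simp only [Set.mem_preimage, LinearMap.coe_toAffineMap, Set.mem_Ici, hℓ]
    exact Finset.sum_nonneg fun e _ => hx.1 e
  simpa [smul_eq_mul] using base.smul hnn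
end

section
/- Assume that for every subset W ⊆ V with |W| ≤ L(d−2), and additionally |W| ≥ L in case d ≥ 3, the matrix M_W = (1/|W ∪ e ∪ f|)_{e,f ∈ E} is positive semidefinite (for d = 2 the only such set is W = ∅). Then the polynomial p_d is convex on the standard simplex Δ_m. -/
open Finset

/-- The matrix `M_W = (1/|W ∪ e ∪ f|)_{e,f ∈ E}`. -/
noncomputable def Mmat (n L : ℕ) (W : Finset (Fin n)) : Matrix (Edge n L) (Edge n L) ℝ :=
  Matrix.of fun e f => ((W ∪ e.1 ∪ f.1).card : ℝ)⁻¹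

/-- The coefficient `1/|e_1 ∪ ⋯ ∪ e_d|`. -/
noncomputable def cc (n L d : ℕ) (t : Fin d → Edge n L) : ℝ :=
  ((Finset.univ.biUnion fun i => (t i).1).card : ℝ)⁻¹

lemma sum_pi_fin_succ {k : ℕ} {β : Type*} [Fintype β] (F : (Fin (k + 1) → β) → ℝ) :
    ∑ u : Fin (k + 1) → β, F u = ∑ e : β, ∑ r : Fin k → β, F (Fin.cons e r) := by
  rw [← (Fin.consEquiv fun _ : Fin (k + 1) => β).sum_comp F, Fintype.sum_prod_type]
  rfl

lemma biUnion_univ_succ {k : ℕ} {α : Type*} [DecidableEq α] (g : Fin (k + 1) → Finset α) :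
    Finset.univ.biUnion g = g 0 ∪ Finset.univ.biUnion (fun i : Fin k => g i.succ) := by
  ext a
  simp [Finset.mem_biUnion, Fin.exists_fin_succ]

lemma biUnion_comp_equiv {k : ℕ} {α : Type*} [DecidableEq α] (e : Equiv.Perm (Fin k))
    (g : Fin k → Finset α) :
    Finset.univ.biUnion (fun i => g (e i)) = Finset.univ.biUnion g := by
  ext a
  simp only [Finset.mem_biUnion, Finset.mem_univ, true_and]
  exact ⟨fun ⟨i, h⟩ => ⟨e i, h⟩, fun ⟨i, h⟩ => ⟨e.symm i, by simpa using h⟩⟩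

lemma erase01_eq (m : ℕ) :
    ((Finset.univ : Finset (Fin (m + 2))).erase 0).erase 1 =
      Finset.univ.map ⟨fun i : Fin m => i.succ.succ,
        fun a b h => Fin.succ_injective _ (Fin.succ_injective _ h)⟩ := by
  ext i
  simp only [Finset.mem_erase, Finset.mem_univ, and_true, Finset.mem_map,
    Function.Embedding.coeFn_mk, true_and]
  constructor
  · rintro ⟨h1, h0⟩
    obtain ⟨j, rfl⟩ := Fin.exists_succ_eq_of_ne_zero h0
    have hj : j ≠ 0 := by
      rintro rfl
      exact h1 (Fin.succ_zero_eq_one' (n := m + 1))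
    obtain ⟨l, rfl⟩ := Fin.exists_succ_eq_of_ne_zero hj
    exact ⟨l, rfl⟩
  · rintro ⟨j, rfl⟩
    show j.succ.succ ≠ 1 ∧ j.succ.succ ≠ 0
    refine ⟨?_, Fin.succ_ne_zero _⟩
    intro h
    have : j.succ = 0 := by
      apply Fin.succ_injective
      rw [h, Fin.succ_zero_eq_one' (n := m + 1)]
    exact Fin.succ_ne_zero _ this

/-- The key nonnegativity: the canonical piece of the second derivative is nonnegative. -/
lemma key_nonneg (n L m : ℕ)
    (hpsd : ∀ W : Finset (Fin n), W.card ≤ L * m → (1 ≤ m → L ≤ W.card) →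
      (Mmat n L W).PosSemidef)
    (w v : Edge n L → ℝ) (hw : ∀ e, 0 ≤ w e) :
    0 ≤ ∑ u : Fin (m + 2) → Edge n L,
        cc n L (m + 2) u *
          ((∏ i ∈ ((Finset.univ : Finset (Fin (m + 2))).erase 0).erase 1, w (u i)) *
            (v (u 1) * v (u 0))) := by
  classical
  set W : (Fin m → Edge n L) → Finset (Fin n) :=
    fun r => Finset.univ.biUnion fun i => (r i).1 with hW
  have step1 : ∑ u : Fin (m + 2) → Edge n L,
        cc n L (m + 2) u *
          ((∏ i ∈ ((Finset.univ : Finset (Fin (m + 2))).erase 0).erase 1, w (u i)) *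
            (v (u 1) * v (u 0)))
      = ∑ e : Edge n L, ∑ f : Edge n L, ∑ r : Fin m → Edge n L,
          ((W r ∪ e.1 ∪ f.1).card : ℝ)⁻¹ * ((∏ i, w (r i)) * (v f * v e)) := by
    rw [sum_pi_fin_succ]
    refine Finset.sum_congr rfl fun e _ => ?_
    rw [sum_pi_fin_succ]
    refine Finset.sum_congr rfl fun f _ => Finset.sum_congr rfl fun r _ => ?_
    have h1 : (Fin.cons e (Fin.cons f r) : Fin (m + 2) → Edge n L) 1 = f := by
      rw [← Fin.succ_zero_eq_one' (n := m + 1), Fin.cons_succ, Fin.cons_zero]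
    have hc : cc n L (m + 2) (Fin.cons e (Fin.cons f r)) = ((W r ∪ e.1 ∪ f.1).card : ℝ)⁻¹ := by
      unfold cc
      congr 2
      rw [biUnion_univ_succ]
      simp only [Fin.cons_zero, Fin.cons_succ]
      rw [biUnion_univ_succ]
      simp only [Fin.cons_zero, Fin.cons_succ, ← hW]
      rw [Finset.union_comm f.1 (W r), ← Finset.union_assoc, Finset.union_comm e.1 (W r)]
    have hp : (∏ i ∈ ((Finset.univ : Finset (Fin (m + 2))).erase 0).erase 1,
          w ((Fin.cons e (Fin.cons f r) : Fin (m + 2) → Edge n L) i)) = ∏ i, w (r i) := by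
      rw [erase01_eq, Finset.prod_map]
      refine Finset.prod_congr rfl fun i _ => ?_
      show w ((Fin.cons e (Fin.cons f r) : Fin (m + 2) → Edge n L) i.succ.succ) = w (r i)
      simp [Fin.cons_succ]
    rw [hc, hp, h1, Fin.cons_zero]
  rw [step1]
  have step2 : ∑ e : Edge n L, ∑ f : Edge n L, ∑ r : Fin m → Edge n L,
        ((W r ∪ e.1 ∪ f.1).card : ℝ)⁻¹ * ((∏ i, w (r i)) * (v f * v e))
      = ∑ r : Fin m → Edge n L, ∑ e : Edge n L, ∑ f : Edge n L,
          ((W r ∪ e.1 ∪ f.1).card : ℝ)⁻¹ * ((∏ i, w (r i)) * (v f * v e)) := by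
    calc ∑ e : Edge n L, ∑ f : Edge n L, ∑ r : Fin m → Edge n L,
          ((W r ∪ e.1 ∪ f.1).card : ℝ)⁻¹ * ((∏ i, w (r i)) * (v f * v e))
        = ∑ e : Edge n L, ∑ r : Fin m → Edge n L, ∑ f : Edge n L,
          ((W r ∪ e.1 ∪ f.1).card : ℝ)⁻¹ * ((∏ i, w (r i)) * (v f * v e)) := by
          refine Finset.sum_congr rfl fun e _ => ?_
          exact Finset.sum_comm
      _ = ∑ r : Fin m → Edge n L, ∑ e : Edge n L, ∑ f : Edge n L,
          ((W r ∪ e.1 ∪ f.1).card : ℝ)⁻¹ * ((∏ i, w (r i)) * (v f * v e)) := Finset.sum_comm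
  rw [step2]
  refine Finset.sum_nonneg fun r _ => ?_
  have hcard1 : (W r).card ≤ L * m := by
    calc (W r).card ≤ ∑ i : Fin m, (r i).1.card := Finset.card_biUnion_le
      _ = ∑ _i : Fin m, L := by exact Finset.sum_congr rfl fun i _ => (r i).2
      _ = L * m := by simp [Finset.sum_const, mul_comm]
  have hcard2 : 1 ≤ m → L ≤ (W r).card := by
    intro hm
    have i0 : Fin m := ⟨0, hm⟩
    have hsub : (r i0).1 ⊆ W r :=
      Finset.subset_biUnion_of_mem (fun i : Fin m => (r i).1) (Finset.mem_univ i0)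
    calc L = (r i0).1.card := (r i0).2.symm
      _ ≤ (W r).card := Finset.card_le_card hsub
  have hq := (hpsd (W r) hcard1 hcard2).dotProduct_mulVec_nonneg v
  have hq' : (0 : ℝ) ≤ ∑ e : Edge n L, v e * ∑ f : Edge n L,
      ((W r ∪ e.1 ∪ f.1).card : ℝ)⁻¹ * v f := by
    simpa [dotProduct, Matrix.mulVec, Mmat] using hq
  have : ∑ e : Edge n L, ∑ f : Edge n L,
      ((W r ∪ e.1 ∪ f.1).card : ℝ)⁻¹ * ((∏ i, w (r i)) * (v f * v e))
      = (∏ i, w (r i)) * ∑ e : Edge n L, v e * ∑ f : Edge n L,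
          ((W r ∪ e.1 ∪ f.1).card : ℝ)⁻¹ * v f := by
    rw [Finset.mul_sum]
    refine Finset.sum_congr rfl fun e _ => ?_
    rw [Finset.mul_sum, Finset.mul_sum]
    exact Finset.sum_congr rfl fun f _ => by ring
  rw [this]
  exact mul_nonneg (Finset.prod_nonneg fun i _ => hw _) hq'

/-- Reduce an arbitrary pair of positions to the canonical pair `(0, 1)` by symmetry. -/
lemma Tperm (n L m : ℕ) (w v : Edge n L → ℝ) (j k : Fin (m + 2)) (hjk : k ≠ j) :
    ∑ t : Fin (m + 2) → Edge n L,
        cc n L (m + 2) t *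
          ((∏ i ∈ ((Finset.univ : Finset (Fin (m + 2))).erase j).erase k, w (t i)) *
            (v (t k) * v (t j)))
    = ∑ u : Fin (m + 2) → Edge n L,
        cc n L (m + 2) u *
          ((∏ i ∈ ((Finset.univ : Finset (Fin (m + 2))).erase 0).erase 1, w (u i)) *
            (v (u 1) * v (u 0))) := by
  classical
  have h01 : (0 : Fin (m + 2)) ≠ 1 := Fin.zero_ne_one' (n := m + 1)
  set τ : Equiv.Perm (Fin (m + 2)) := Equiv.swap 0 j with hτ
  set k' : Fin (m + 2) := τ k with hk'
  have hτk' : τ k' = k := by rw [hk']; exact Equiv.swap_apply_self _ _ _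
  have hk'0 : k' ≠ 0 := by
    intro h
    apply hjk
    have : τ k' = τ 0 := by rw [h]
    rw [hτk', hτ] at this
    simpa [Equiv.swap_apply_left] using this
  set ρ : Equiv.Perm (Fin (m + 2)) := Equiv.swap 1 k' with hρ
  set σ : Equiv.Perm (Fin (m + 2)) := ρ.trans τ with hσ
  have hσ0 : σ 0 = j := by
    have hρ0 : ρ 0 = 0 := Equiv.swap_apply_of_ne_of_ne h01 (Ne.symm hk'0)
    simp only [hσ, Equiv.trans_apply, hρ0, hτ, Equiv.swap_apply_left]
  have hσ1 : σ 1 = k := by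
    have hρ1 : ρ 1 = k' := Equiv.swap_apply_left _ _
    simp only [hσ, Equiv.trans_apply, hρ1, hτk']
  set G : (Fin (m + 2) → Edge n L) → ℝ := fun u =>
    cc n L (m + 2) u *
      ((∏ i ∈ ((Finset.univ : Finset (Fin (m + 2))).erase 0).erase 1, w (u i)) *
        (v (u 1) * v (u 0))) with hG
  have := Equiv.sum_comp (Equiv.arrowCongr σ.symm (Equiv.refl (Edge n L))) G
  rw [← this]
  refine Finset.sum_congr rfl fun t _ => ?_
  have e't : (Equiv.arrowCongr σ.symm (Equiv.refl (Edge n L))) t = fun i => t (σ i) := rfl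
  simp only [hG, e't]
  rw [hσ0, hσ1]
  have hcc : cc n L (m + 2) (fun i => t (σ i)) = cc n L (m + 2) t := by
    unfold cc
    congr 3
    exact biUnion_comp_equiv σ (fun i => (t i).1)
  rw [hcc]
  have hemb : ∀ s : Finset (Fin (m + 2)),
      ∏ i ∈ s, w (t (σ i)) = ∏ i ∈ s.map σ.toEmbedding, w (t i) := by
    intro s
    rw [Finset.prod_map]
    rfl
  have hset : (((Finset.univ : Finset (Fin (m + 2))).erase 0).erase 1).map σ.toEmbedding
      = ((Finset.univ : Finset (Fin (m + 2))).erase j).erase k := by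
    rw [Finset.map_erase, Finset.map_erase, Finset.map_univ_equiv]
    have hj : σ.toEmbedding 0 = j := hσ0
    have hk : σ.toEmbedding 1 = k := hσ1
    rw [hj, hk]
  rw [hemb, hset]

/-- If `M_W` is positive semidefinite for every `W ⊆ V` with `|W| ≤ L(d−2)`
(and `|W| ≥ L` in case `d ≥ 3`), then `p_d` is convex on the standard simplex. -/
theorem stmt6 (n L d : ℕ) (hn : 2 ≤ n) (hL : 2 ≤ L) (hd : 2 ≤ d)
    (hpsd : ∀ W : Finset (Fin n), W.card ≤ L * (d - 2) → (3 ≤ d → L ≤ W.card) →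
      (Mmat n L W).PosSemidef) :
    ConvexOn ℝ (stdSimplex ℝ (Edge n L)) (pPoly n L d) := by
  classical
  obtain ⟨m, rfl⟩ : ∃ m, d = m + 2 := ⟨d - 2, by omega⟩
  have hpsd' : ∀ W : Finset (Fin n), W.card ≤ L * m → (1 ≤ m → L ≤ W.card) →
      (Mmat n L W).PosSemidef := by
    intro W h1 h2
    exact hpsd W (by simpa using h1) (fun h3 => h2 (by omega))
  refine ⟨convex_stdSimplex ℝ _, ?_⟩
  intro x hx y hy a b ha hb hab
  have hb' : b = 1 - a := by linarith
  subst hb'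
  set v : Edge n L → ℝ := fun e => x e - y e with hv
  set wf : ℝ → Edge n L → ℝ := fun s e => y e + s * v e with hwf
  set φ : ℝ → ℝ := fun s => pPoly n L (m + 2) (wf s) with hφ
  set φ₁ : ℝ → ℝ := fun s => ∑ t : Fin (m + 2) → Edge n L, cc n L (m + 2) t *
      ∑ i : Fin (m + 2), (∏ j ∈ Finset.univ.erase i, wf s (t j)) * v (t i) with hφ₁
  set φ₂ : ℝ → ℝ := fun s => ∑ t : Fin (m + 2) → Edge n L, cc n L (m + 2) t *
      ∑ i : Fin (m + 2),
        (∑ k ∈ Finset.univ.erase i,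
          (∏ j ∈ (Finset.univ.erase i).erase k, wf s (t j)) * v (t k)) * v (t i) with hφ₂
  have hfac : ∀ (s : ℝ) (e : Edge n L), HasDerivAt (fun s => wf s e) (v e) s := by
    intro s e
    simpa [hwf] using ((hasDerivAt_id s).mul_const (v e)).const_add (y e)
  have hd1 : ∀ s, HasDerivAt φ (φ₁ s) s := by
    intro s
    show HasDerivAt (fun s => ∑ t : Fin (m + 2) → Edge n L,
      cc n L (m + 2) t * ∏ i, wf s (t i)) (φ₁ s) s
    refine HasDerivAt.fun_sum fun t _ => ?_
    refine HasDerivAt.const_mul _ ?_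
    have := HasDerivAt.fun_finsetProd (u := Finset.univ)
      (f := fun i s => wf s (t i)) (f' := fun i => v (t i)) (x := s)
      (fun i _ => hfac s (t i))
    simpa [smul_eq_mul] using this
  have hd2 : ∀ s, HasDerivAt φ₁ (φ₂ s) s := by
    intro s
    refine HasDerivAt.fun_sum fun t _ => ?_
    refine HasDerivAt.const_mul _ ?_
    refine HasDerivAt.fun_sum fun i _ => ?_
    have := HasDerivAt.fun_finsetProd (u := Finset.univ.erase i)
      (f := fun j s => wf s (t j)) (f' := fun j => v (t j)) (x := s)
      (fun j _ => hfac s (t j))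
    have := this.mul_const (v (t i))
    simpa [smul_eq_mul] using this
  have hkey : ∀ s ∈ Set.Ioo (0 : ℝ) 1, 0 ≤ φ₂ s := by
    intro s hs
    have hw : ∀ e, 0 ≤ wf s e := by
      intro e
      have hx0 := hx.1 e
      have hy0 := hy.1 e
      have h0 : (0 : ℝ) ≤ s := le_of_lt hs.1
      have h1 : s ≤ 1 := le_of_lt hs.2
      have : wf s e = (1 - s) * y e + s * x e := by simp [hwf, hv]; ring
      rw [this]
      exact add_nonneg (mul_nonneg (by linarith) hy0) (mul_nonneg h0 hx0)
    have hre : φ₂ s = ∑ i : Fin (m + 2), ∑ k ∈ Finset.univ.erase i,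
        ∑ t : Fin (m + 2) → Edge n L, cc n L (m + 2) t *
          ((∏ j ∈ (Finset.univ.erase i).erase k, wf s (t j)) * (v (t k) * v (t i))) := by
      rw [hφ₂]
      calc (∑ t : Fin (m + 2) → Edge n L, cc n L (m + 2) t *
            ∑ i : Fin (m + 2),
              (∑ k ∈ Finset.univ.erase i,
                (∏ j ∈ (Finset.univ.erase i).erase k, wf s (t j)) * v (t k)) * v (t i))
          = ∑ t : Fin (m + 2) → Edge n L, ∑ i : Fin (m + 2), ∑ k ∈ Finset.univ.erase i,
              cc n L (m + 2) t *
                ((∏ j ∈ (Finset.univ.erase i).erase k, wf s (t j)) * (v (t k) * v (t i))) := by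
            refine Finset.sum_congr rfl fun t _ => ?_
            rw [Finset.mul_sum]
            refine Finset.sum_congr rfl fun i _ => ?_
            rw [Finset.sum_mul, Finset.mul_sum]
            exact Finset.sum_congr rfl fun k _ => by ring
        _ = ∑ i : Fin (m + 2), ∑ t : Fin (m + 2) → Edge n L, ∑ k ∈ Finset.univ.erase i,
              cc n L (m + 2) t *
                ((∏ j ∈ (Finset.univ.erase i).erase k, wf s (t j)) * (v (t k) * v (t i))) :=
            Finset.sum_comm
        _ = ∑ i : Fin (m + 2), ∑ k ∈ Finset.univ.erase i,
              ∑ t : Fin (m + 2) → Edge n L, cc n L (m + 2) t *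
                ((∏ j ∈ (Finset.univ.erase i).erase k, wf s (t j)) * (v (t k) * v (t i))) :=
            Finset.sum_congr rfl fun i _ => Finset.sum_comm
    rw [hre]
    refine Finset.sum_nonneg fun i _ => Finset.sum_nonneg fun k hk => ?_
    have hki : k ≠ i := (Finset.mem_erase.mp hk).1
    rw [Tperm n L m (wf s) v i k hki]
    exact key_nonneg n L m hpsd' (wf s) v hw
  have hconv : ConvexOn ℝ (Set.Icc (0 : ℝ) 1) φ := by
    refine convexOn_of_hasDerivWithinAt2_nonneg (f' := φ₁) (f'' := φ₂) (convex_Icc 0 1) ?_ ?_ ?_ ?_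
    · exact fun s _ => (hd1 s).continuousAt.continuousWithinAt
    · intro s _
      exact (hd1 s).hasDerivWithinAt
    · intro s _
      exact (hd2 s).hasDerivWithinAt
    · intro s hs
      rw [interior_Icc] at hs
      exact hkey s hs
  have h0mem : (0 : ℝ) ∈ Set.Icc (0 : ℝ) 1 := Set.left_mem_Icc.mpr zero_le_one
  have h1mem : (1 : ℝ) ∈ Set.Icc (0 : ℝ) 1 := Set.right_mem_Icc.mpr zero_le_one
  have h10 : φ a ≤ a * φ 1 + (1 - a) * φ 0 := by
    have := hconv.2 h1mem h0mem ha hb hab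
    simpa using this
  have e1 : wf 1 = x := by
    funext e; simp [hwf, hv]
  have e0 : wf 0 = y := by
    funext e; simp [hwf]
  have ea : a • x + (1 - a) • y = wf a := by
    funext e
    simp [hwf, hv]
    ring
  calc pPoly n L (m + 2) (a • x + (1 - a) • y) = φ a := by rw [ea]
    _ ≤ a * φ 1 + (1 - a) * φ 0 := h10
    _ = a • pPoly n L (m + 2) x + (1 - a) • pPoly n L (m + 2) y := by
        rw [hφ]; simp only [e1, e0, smul_eq_mul]
end

section
/- Let L ≥ 2 and d ≥ 3. The following two assertions are equivalent: (i) the matrix M_W = (1/|W ∪ e ∪ f|)_{e,f ∈ E} is positive semidefinite for every set W of the form W = e_1 ∪ ⋯ ∪ e_{d−2} with e_1,…,e_{d−2} ∈ E; (ii) for every integer p with L ≤ p ≤ L(d−2), the matrix M_p is positive semidefinite, where, for a set U of cardinality n − p and F = {e ⊆ U : |e| ≤ L}, M_p is the F×F matrix with entries (M_p)_{e,f} = 1/(p + |e ∪ f|). -/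
open Finset

/-- For a subset `U ⊆ V`, the index set `F = {e ⊆ U : |e| ≤ L}`. -/
abbrev SmallSub (n L : ℕ) (U : Finset (Fin n)) := {e : Finset (Fin n) // e ⊆ U ∧ e.card ≤ L}

/-- The matrix `M_p = (1/(p + |e ∪ f|))_{e,f ∈ F}`, for `F = {e ⊆ U : |e| ≤ L}`. -/
noncomputable def Mpmat (n L p : ℕ) (U : Finset (Fin n)) :
    Matrix (SmallSub n L U) (SmallSub n L U) ℝ :=
  Matrix.of fun e f => (((p + (e.1 ∪ f.1).card : ℕ)) : ℝ)⁻¹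

/-- A constant matrix with nonnegative entry is positive semidefinite. -/
lemma constPSD {ι : Type*} [Fintype ι] {c : ℝ} (hc : 0 ≤ c) :
    (Matrix.of fun _ _ : ι => c).PosSemidef := by
  rw [Matrix.posSemidef_iff_dotProduct_mulVec]
  constructor
  · ext i j
    simp [Matrix.conjTranspose_apply]
  · intro x
    have h : dotProduct (star x) ((Matrix.of fun _ _ : ι => c).mulVec x)
        = c * (∑ i, x i) ^ 2 := by
      have hmv : ∀ i, (Matrix.of fun _ _ : ι => c).mulVec x i = c * ∑ j, x j := by
        intro i
        simp [Matrix.mulVec, dotProduct, Finset.mul_sum]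
      simp only [dotProduct, Pi.star_apply, star_trivial, hmv]
      rw [← Finset.sum_mul]
      ring
    rw [h]
    exact mul_nonneg hc (sq_nonneg _)

/-- Any set of size between `L` and `L*k` is a union of `k` subsets of size `L`. -/
lemma cover_lemma {n : ℕ} (L : ℕ) (hL : 1 ≤ L) :
    ∀ k : ℕ, 1 ≤ k → ∀ W : Finset (Fin n), L ≤ W.card → W.card ≤ L * k →
      ∃ es : Fin k → Finset (Fin n),
        (∀ r, es r ⊆ W ∧ (es r).card = L) ∧ ∀ x ∈ W, ∃ r, x ∈ es r := by
  intro k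
  induction k with
  | zero => omega
  | succ k ih =>
    intro _ W hW1 hW2
    by_cases hk : k = 0
    · subst hk
      have hcard : W.card = L := by omega
      exact ⟨fun _ => W, fun _ => ⟨subset_rfl, hcard⟩, fun x hx => ⟨0, hx⟩⟩
    · have hk1 : 1 ≤ k := by omega
      have hLk : L ≤ L * k := Nat.le_mul_of_pos_right _ (by omega)
      have hmin : min (L * k) W.card ≤ W.card := min_le_right _ _
      obtain ⟨W', hW'sub, hW'card⟩ := Finset.exists_subset_card_eq hmin
      obtain ⟨es', hes', hcov'⟩ := ih hk1 W' (by rw [hW'card]; exact le_min hLk hW1)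
        (by rw [hW'card]; exact min_le_left _ _)
      have hdiff : (W \ W').card ≤ L := by
        have hmul : L * (k + 1) = L * k + L := by ring
        rw [card_sdiff_of_subset hW'sub, hW'card]
        rcases le_total (L * k) W.card with h | h
        · rw [min_eq_left h]; omega
        · rw [min_eq_right h]; omega
      obtain ⟨B, hB1, hB2, hB3⟩ :=
        Finset.exists_subsuperset_card_eq (Finset.sdiff_subset) hdiff hW1
      refine ⟨Fin.snoc es' B, ?_, ?_⟩
      · intro r
        refine Fin.lastCases ?_ ?_ r
        · simp only [Fin.snoc_last]
          exact ⟨hB2, hB3⟩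
        · intro i
          simp only [Fin.snoc_castSucc]
          exact ⟨(hes' _).1.trans hW'sub, (hes' _).2⟩
      · intro x hx
        by_cases hx' : x ∈ W'
        · obtain ⟨r, hr⟩ := hcov' x hx'
          exact ⟨r.castSucc, by simpa [Fin.snoc_castSucc] using hr⟩
        · refine ⟨Fin.last k, ?_⟩
          simp only [Fin.snoc_last]
          exact hB1 (Finset.mem_sdiff.2 ⟨hx, hx'⟩)

/-- For `L ≥ 2` and `d ≥ 3`: `M_W ⪰ 0` for all `W = e_1 ∪ ⋯ ∪ e_{d−2}` with
`e_1,…,e_{d−2} ∈ E` if and only if `M_p ⪰ 0` for all `L ≤ p ≤ L(d−2)`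
(for every set `U` of cardinality `n − p`). -/
theorem stmt7 (n L d : ℕ) (hn : 2 ≤ n) (hL : 2 ≤ L) (hd : 3 ≤ d) :
    (∀ es : Fin (d - 2) → Edge n L,
        (Mmat n L (Finset.univ.biUnion fun r => (es r).1)).PosSemidef)
      ↔
    (∀ p : ℕ, L ≤ p → p ≤ L * (d - 2) →
        ∀ U : Finset (Fin n), U.card = n - p → (Mpmat n L p U).PosSemidef) := by
  constructor
  · intro H p hp1 hp2 U hU
    by_cases hpn : p ≤ n
    · -- take W = Uᶜ, cover it by d-2 edges
      set W : Finset (Fin n) := Uᶜ with hWdef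
      have hWc : W.card = p := by
        rw [Finset.card_compl, hU]
        simp only [Fintype.card_fin]
        omega
      obtain ⟨es, hes, hcov⟩ := cover_lemma L (by omega) (d - 2) (by omega) W
        (by omega) (by omega)
      set es' : Fin (d - 2) → Edge n L := fun r => ⟨es r, (hes r).2⟩ with hes'def
      have hbU : (Finset.univ.biUnion fun r => (es' r).1) = W := by
        apply Finset.Subset.antisymm
        · exact Finset.biUnion_subset.2 fun r _ => (hes r).1
        · intro x hx
          obtain ⟨r, hr⟩ := hcov x hx
          exact Finset.mem_biUnion.2 ⟨r, Finset.mem_univ r, hr⟩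
      have hM := H es'
      rw [hbU] at hM
      have hext : ∀ e : SmallSub n L U,
          ∃ g : Finset (Fin n), e.1 ⊆ g ∧ g ⊆ e.1 ∪ W ∧ g.card = L := by
        intro e
        refine Finset.exists_subsuperset_card_eq Finset.subset_union_left e.2.2 ?_
        calc L ≤ W.card := by omega
          _ ≤ (e.1 ∪ W).card := Finset.card_le_card Finset.subset_union_right
      choose g hg1 hg2 hg3 using hext
      have key : Mpmat n L p U
          = (Mmat n L W).submatrix (fun e => ⟨g e, hg3 e⟩) (fun e => ⟨g e, hg3 e⟩) := by
        ext e f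
        simp only [Mpmat, Mmat, Matrix.submatrix_apply, Matrix.of_apply]
        congr 1
        have h1 : W ∪ g e ∪ g f = W ∪ (e.1 ∪ f.1) := by
          ext x
          simp only [Finset.mem_union]
          constructor
          · rintro ((h | h) | h)
            · exact Or.inl h
            · rcases Finset.mem_union.1 (hg2 e h) with h' | h'
              · exact Or.inr (Or.inl h')
              · exact Or.inl h'
            · rcases Finset.mem_union.1 (hg2 f h) with h' | h'
              · exact Or.inr (Or.inr h')
              · exact Or.inl h'
          · rintro (h | h | h)
            · exact Or.inl (Or.inl h)
            · exact Or.inl (Or.inr (hg1 e h))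
            · exact Or.inr (hg1 f h)
        have hdis : Disjoint W (e.1 ∪ f.1) := by
          rw [hWdef]
          exact (disjoint_compl_left).mono_right
            (Finset.union_subset e.2.1 f.2.1)
        rw [h1, Finset.card_union_of_disjoint hdis, hWc]
      rw [key]
      exact hM.submatrix _
    · -- p > n : U is empty, the matrix is constant 1/p
      have hU0 : U = ∅ := Finset.card_eq_zero.1 (by omega)
      have : Mpmat n L p U = Matrix.of fun _ _ => ((p : ℝ))⁻¹ := by
        ext e f
        have he : e.1 = ∅ := Finset.subset_empty.1 (hU0 ▸ e.2.1)
        have hf : f.1 = ∅ := Finset.subset_empty.1 (hU0 ▸ f.2.1)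
        simp [Mpmat, he, hf]
      rw [this]
      exact constPSD (by positivity)
  · intro H es
    set W : Finset (Fin n) := Finset.univ.biUnion fun r => (es r).1 with hWdef
    have hne : 0 < d - 2 := by omega
    have hp1 : L ≤ W.card := by
      have h0 : (es ⟨0, hne⟩).1 ⊆ W := fun x hx =>
        Finset.mem_biUnion.2 ⟨⟨0, hne⟩, Finset.mem_univ _, hx⟩
      calc L = (es ⟨0, hne⟩).1.card := (es ⟨0, hne⟩).2.symm
        _ ≤ W.card := Finset.card_le_card h0
    have hp2 : W.card ≤ L * (d - 2) := by
      calc W.card ≤ ∑ r : Fin (d - 2), (es r).1.card := Finset.card_biUnion_le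
        _ = L * (d - 2) := by simp [fun r : Fin (d - 2) => (es r).2, mul_comm]
    have hM := H W.card hp1 hp2 Wᶜ (by simp [Finset.card_compl])
    have key : Mmat n L W = (Mpmat n L W.card Wᶜ).submatrix
        (fun e => ⟨e.1 \ W, ⟨fun x hx => by
            simpa using (Finset.mem_sdiff.1 hx).2,
          le_trans (Finset.card_le_card (Finset.sdiff_subset)) (le_of_eq e.2)⟩⟩)
        (fun e => ⟨e.1 \ W, ⟨fun x hx => by
            simpa using (Finset.mem_sdiff.1 hx).2,
          le_trans (Finset.card_le_card (Finset.sdiff_subset)) (le_of_eq e.2)⟩⟩) := by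
      ext e f
      simp only [Mmat, Mpmat, Matrix.submatrix_apply, Matrix.of_apply]
      congr 1
      have h1 : W ∪ e.1 ∪ f.1 = W ∪ (e.1 \ W ∪ f.1 \ W) := by
        rw [← Finset.union_sdiff_distrib, Finset.union_sdiff_self_eq_union,
          Finset.union_assoc]
      have hdis : Disjoint W (e.1 \ W ∪ f.1 \ W) := by
        rw [← Finset.union_sdiff_distrib]
        exact Finset.disjoint_sdiff
      rw [h1, Finset.card_union_of_disjoint hdis]
    rw [key]
    exact hM.submatrix _
end

section
/- For all integers i, j with k ≤ i, j ≤ N − k, the identity Σ_{t=0}^{min(i,j)} β^t_{i,j,k} · (1/(p+i+j−t)) = Σ_{u=0}^{min(i,j)} c(u) b(u,i) b(u,j) ∫_0^1 g(u,z) z^{i+j} dz holds, where g(u,z) = z^{p−1}((1−z)/z)^u for z ∈ (0,1]. -/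
open Finset intervalIntegral

/-- `b(u,i) := C(N−k−u, i−u)`, with the convention that it is `0` when `i − u < 0`
(negative lower index). -/
noncomputable def bB (N k u i : ℕ) : ℝ :=
  if u ≤ i then ((N - k - u).choose (i - u) : ℝ) else 0

/-- `c(u) := C(N−2k, N−k−u)`, with the convention that it is `0` when `N − k − u < 0`
(negative lower index). -/
noncomputable def cC (N k u : ℕ) : ℝ :=
  if u ≤ N - k then ((N - 2 * k).choose (N - k - u) : ℝ) else 0

/-- `β^t_{i,j,k} := ∑_{u=0}^{N} (−1)^{u−t} C(u,t) c(u) b(u,i) b(u,j)`. -/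
noncomputable def betaCoef (N k i j t : ℕ) : ℝ :=
  ∑ u ∈ Finset.range (N + 1),
    (-1 : ℝ) ^ (u - t) * (u.choose t : ℝ) * cC N k u * bB N k u i * bB N k u j

lemma integralA (m u : ℕ) :
    (∫ z in (0:ℝ)..1, z ^ m * (1 - z) ^ u)
      = ∑ s ∈ Finset.range (u + 1),
          (-1 : ℝ) ^ s * (u.choose s : ℝ) * (((m + s : ℕ) : ℝ) + 1)⁻¹ := by
  have h : ∀ z : ℝ, z ^ m * (1 - z) ^ u
      = ∑ s ∈ Finset.range (u + 1), (-1 : ℝ) ^ s * (u.choose s : ℝ) * z ^ (m + s) := by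
    intro z
    rw [sub_eq_neg_add, add_pow, Finset.mul_sum]
    refine Finset.sum_congr rfl fun s hs => ?_
    rw [one_pow, neg_pow, pow_add]
    ring
  simp_rw [h]
  rw [intervalIntegral.integral_finset_sum]
  · refine Finset.sum_congr rfl fun s hs => ?_
    rw [intervalIntegral.integral_const_mul, integral_pow]
    norm_num
  · intro s _
    exact ((continuous_const.mul (continuous_pow _)).intervalIntegrable 0 1)

lemma ptwise (p i j u : ℕ) (hui : u ≤ i) (huj : u ≤ j) (z : ℝ) :
    z ^ (p - 1) * ((1 - z) / z) ^ u * z ^ (i + j)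
      = z ^ (p - 1 + i + j - u) * (1 - z) ^ u := by
  rcases eq_or_ne z 0 with hz | hz
  · subst hz
    rcases Nat.eq_zero_or_pos u with hu | hu
    · subst hu
      simp [← pow_add, add_assoc]
    · have h1 : i + j ≠ 0 := by omega
      have h2 : p - 1 + i + j - u ≠ 0 := by omega
      simp [zero_pow, h1, h2, hu.ne']
  · have hle : p - 1 + i + j - u + u = p - 1 + i + j := by omega
    rw [div_pow]
    field_simp
    conv_rhs => rw [mul_assoc, ← pow_add, Nat.add_comm u, hle]
    rw [pow_add]
    ring

/-- The integral identity
`∑_{t=0}^{min(i,j)} β^t_{i,j,k}/(p+i+j−t) = ∑_{u=0}^{min(i,j)} c(u)b(u,i)b(u,j) ∫_0^1 g(u,z) z^{i+j} dz`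
with `g(u,z) = z^{p−1}((1−z)/z)^u`. -/
theorem stmt10 (p N k : ℕ) (hp : 1 ≤ p) (hk : k ≤ N / 2)
    (i j : ℕ) (hki : k ≤ i) (hiN : i ≤ N - k) (hkj : k ≤ j) (hjN : j ≤ N - k) :
    (∑ t ∈ Finset.range (min i j + 1),
        betaCoef N k i j t * ((p + i + j - t : ℕ) : ℝ)⁻¹)
      = ∑ u ∈ Finset.range (min i j + 1),
          cC N k u * bB N k u i * bB N k u j *
            ∫ z in (0:ℝ)..1, (z ^ (p - 1) * ((1 - z) / z) ^ u) * z ^ (i + j) := by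
  have hmi : min i j ≤ i := min_le_left _ _
  have hmj : min i j ≤ j := min_le_right _ _
  have hiN' : i ≤ N := le_trans hiN (Nat.sub_le _ _)
  -- common double sum
  set D : ℝ := ∑ u ∈ Finset.range (min i j + 1), ∑ t ∈ Finset.range (u + 1),
      (-1 : ℝ) ^ (u - t) * (u.choose t : ℝ) * cC N k u * bB N k u i * bB N k u j *
        ((p + i + j - t : ℕ) : ℝ)⁻¹ with hD
  have hRHS : (∑ u ∈ Finset.range (min i j + 1),
      cC N k u * bB N k u i * bB N k u j *
        ∫ z in (0:ℝ)..1, (z ^ (p - 1) * ((1 - z) / z) ^ u) * z ^ (i + j)) = D := by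
    refine Finset.sum_congr rfl fun u hu => ?_
    rw [Finset.mem_range] at hu
    have hui : u ≤ i := le_trans (by omega) hmi
    have huj : u ≤ j := le_trans (by omega) hmj
    have h1 : ∀ z : ℝ, z ^ (p - 1) * ((1 - z) / z) ^ u * z ^ (i + j)
        = z ^ (p - 1 + i + j - u) * (1 - z) ^ u := ptwise p i j u hui huj
    simp_rw [h1]
    rw [integralA, Finset.mul_sum, ← Finset.sum_range_reflect]
    refine Finset.sum_congr rfl fun t ht => ?_
    rw [Finset.mem_range] at ht
    have ht' : t ≤ u := by omega
    have e1 : u + 1 - 1 - t = u - t := by omega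
    rw [e1, Nat.choose_symm ht']
    have e3 : ((p - 1 + i + j - u + (u - t) : ℕ) : ℝ) + 1
        = ((p + i + j - t : ℕ) : ℝ) := by
      have : p - 1 + i + j - u + (u - t) + 1 = p + i + j - t := by omega
      rw [← this]
      push_cast
      ring
    rw [e3]
    ring
  rw [hRHS]
  -- LHS
  simp_rw [betaCoef, Finset.sum_mul]
  rw [Finset.sum_comm]
  rw [← Finset.sum_subset (Finset.range_subset_range.mpr (show min i j + 1 ≤ N + 1 by omega))
    (fun u _ hu => ?_)]
  · refine Finset.sum_congr rfl fun u hu => ?_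
    rw [Finset.mem_range] at hu
    refine (Finset.sum_subset (Finset.range_subset_range.mpr (by omega))
      (fun t _ ht => ?_)).symm
    rw [Finset.mem_range, not_lt] at ht
    have : u.choose t = 0 := Nat.choose_eq_zero_of_lt (by omega)
    simp [this]
  · rw [Finset.mem_range, not_lt] at hu
    refine Finset.sum_eq_zero fun t _ => ?_
    rcases lt_or_ge i j with h | h
    · have hbi : bB N k u i = 0 := by
        rw [bB, if_neg]
        omega
      simp [hbi]
    · have hbj : bB N k u j = 0 := by
        rw [bB, if_neg]
        omega
      simp [hbj]
end

section
/- For every k with 0 ≤ k ≤ ⌊N/2⌋, the symmetric matrix B_k = ( a(i) a(j) Σ_{t=0}^{min(i,j)} β^t_{i,j,k} · (1/(p+i+j−t)) )_{i,j=k}^{N−k} is positive semidefinite. -/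
open Finset

/-- `a(i) := C(N−2k, i−k)^{−1/2}`. -/
noncomputable def aA (N k i : ℕ) : ℝ :=
  (((N - 2 * k).choose (i - k) : ℝ)) ^ (-(1/2 : ℝ))

/-- The alternating sum over `t` of `(-1)^(u-t) C(u,t) x^(P-t-1)` collapses to
`x^(P-1-u) (1-x)^u`. -/
lemma tsum_key (x : ℝ) (P u M : ℕ) (hu : u ≤ M) (hM : M + 1 ≤ P) :
    ∑ t ∈ Finset.range (M + 1), (-1:ℝ)^(u-t) * (u.choose t : ℝ) * x^(P - t - 1)
      = x^(P - 1 - u) * (1-x)^u := by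
  have h1 : ∑ t ∈ Finset.range (u+1), (-1:ℝ)^(u-t) * (u.choose t:ℝ) * x^(P-t-1)
      = ∑ t ∈ Finset.range (M+1), (-1:ℝ)^(u-t) * (u.choose t:ℝ) * x^(P-t-1) := by
    apply Finset.sum_subset
    · exact Finset.range_subset_range.mpr (by omega)
    · intro t ht hnt
      simp only [Finset.mem_range] at ht hnt
      have : u < t := by omega
      simp [Nat.choose_eq_zero_of_lt this]
  rw [← h1, ← Finset.sum_range_reflect]
  rw [show (1:ℝ)-x = -x+1 by ring, add_pow, Finset.mul_sum]
  apply Finset.sum_congr rfl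
  intro t ht
  simp only [Finset.mem_range] at ht
  have htu : t ≤ u := by omega
  rw [show u + 1 - 1 - t = u - t by omega, show u - (u - t) = t by omega,
    Nat.choose_symm htu, neg_pow, show P - (u - t) - 1 = (P - 1 - u) + t by omega, pow_add]
  ring

/-- Pointwise polynomial identity: the generating polynomial of the `β` coefficients
equals an explicitly nonnegative-weighted kernel. -/
lemma claimA (p N k a b : ℕ) (hp : 1 ≤ p) (h2k : 2*k ≤ N)
    (ha : a ≤ N - 2*k) (hb : b ≤ N - 2*k) (x : ℝ) :
    ∑ t ∈ Finset.range (min (k+a) (k+b) + 1),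
        betaCoef N k (k+a) (k+b) t * x ^ (p + (k+a) + (k+b) - t - 1)
    = ∑ s ∈ Finset.range (N - 2*k + 1),
        ((N-2*k).choose s : ℝ) *
        (if s ≤ a then (((N-2*k)-s).choose (a-s) : ℝ) else 0) *
        (if s ≤ b then (((N-2*k)-s).choose (b-s) : ℝ) else 0) *
        (x ^ (p + k + a + b - 1 - s) * (1-x)^(k+s)) := by
  have step1 : ∑ t ∈ Finset.range (min (k+a) (k+b) + 1),
        betaCoef N k (k+a) (k+b) t * x ^ (p + (k+a) + (k+b) - t - 1)
      = ∑ u ∈ Finset.range (N + 1),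
          cC N k u * bB N k u (k+a) * bB N k u (k+b) *
            (x ^ (p + (k+a) + (k+b) - 1 - u) * (1-x)^u) := by
    unfold betaCoef
    simp_rw [Finset.sum_mul]
    rw [Finset.sum_comm]
    apply Finset.sum_congr rfl
    intro u _
    have hpull : ∑ t ∈ Finset.range (min (k+a) (k+b) + 1),
        (-1:ℝ)^(u-t) * (u.choose t : ℝ) * cC N k u * bB N k u (k+a) * bB N k u (k+b)
          * x ^ (p + (k+a) + (k+b) - t - 1)
        = (cC N k u * bB N k u (k+a) * bB N k u (k+b)) *
          ∑ t ∈ Finset.range (min (k+a) (k+b) + 1),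
            (-1:ℝ)^(u-t) * (u.choose t : ℝ) * x ^ (p + (k+a) + (k+b) - t - 1) := by
      rw [Finset.mul_sum]
      exact Finset.sum_congr rfl (fun t _ => by ring)
    rw [hpull]
    by_cases hu : u ≤ min (k+a) (k+b)
    · rw [tsum_key x _ u _ hu (by omega)]
    · have hzero : bB N k u (k+a) * bB N k u (k+b) = 0 := by
        rcases le_or_gt u (k+a) with h | h
        · have hb0 : bB N k u (k+b) = 0 := by
            rw [bB]; exact if_neg (by omega)
          rw [hb0, mul_zero]
        · have ha0 : bB N k u (k+a) = 0 := by
            rw [bB]; exact if_neg (by omega)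
          rw [ha0, zero_mul]
      rw [show cC N k u * bB N k u (k+a) * bB N k u (k+b) = 0 by
        rw [mul_assoc, hzero, mul_zero], zero_mul, zero_mul]
  rw [step1]
  have step2 : ∑ u ∈ Finset.range (N + 1),
          cC N k u * bB N k u (k+a) * bB N k u (k+b) *
            (x ^ (p + (k+a) + (k+b) - 1 - u) * (1-x)^u)
      = ∑ u ∈ Finset.Ico k (k + (N - 2*k) + 1),
          cC N k u * bB N k u (k+a) * bB N k u (k+b) *
            (x ^ (p + (k+a) + (k+b) - 1 - u) * (1-x)^u) := by
    symm
    apply Finset.sum_subset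
    · intro u hu
      simp only [Finset.mem_Ico] at hu
      simp only [Finset.mem_range]
      omega
    · intro u hu hnu
      simp only [Finset.mem_range] at hu
      simp only [Finset.mem_Ico] at hnu
      have hcz : cC N k u = 0 := by
        rcases le_or_gt u (N - k) with h | h
        · rw [cC, if_pos h]
          have : N - 2*k < N - k - u := by omega
          simp [Nat.choose_eq_zero_of_lt this]
        · rw [cC, if_neg (by omega)]
      rw [hcz, zero_mul, zero_mul, zero_mul]
  rw [step2, Finset.sum_Ico_eq_sum_range, show k + (N - 2*k) + 1 - k = N - 2*k + 1 by omega]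
  apply Finset.sum_congr rfl
  intro s hs
  simp only [Finset.mem_range] at hs
  have hsm : s ≤ N - 2*k := by omega
  have hc : cC N k (k+s) = ((N-2*k).choose s : ℝ) := by
    rw [cC, if_pos (by omega), show N - k - (k+s) = (N-2*k) - s by omega,
      Nat.choose_symm hsm]
  have hba : bB N k (k+s) (k+a) = (if s ≤ a then (((N-2*k)-s).choose (a-s) : ℝ) else 0) := by
    by_cases hsa : s ≤ a
    · rw [bB, if_pos (by omega), if_pos hsa, show N - k - (k+s) = (N-2*k) - s by omega,
        show (k+a) - (k+s) = a - s by omega]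
    · rw [bB, if_neg (by omega), if_neg hsa]
  have hbb : bB N k (k+s) (k+b) = (if s ≤ b then (((N-2*k)-s).choose (b-s) : ℝ) else 0) := by
    by_cases hsb : s ≤ b
    · rw [bB, if_pos (by omega), if_pos hsb, show N - k - (k+s) = (N-2*k) - s by omega,
        show (k+b) - (k+s) = b - s by omega]
    · rw [bB, if_neg (by omega), if_neg hsb]
  rw [hc, hba, hbb, show p + (k+a) + (k+b) - 1 - (k+s) = p + k + a + b - 1 - s by omega]

/-- `1/n = ∫₀¹ x^(n-1) dx`. -/
lemma inv_eq_integral (n : ℕ) (hn : 1 ≤ n) :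
    ((n:ℝ))⁻¹ = ∫ x in (0:ℝ)..1, x^(n-1) := by
  rw [integral_pow, show n - 1 + 1 = n by omega, Nat.cast_sub hn]
  rw [one_pow, zero_pow (show n ≠ 0 by omega), sub_zero, Nat.cast_one, sub_add_cancel, one_div]


lemma psd_aux (n : ℕ) (E : Fin n → Fin n → ℝ)
    (hsymm : ∀ a b, E a b = E b a)
    (hquad : ∀ y : Fin n → ℝ, 0 ≤ ∑ a : Fin n, ∑ b : Fin n, (y a * y b) * E a b) :
    (Matrix.of E).PosSemidef := by
  constructor
  · ext a b
    simp only [Matrix.conjTranspose_apply, Matrix.of_apply, star_trivial]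
    exact hsymm b a
  · intro y
    have h : dotProduct (star y) ((Matrix.of E).mulVec y)
        = ∑ a : Fin n, ∑ b : Fin n, (y a * y b) * E a b := by
      simp only [dotProduct, Matrix.mulVec, Matrix.of_apply, star_trivial,
        Finset.mul_sum]
      exact Finset.sum_congr rfl fun a _ => Finset.sum_congr rfl fun b _ => by ring
    have h2 : (y.sum fun i xi => y.sum fun j xj => star xi * Matrix.of E i j * xj)
        = ∑ a : Fin n, ∑ b : Fin n, (y a * y b) * E a b := by
      simp only [Finsupp.sum_fintype, zero_mul, mul_zero, star_zero, Finset.sum_const_zero,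
        implies_true, Matrix.of_apply, star_trivial]
      exact Finset.sum_congr rfl fun a _ => Finset.sum_congr rfl fun b _ => by ring
    rw [h2]
    exact hquad y


lemma rearrange (p N k : ℕ) (hp : 1 ≤ p) (c : Fin (N - 2*k + 1) → ℝ) (x : ℝ) :
    ∑ a : Fin (N - 2*k + 1), ∑ b : Fin (N - 2*k + 1), (c a * c b) *
      (∑ s ∈ Finset.range (N - 2*k + 1),
        ((N-2*k).choose s : ℝ) *
        (if s ≤ a.1 then (((N-2*k)-s).choose (a.1-s) : ℝ) else 0) *
        (if s ≤ b.1 then (((N-2*k)-s).choose (b.1-s) : ℝ) else 0) *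
        (x ^ (p + k + a.1 + b.1 - 1 - s) * (1-x)^(k+s)))
    = ∑ s ∈ Finset.range (N - 2*k + 1),
        ((N-2*k).choose s : ℝ) * (x^(p + k - 1 + s) * (1-x)^(k+s)) *
          (∑ a : Fin (N - 2*k + 1),
            c a * (if s ≤ a.1 then (((N-2*k)-s).choose (a.1-s) : ℝ) else 0) * x^(a.1-s))^2 := by
  simp_rw [Finset.mul_sum]
  have hswap : ∀ (f : Fin (N - 2*k + 1) → Fin (N - 2*k + 1) → ℕ → ℝ),
      ∑ a : Fin (N - 2*k + 1), ∑ b : Fin (N - 2*k + 1), ∑ s ∈ Finset.range (N - 2*k + 1), f a b s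
      = ∑ s ∈ Finset.range (N - 2*k + 1), ∑ a : Fin (N - 2*k + 1), ∑ b : Fin (N - 2*k + 1), f a b s := by
    intro f
    calc ∑ a : Fin (N - 2*k + 1), ∑ b : Fin (N - 2*k + 1), ∑ s ∈ Finset.range (N - 2*k + 1), f a b s
        = ∑ a : Fin (N - 2*k + 1), ∑ s ∈ Finset.range (N - 2*k + 1), ∑ b : Fin (N - 2*k + 1), f a b s :=
          Finset.sum_congr rfl fun a _ => Finset.sum_comm
      _ = ∑ s ∈ Finset.range (N - 2*k + 1), ∑ a : Fin (N - 2*k + 1), ∑ b : Fin (N - 2*k + 1), f a b s :=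
          Finset.sum_comm
  rw [hswap]
  apply Finset.sum_congr rfl
  intro s hs
  rw [pow_two, Finset.sum_mul_sum, Finset.mul_sum]
  apply Finset.sum_congr rfl
  intro a _
  rw [Finset.mul_sum]
  apply Finset.sum_congr rfl
  intro b _
  by_cases hsa : s ≤ a.1
  · by_cases hsb : s ≤ b.1
    · rw [if_pos hsa, if_pos hsb,
        show p + k + a.1 + b.1 - 1 - s = (p + k - 1 + s) + ((a.1 - s) + (b.1 - s)) by omega,
        pow_add, pow_add]
      ring
    · simp only [if_neg hsb]
      ring
  · simp only [if_neg hsa]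
    ring

set_option maxHeartbeats 1600000 in
/-- The matrix `B_k = (a(i)a(j) ∑_{t=0}^{min(i,j)} β^t_{i,j,k}/(p+i+j−t))_{i,j=k}^{N−k}`
is positive semidefinite. (Indices `i = k + i'`, `j = k + j'` with `i', j'` ranging over
`{0,…,N−2k}`.) -/
theorem stmt11 (p N k : ℕ) (hp : 1 ≤ p) (hk : k ≤ N / 2) :
    (Matrix.of fun i' j' : Fin (N - 2 * k + 1) =>
      aA N k (k + i'.1) * aA N k (k + j'.1) *
        ∑ t ∈ Finset.range (min (k + i'.1) (k + j'.1) + 1),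
          betaCoef N k (k + i'.1) (k + j'.1) t *
            ((p + (k + i'.1) + (k + j'.1) - t : ℕ) : ℝ)⁻¹).PosSemidef := by
  have h2k : 2*k ≤ N := by omega
  apply psd_aux
  · -- symmetry
    intro a b
    have hbeta : ∀ t, betaCoef N k (k + a.1) (k + b.1) t
        = betaCoef N k (k + b.1) (k + a.1) t := by
      intro t
      exact Finset.sum_congr rfl fun u _ => by ring
    have h2 : p + (k + a.1) + (k + b.1) = p + (k + b.1) + (k + a.1) := by omega
    rw [min_comm (k + a.1) (k + b.1), h2]
    simp_rw [hbeta]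
    ring
  · -- quadratic form
    intro y
    set c : Fin (N - 2*k + 1) → ℝ := fun a => y a * aA N k (k + a.1) with hc
    have step1 : ∑ a : Fin (N - 2*k + 1), ∑ b : Fin (N - 2*k + 1),
          y a * y b *
            (aA N k (k + a.1) * aA N k (k + b.1) *
              ∑ t ∈ Finset.range (min (k + a.1) (k + b.1) + 1),
                betaCoef N k (k + a.1) (k + b.1) t *
                  ((p + (k + a.1) + (k + b.1) - t : ℕ) : ℝ)⁻¹)
        = ∑ a : Fin (N - 2*k + 1), ∑ b : Fin (N - 2*k + 1),
            (c a * c b) *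
              ∑ t ∈ Finset.range (min (k + a.1) (k + b.1) + 1),
                betaCoef N k (k + a.1) (k + b.1) t *
                  ((p + (k + a.1) + (k + b.1) - t : ℕ) : ℝ)⁻¹ := by
      exact Finset.sum_congr rfl fun a _ => Finset.sum_congr rfl fun b _ => by
        simp only [hc]; ring
    rw [step1]
    have step2 : ∀ a b : Fin (N - 2*k + 1),
        (c a * c b) *
            ∑ t ∈ Finset.range (min (k + a.1) (k + b.1) + 1),
              betaCoef N k (k + a.1) (k + b.1) t *
                ((p + (k + a.1) + (k + b.1) - t : ℕ) : ℝ)⁻¹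
        = ∫ x in (0:ℝ)..1,
            (c a * c b) *
              ∑ t ∈ Finset.range (min (k + a.1) (k + b.1) + 1),
                betaCoef N k (k + a.1) (k + b.1) t *
                  x ^ (p + (k + a.1) + (k + b.1) - t - 1) := by
      intro a b
      have hS : ∑ t ∈ Finset.range (min (k + a.1) (k + b.1) + 1),
            betaCoef N k (k + a.1) (k + b.1) t *
              ((p + (k + a.1) + (k + b.1) - t : ℕ) : ℝ)⁻¹
          = ∫ x in (0:ℝ)..1,
              ∑ t ∈ Finset.range (min (k + a.1) (k + b.1) + 1),
                betaCoef N k (k + a.1) (k + b.1) t *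
                  x ^ (p + (k + a.1) + (k + b.1) - t - 1) := by
        rw [intervalIntegral.integral_finset_sum
          (f := fun t (x : ℝ) => betaCoef N k (k + a.1) (k + b.1) t *
            x ^ (p + (k + a.1) + (k + b.1) - t - 1))
          (fun t _ => ((continuous_const.mul (continuous_pow _)).intervalIntegrable _ _))]
        apply Finset.sum_congr rfl
        intro t ht
        simp only [Finset.mem_range] at ht
        rw [intervalIntegral.integral_const_mul,
          ← inv_eq_integral (p + (k + a.1) + (k + b.1) - t) (by omega)]
      rw [hS, ← intervalIntegral.integral_const_mul]
    simp_rw [step2]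
    have hcontf : ∀ a b : Fin (N - 2*k + 1), Continuous
        (fun x : ℝ => (c a * c b) *
          ∑ t ∈ Finset.range (min (k + a.1) (k + b.1) + 1),
            betaCoef N k (k + a.1) (k + b.1) t *
              x ^ (p + (k + a.1) + (k + b.1) - t - 1)) := by
      intro a b
      exact continuous_const.mul (continuous_finset_sum _
        (fun t _ => continuous_const.mul (continuous_pow _)))
    have step3 : ∑ a : Fin (N - 2*k + 1), ∑ b : Fin (N - 2*k + 1),
          (∫ x in (0:ℝ)..1,
            (c a * c b) *
              ∑ t ∈ Finset.range (min (k + a.1) (k + b.1) + 1),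
                betaCoef N k (k + a.1) (k + b.1) t *
                  x ^ (p + (k + a.1) + (k + b.1) - t - 1))
        = ∫ x in (0:ℝ)..1, ∑ a : Fin (N - 2*k + 1), ∑ b : Fin (N - 2*k + 1),
            ((c a * c b) *
              ∑ t ∈ Finset.range (min (k + a.1) (k + b.1) + 1),
                betaCoef N k (k + a.1) (k + b.1) t *
                  x ^ (p + (k + a.1) + (k + b.1) - t - 1)) := by
      calc ∑ a : Fin (N - 2*k + 1), ∑ b : Fin (N - 2*k + 1),
          (∫ x in (0:ℝ)..1,
            (c a * c b) *
              ∑ t ∈ Finset.range (min (k + a.1) (k + b.1) + 1),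
                betaCoef N k (k + a.1) (k + b.1) t *
                  x ^ (p + (k + a.1) + (k + b.1) - t - 1))
          = ∑ a : Fin (N - 2*k + 1), ∫ x in (0:ℝ)..1, ∑ b : Fin (N - 2*k + 1),
            ((c a * c b) *
              ∑ t ∈ Finset.range (min (k + a.1) (k + b.1) + 1),
                betaCoef N k (k + a.1) (k + b.1) t *
                  x ^ (p + (k + a.1) + (k + b.1) - t - 1)) :=
          Finset.sum_congr rfl fun a _ =>
            (intervalIntegral.integral_finset_sum
              (fun b _ => (hcontf a b).intervalIntegrable _ _)).symm
        _ = ∫ x in (0:ℝ)..1, ∑ a : Fin (N - 2*k + 1), ∑ b : Fin (N - 2*k + 1),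
            ((c a * c b) *
              ∑ t ∈ Finset.range (min (k + a.1) (k + b.1) + 1),
                betaCoef N k (k + a.1) (k + b.1) t *
                  x ^ (p + (k + a.1) + (k + b.1) - t - 1)) :=
          (intervalIntegral.integral_finset_sum
            (f := fun (a : Fin (N - 2*k + 1)) (x : ℝ) => ∑ b : Fin (N - 2*k + 1),
              ((c a * c b) * ∑ t ∈ Finset.range (min (k + a.1) (k + b.1) + 1),
                betaCoef N k (k + a.1) (k + b.1) t * x ^ (p + (k + a.1) + (k + b.1) - t - 1)))
            (fun a _ => ((continuous_finset_sum Finset.univ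
              (fun b _ => hcontf a b)).intervalIntegrable _ _))).symm
    rw [step3]
    apply intervalIntegral.integral_nonneg (by norm_num)
    intro x hx
    have hrw : ∑ a : Fin (N - 2*k + 1), ∑ b : Fin (N - 2*k + 1),
          ((c a * c b) *
            ∑ t ∈ Finset.range (min (k + a.1) (k + b.1) + 1),
              betaCoef N k (k + a.1) (k + b.1) t *
                x ^ (p + (k + a.1) + (k + b.1) - t - 1))
        = ∑ a : Fin (N - 2*k + 1), ∑ b : Fin (N - 2*k + 1), (c a * c b) *
            (∑ s ∈ Finset.range (N - 2*k + 1),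
              ((N-2*k).choose s : ℝ) *
              (if s ≤ a.1 then (((N-2*k)-s).choose (a.1-s) : ℝ) else 0) *
              (if s ≤ b.1 then (((N-2*k)-s).choose (b.1-s) : ℝ) else 0) *
              (x ^ (p + k + a.1 + b.1 - 1 - s) * (1-x)^(k+s))) := by
      apply Finset.sum_congr rfl
      intro a _
      apply Finset.sum_congr rfl
      intro b _
      rw [claimA p N k a.1 b.1 hp h2k (by omega) (by omega) x]
    rw [hrw, rearrange p N k hp c x]
    apply Finset.sum_nonneg
    intro s _
    apply mul_nonneg
    apply mul_nonneg
    · exact Nat.cast_nonneg _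
    · exact mul_nonneg (pow_nonneg hx.1 _)
        (pow_nonneg (by linarith [hx.2]) _)
    · exact sq_nonneg _
end

section
/- For degree d = 3 and edge size L = 2, the polynomial f_3 attains its global minimum over the standard simplex Δ_m at the barycenter x* = (1/m)(1,…,1); that is, f_3(x*) ≤ f_3(x) for every x ∈ Δ_m. -/
open Finset

/-- The polynomial `f_d(x) = ∑_{(e_1,…,e_d) ∈ E^d} ∏_{i=1}^d x_{e_i}/|e_1 ∪ ⋯ ∪ e_i|`. -/
noncomputable def fPoly (n L d : ℕ) (x : Edge n L → ℝ) : ℝ :=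
  ∑ t : Fin d → Edge n L,
    ∏ i, x (t i) / (((Finset.Iic i).biUnion fun r => (t r).1).card : ℝ)

namespace Stmt13Aux

variable {n : ℕ}

noncomputable def C (f g h : Edge n 2) : ℝ :=
  ((f.1.card : ℝ))⁻¹ * (((f.1 ∪ g.1).card : ℝ))⁻¹ * (((f.1 ∪ g.1 ∪ h.1).card : ℝ))⁻¹

noncomputable def T (u v w : Edge n 2 → ℝ) : ℝ :=
  ∑ f : Edge n 2, ∑ g : Edge n 2, ∑ h : Edge n 2, C f g h * u f * v g * w h

noncomputable def q (e : Edge n 2) (y : Edge n 2 → ℝ) : ℝ :=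
  ∑ f : Edge n 2, ∑ g : Edge n 2, (C e f g + C f e g + C f g e) * y f * y g

def eqv3 {α : Type*} : (Fin 3 → α) ≃ α × α × α where
  toFun t := (t 0, t 1, t 2)
  invFun p := ![p.1, p.2.1, p.2.2]
  left_inv t := by funext i; fin_cases i <;> rfl
  right_inv p := rfl

lemma fPoly_eq (x : Edge n 2 → ℝ) : fPoly n 2 3 x = T x x x := by
  classical
  have h3 : ∀ t : Fin 3 → Edge n 2,
      (∏ i, x (t i) / (((Finset.Iic i).biUnion fun r => (t r).1).card : ℝ))
      = C (t 0) (t 1) (t 2) * x (t 0) * x (t 1) * x (t 2) := by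
    intro t
    rw [Fin.prod_univ_three]
    have h0 : (Finset.Iic (0 : Fin 3)) = {0} := by decide
    have h1 : (Finset.Iic (1 : Fin 3)) = {0, 1} := by decide
    have h2 : (Finset.Iic (2 : Fin 3)) = {0, 1, 2} := by decide
    rw [h0, h1, h2]
    simp only [Finset.singleton_biUnion, Finset.biUnion_insert]
    rw [C, Finset.union_assoc]
    ring
  rw [fPoly]
  rw [Finset.sum_congr rfl (fun t _ => h3 t)]
  rw [show (∑ t : Fin 3 → Edge n 2, C (t 0) (t 1) (t 2) * x (t 0) * x (t 1) * x (t 2))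
      = ∑ p : Edge n 2 × Edge n 2 × Edge n 2, C p.1 p.2.1 p.2.2 * x p.1 * x p.2.1 * x p.2.2 from
    Fintype.sum_equiv eqv3 _ _ (fun t => rfl)]
  rw [Fintype.sum_prod_type]
  unfold T
  refine Finset.sum_congr rfl (fun f _ => ?_)
  rw [Fintype.sum_prod_type]

lemma T_add_left (u u' v w : Edge n 2 → ℝ) :
    T (u + u') v w = T u v w + T u' v w := by
  unfold T
  rw [← Finset.sum_add_distrib]
  refine Finset.sum_congr rfl fun f _ => ?_
  rw [← Finset.sum_add_distrib]
  refine Finset.sum_congr rfl fun g _ => ?_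
  rw [← Finset.sum_add_distrib]
  refine Finset.sum_congr rfl fun h _ => ?_
  simp only [Pi.add_apply]; ring

lemma T_add_mid (u v v' w : Edge n 2 → ℝ) :
    T u (v + v') w = T u v w + T u v' w := by
  unfold T
  rw [← Finset.sum_add_distrib]
  refine Finset.sum_congr rfl fun f _ => ?_
  rw [← Finset.sum_add_distrib]
  refine Finset.sum_congr rfl fun g _ => ?_
  rw [← Finset.sum_add_distrib]
  refine Finset.sum_congr rfl fun h _ => ?_
  simp only [Pi.add_apply]; ring

lemma T_add_right (u v w w' : Edge n 2 → ℝ) :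
    T u v (w + w') = T u v w + T u v w' := by
  unfold T
  rw [← Finset.sum_add_distrib]
  refine Finset.sum_congr rfl fun f _ => ?_
  rw [← Finset.sum_add_distrib]
  refine Finset.sum_congr rfl fun g _ => ?_
  rw [← Finset.sum_add_distrib]
  refine Finset.sum_congr rfl fun h _ => ?_
  simp only [Pi.add_apply]; ring

lemma quad_eq (z y : Edge n 2 → ℝ) :
    ∑ e : Edge n 2, z e * q e y = T y y z + T y z y + T z y y := by
  have A1 : T z y y = ∑ e : Edge n 2, ∑ f : Edge n 2, ∑ g : Edge n 2,
      z e * (C e f g * y f * y g) := by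
    unfold T
    exact Finset.sum_congr rfl fun e _ => Finset.sum_congr rfl fun f _ =>
      Finset.sum_congr rfl fun g _ => by ring
  have A2 : T y z y = ∑ e : Edge n 2, ∑ f : Edge n 2, ∑ g : Edge n 2,
      z e * (C f e g * y f * y g) := by
    unfold T
    rw [Finset.sum_comm]
    exact Finset.sum_congr rfl fun e _ => Finset.sum_congr rfl fun f _ =>
      Finset.sum_congr rfl fun g _ => by ring
  have A3 : T y y z = ∑ e : Edge n 2, ∑ f : Edge n 2, ∑ g : Edge n 2,
      z e * (C f g e * y f * y g) := by
    unfold T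
    rw [Finset.sum_congr rfl fun f (_ : f ∈ Finset.univ) => Finset.sum_comm]
    rw [Finset.sum_comm]
    exact Finset.sum_congr rfl fun e _ => Finset.sum_congr rfl fun f _ =>
      Finset.sum_congr rfl fun g _ => by ring
  rw [A1, A2, A3]
  unfold q
  simp only [Finset.mul_sum, ← Finset.sum_add_distrib]
  exact Finset.sum_congr rfl fun e _ => Finset.sum_congr rfl fun f _ =>
    Finset.sum_congr rfl fun g _ => by ring

lemma master (x xs : Edge n 2 → ℝ) :
    T x x x - T xs xs xs
      = (T (x - xs) xs xs + T xs (x - xs) xs + T xs xs (x - xs))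
        + (2/3) * (∑ e, xs e * q e (x - xs)) + (1/3) * (∑ e, x e * q e (x - xs)) := by
  set y : Edge n 2 → ℝ := x - xs with hy
  have hx : x = xs + y := by ext e; simp [hy]
  rw [quad_eq, quad_eq, hx]
  simp only [T_add_left, T_add_mid, T_add_right]
  ring

def mapE (π : Equiv.Perm (Fin n)) : Edge n 2 ≃ Edge n 2 where
  toFun f := ⟨f.1.image π, by rw [Finset.card_image_of_injective _ π.injective, f.2]⟩
  invFun f := ⟨f.1.image π.symm, by rw [Finset.card_image_of_injective _ π.symm.injective, f.2]⟩
  left_inv f := Subtype.ext (by simp [Finset.image_image])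
  right_inv f := Subtype.ext (by simp [Finset.image_image])

lemma C_map (π : Equiv.Perm (Fin n)) (f g h : Edge n 2) :
    C (mapE π f) (mapE π g) (mapE π h) = C f g h := by
  unfold C mapE
  simp only [Equiv.coe_fn_mk]
  rw [← Finset.image_union, ← Finset.image_union,
    Finset.card_image_of_injective _ π.injective,
    Finset.card_image_of_injective _ π.injective,
    Finset.card_image_of_injective _ π.injective]

lemma exists_perm (e e' : Edge n 2) : ∃ π : Equiv.Perm (Fin n), mapE π e = e' := by
  obtain ⟨a, b, hab, he⟩ := Finset.card_eq_two.1 e.2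
  obtain ⟨a', b', hab', he'⟩ := Finset.card_eq_two.1 e'.2
  set τ := Equiv.swap a a' with hτ
  set β := τ b with hβdef
  refine ⟨τ.trans (Equiv.swap β b'), Subtype.ext ?_⟩
  show e.1.image (τ.trans (Equiv.swap β b')) = e'.1
  have hβ : a' ≠ β := by
    intro h
    apply hab
    have h2 : τ b = τ a := by rw [← hβdef, ← h, hτ, Equiv.swap_apply_left]
    exact (τ.injective h2).symm
  have h1 : (τ.trans (Equiv.swap β b')) a = a' := by
    simp only [Equiv.trans_apply, hτ, Equiv.swap_apply_left]
    exact Equiv.swap_apply_of_ne_of_ne hβ hab'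
  have h2 : (τ.trans (Equiv.swap β b')) b = b' := by
    simp only [Equiv.trans_apply, ← hβdef, Equiv.swap_apply_left]
  rw [he, he']
  rw [Finset.image_insert, Finset.image_singleton, h1, h2]

lemma q_one_const (e e' : Edge n 2) :
    q e (fun _ => (1:ℝ)) = q e' (fun _ => (1:ℝ)) := by
  obtain ⟨π, hπ⟩ := exists_perm e e'
  unfold q
  refine Fintype.sum_equiv (mapE π) _ _ fun f => ?_
  refine Fintype.sum_equiv (mapE π) _ _ fun g => ?_
  rw [← hπ, C_map, C_map, C_map]

lemma q_const (e : Edge n 2) (c : ℝ) :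
    q e (fun _ => c) = c^2 * q e (fun _ => (1:ℝ)) := by
  unfold q
  rw [Finset.mul_sum]
  refine Finset.sum_congr rfl fun f _ => ?_
  rw [Finset.mul_sum]
  refine Finset.sum_congr rfl fun g _ => ?_
  ring

lemma card_E : Fintype.card (Edge n 2) = n.choose 2 := by
  rw [Fintype.card_subtype]
  have : (Finset.univ.filter fun s : Finset (Fin n) => s.card = 2)
      = Finset.powersetCard 2 (Finset.univ : Finset (Fin n)) := by
    rw [Finset.powersetCard_eq_filter, Finset.powerset_univ]
  rw [this, Finset.card_powersetCard, Finset.card_univ, Fintype.card_fin]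

noncomputable def ι (e : Edge n 2) (k : ℕ) (f : Edge n 2) : ℝ :=
  if (f.1 ∩ e.1).card = k then 1 else 0

noncomputable def χ (c : Fin n) (f : Edge n 2) : ℝ := if c ∈ f.1 then 1 else 0

noncomputable def zeta (e : Edge n 2) (f : Edge n 2) : ℝ :=
  ι e 2 f + (14/27) * ι e 1 f + (1/3) * ι e 0 f

noncomputable def sigma' (e : Edge n 2) (f : Edge n 2) : ℝ :=
  ι e 1 f + (288/295) * ι e 0 f

noncomputable def rho (e : Edge n 2) (f : Edge n 2) : ℝ :=
  ι e 0 f + (3/2) * ι e 1 f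

noncomputable def M (e f g : Edge n 2) : ℝ :=
  18 * zeta e f * zeta e g
  + (295/324) * sigma' e f * sigma' e g
  + (39/295) * (ι e 0 f) * (ι e 0 g)
  + (1/4) * (ι e 1 f) * (ι e 1 g) * (2*((f.1 ∩ g.1 ∩ e.1).card:ℝ) - 1)
  + (rho e f) * (rho e g) * (((f.1 ∩ g.1) \ e.1).card:ℝ)
  + (1/4) * (ι e 1 f) * (ι e 1 g) * (((f.1 ∩ g.1) \ e.1).card:ℝ)
  + (if f = g then (1:ℝ) else 0) * ((5/6) * (ι e 1 f) + (ι e 0 f))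

lemma pointwise (e f g : Edge n 2) :
    24*((C e f g + C f e g + C f g e) + (C e g f + C g e f + C g f e)) = M e f g := by
  classical
  have he2 : e.1.card = 2 := e.2
  have hf2 : f.1.card = 2 := f.2
  have hg2 : g.1.card = 2 := g.2
  have u1 : f.1 ∪ e.1 = e.1 ∪ f.1 := Finset.union_comm _ _
  have u2 : g.1 ∪ e.1 = e.1 ∪ g.1 := Finset.union_comm _ _
  have u3 : g.1 ∪ f.1 = f.1 ∪ g.1 := Finset.union_comm _ _
  have u4 : f.1 ∪ e.1 ∪ g.1 = e.1 ∪ f.1 ∪ g.1 := by rw [u1]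
  have u5 : f.1 ∪ g.1 ∪ e.1 = e.1 ∪ f.1 ∪ g.1 := by
    rw [Finset.union_comm (f.1 ∪ g.1) e.1, ← Finset.union_assoc]
  have u6 : e.1 ∪ g.1 ∪ f.1 = e.1 ∪ f.1 ∪ g.1 := by
    rw [Finset.union_assoc, Finset.union_comm g.1 f.1, ← Finset.union_assoc]
  have u7 : g.1 ∪ e.1 ∪ f.1 = e.1 ∪ f.1 ∪ g.1 := by rw [u2, u6]
  have u8 : g.1 ∪ f.1 ∪ e.1 = e.1 ∪ f.1 ∪ g.1 := by rw [u3, u5]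
  -- relations between cardinalities
  have hr1 : (e.1 ∪ f.1).card + (f.1 ∩ e.1).card = 4 := by
    have h := Finset.card_union_add_card_inter e.1 f.1
    rw [Finset.inter_comm e.1 f.1, he2, hf2] at h; omega
  have hr2 : (e.1 ∪ g.1).card + (g.1 ∩ e.1).card = 4 := by
    have h := Finset.card_union_add_card_inter e.1 g.1
    rw [Finset.inter_comm e.1 g.1, he2, hg2] at h; omega
  have hr3 : (f.1 ∪ g.1).card + (f.1 ∩ g.1).card = 4 := by
    have h := Finset.card_union_add_card_inter f.1 g.1
    rw [hf2, hg2] at h; omega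
  have hr4 : (e.1 ∪ f.1 ∪ g.1).card + (g.1 ∩ e.1).card + (f.1 ∩ g.1).card
      = (e.1 ∪ f.1).card + 2 + (f.1 ∩ g.1 ∩ e.1).card := by
    have k1 := Finset.card_union_add_card_inter (e.1 ∪ f.1) g.1
    rw [hg2] at k1
    have k2 : (e.1 ∪ f.1) ∩ g.1 = (e.1 ∩ g.1) ∪ (f.1 ∩ g.1) :=
      Finset.union_inter_distrib_right _ _ _
    rw [k2] at k1
    have k3 := Finset.card_union_add_card_inter (e.1 ∩ g.1) (f.1 ∩ g.1)
    have k4 : (e.1 ∩ g.1) ∩ (f.1 ∩ g.1) = f.1 ∩ g.1 ∩ e.1 := by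
      ext c; simp only [Finset.mem_inter]; tauto
    have k5 : (e.1 ∩ g.1).card = (g.1 ∩ e.1).card := by rw [Finset.inter_comm]
    rw [k4] at k3
    omega
  have hs1 : f.1 ∩ g.1 ∩ e.1 ⊆ f.1 ∩ e.1 := by
    intro c hc; simp only [Finset.mem_inter] at *; tauto
  have hs2 : f.1 ∩ g.1 ∩ e.1 ⊆ g.1 ∩ e.1 := by
    intro c hc; simp only [Finset.mem_inter] at *; tauto
  have hs3 : f.1 ∩ g.1 ∩ e.1 ⊆ f.1 ∩ g.1 := Finset.inter_subset_left
  have hr5a := Finset.card_le_card hs1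
  have hr5b := Finset.card_le_card hs2
  have hr5c := Finset.card_le_card hs3
  have hr6 : (f.1 ∩ e.1).card + (g.1 ∩ e.1).card ≤ 2 + (f.1 ∩ g.1 ∩ e.1).card := by
    have k1 := Finset.card_union_add_card_inter (f.1 ∩ e.1) (g.1 ∩ e.1)
    have k2 : (f.1 ∩ e.1) ∩ (g.1 ∩ e.1) = f.1 ∩ g.1 ∩ e.1 := by
      ext c; simp only [Finset.mem_inter]; tauto
    have k3 : (f.1 ∩ e.1) ∪ (g.1 ∩ e.1) ⊆ e.1 :=
      Finset.union_subset Finset.inter_subset_right Finset.inter_subset_right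
    have k4 := Finset.card_le_card k3
    rw [k2] at k1; rw [he2] at k4; omega
  have hr7 : (f.1 ∩ e.1).card + (f.1 ∩ g.1).card ≤ 2 + (f.1 ∩ g.1 ∩ e.1).card := by
    have k1 := Finset.card_union_add_card_inter (f.1 ∩ e.1) (f.1 ∩ g.1)
    have k2 : (f.1 ∩ e.1) ∩ (f.1 ∩ g.1) = f.1 ∩ g.1 ∩ e.1 := by
      ext c; simp only [Finset.mem_inter]; tauto
    have k3 : (f.1 ∩ e.1) ∪ (f.1 ∩ g.1) ⊆ f.1 :=
      Finset.union_subset Finset.inter_subset_left Finset.inter_subset_left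
    have k4 := Finset.card_le_card k3
    rw [k2] at k1; rw [hf2] at k4; omega
  have hr8 : (g.1 ∩ e.1).card + (f.1 ∩ g.1).card ≤ 2 + (f.1 ∩ g.1 ∩ e.1).card := by
    have k1 := Finset.card_union_add_card_inter (g.1 ∩ e.1) (f.1 ∩ g.1)
    have k2 : (g.1 ∩ e.1) ∩ (f.1 ∩ g.1) = f.1 ∩ g.1 ∩ e.1 := by
      ext c; simp only [Finset.mem_inter]; tauto
    have k3 : (g.1 ∩ e.1) ∪ (f.1 ∩ g.1) ⊆ g.1 := by
      refine Finset.union_subset Finset.inter_subset_left Finset.inter_subset_right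
    have k4 := Finset.card_le_card k3
    rw [k2] at k1; rw [hg2] at k4; omega
  have hr9a : (f.1 ∩ e.1).card ≤ 2 := by
    have h1 : f.1 ∩ e.1 ⊆ e.1 := Finset.inter_subset_right
    have := Finset.card_le_card h1; omega
  have hr9b : (g.1 ∩ e.1).card ≤ 2 := by
    have h1 : g.1 ∩ e.1 ⊆ e.1 := Finset.inter_subset_right
    have := Finset.card_le_card h1; omega
  have hr9c : (f.1 ∩ g.1).card ≤ 2 := by
    have h1 : f.1 ∩ g.1 ⊆ f.1 := Finset.inter_subset_left
    have := Finset.card_le_card h1; omega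
  have hr10 : ((f.1 ∩ g.1) \ e.1).card + (f.1 ∩ g.1 ∩ e.1).card = (f.1 ∩ g.1).card := by
    have := Finset.card_inter_add_card_sdiff (f.1 ∩ g.1) e.1
    omega
  -- the diagonal indicator as a polynomial in |f ∩ g|
  have hδ : (if f = g then (1:ℝ) else 0)
      = ((f.1 ∩ g.1).card:ℝ) * (((f.1 ∩ g.1).card:ℝ) - 1) / 2 := by
    by_cases hfg : f = g
    · rw [if_pos hfg]; subst hfg
      rw [Finset.inter_self, hf2]; norm_num
    · rw [if_neg hfg]
      have hle : (f.1 ∩ g.1).card ≤ 1 := by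
        by_contra hcon
        push_neg at hcon
        have h2 : f.1.card ≤ (f.1 ∩ g.1).card := by omega
        have h3 : f.1 ∩ g.1 = f.1 :=
          Finset.eq_of_subset_of_card_le Finset.inter_subset_left h2
        have h4 : f.1 ⊆ g.1 := by rw [← h3]; exact Finset.inter_subset_right
        have h5 : f.1 = g.1 :=
          Finset.eq_of_subset_of_card_le h4 (by omega)
        exact hfg (Subtype.ext h5)
      interval_cases h : (f.1 ∩ g.1).card <;> norm_num
  unfold C M zeta sigma' rho ι
  simp only [u1, u2, u3, u5, u6]
  rw [he2, hf2, hg2, hδ]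
  set A := (e.1 ∪ f.1).card with hA; clear_value A
  set A' := (e.1 ∪ g.1).card with hA'; clear_value A'
  set B := (f.1 ∪ g.1).card with hB; clear_value B
  set U := (e.1 ∪ f.1 ∪ g.1).card with hU; clear_value U
  set uf := (f.1 ∩ e.1).card with huf; clear_value uf
  set ug := (g.1 ∩ e.1).card with hug; clear_value ug
  set i := (f.1 ∩ g.1).card with hi; clear_value i
  set j := (f.1 ∩ g.1 ∩ e.1).card with hj; clear_value j
  set w := ((f.1 ∩ g.1) \ e.1).card with hw; clear_value w
  clear hA hA' hB hU huf hug hi hj hw hδ hs1 hs2 hs3 u1 u2 u3 u4 u5 u6 u7 u8 he2 hf2 hg2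
  have hAR : (A:ℝ) = 4 - (uf:ℝ) := by
    have h2 : ((A + uf : ℕ) : ℝ) = ((4:ℕ):ℝ) := by rw [hr1]
    push_cast at h2; linarith
  have hA'R : (A':ℝ) = 4 - (ug:ℝ) := by
    have h2 : ((A' + ug : ℕ) : ℝ) = ((4:ℕ):ℝ) := by rw [hr2]
    push_cast at h2; linarith
  have hBR : (B:ℝ) = 4 - (i:ℝ) := by
    have h2 : ((B + i : ℕ) : ℝ) = ((4:ℕ):ℝ) := by rw [hr3]
    push_cast at h2; linarith
  have hUR : (U:ℝ) = 6 - (uf:ℝ) - (ug:ℝ) - (i:ℝ) + (j:ℝ) := by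
    have h2 : ((U + ug + i : ℕ) : ℝ) = ((A + 2 + j : ℕ):ℝ) := by rw [hr4]
    push_cast at h2; linarith [hAR]
  have hwR : (w:ℝ) = (i:ℝ) - (j:ℝ) := by
    have h2 : ((w + j : ℕ) : ℝ) = ((i : ℕ):ℝ) := by rw [hr10]
    push_cast at h2; linarith
  rw [hAR, hA'R, hBR, hUR, hwR]
  clear hAR hA'R hBR hUR hwR hr1 hr2 hr3 hr4 hr10
  clear A A' B U w
  interval_cases uf <;> interval_cases ug <;> interval_cases i <;> interval_cases j <;>
    first
    | omega
    | norm_num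

lemma ι_nonneg (e : Edge n 2) (k : ℕ) (f : Edge n 2) : 0 ≤ ι e k f := by
  unfold ι; split <;> norm_num

lemma jcast (e f g : Edge n 2) :
    ((f.1 ∩ g.1 ∩ e.1).card : ℝ) = ∑ c ∈ e.1, χ c f * χ c g := by
  have h1 : f.1 ∩ g.1 ∩ e.1 = e.1.filter (fun c => c ∈ f.1 ∧ c ∈ g.1) := by
    ext c; simp only [Finset.mem_inter, Finset.mem_filter]; tauto
  rw [h1, Finset.card_filter]
  push_cast
  refine Finset.sum_congr rfl fun c _ => ?_
  unfold χ
  by_cases h2 : c ∈ f.1 <;> by_cases h3 : c ∈ g.1 <;> simp [h2, h3]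

lemma wcast (e f g : Edge n 2) :
    (((f.1 ∩ g.1) \ e.1).card : ℝ) = ∑ c ∈ e.1ᶜ, χ c f * χ c g := by
  have h1 : (f.1 ∩ g.1) \ e.1 = e.1ᶜ.filter (fun c => c ∈ f.1 ∧ c ∈ g.1) := by
    ext c
    simp only [Finset.mem_inter, Finset.mem_filter, Finset.mem_sdiff, Finset.mem_compl]
    tauto
  rw [h1, Finset.card_filter]
  push_cast
  refine Finset.sum_congr rfl fun c _ => ?_
  unfold χ
  by_cases h2 : c ∈ f.1 <;> by_cases h3 : c ∈ g.1 <;> simp [h2, h3]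

lemma dsum_factor (k : ℝ) (a b y : Edge n 2 → ℝ) :
    (∑ f : Edge n 2, ∑ g : Edge n 2, k * (a f * b g) * (y f * y g))
      = k * ((∑ f : Edge n 2, a f * y f) * (∑ g : Edge n 2, b g * y g)) := by
  rw [Finset.sum_mul_sum, Finset.mul_sum]
  refine Finset.sum_congr rfl fun f _ => ?_
  rw [Finset.mul_sum]
  refine Finset.sum_congr rfl fun g _ => ?_
  ring

lemma dsum_factor2 (k : ℝ) (s : Finset (Fin n)) (a b y : Edge n 2 → ℝ) :
    (∑ f : Edge n 2, ∑ g : Edge n 2, k * (a f * b g) * (∑ c ∈ s, χ c f * χ c g) * (y f * y g))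
      = k * ∑ c ∈ s,
          (∑ f : Edge n 2, a f * χ c f * y f) * (∑ g : Edge n 2, b g * χ c g * y g) := by
  have h1 : ∀ f g : Edge n 2,
      k * (a f * b g) * (∑ c ∈ s, χ c f * χ c g) * (y f * y g)
      = ∑ c ∈ s, k * ((a f * χ c f) * (b g * χ c g)) * (y f * y g) := by
    intro f g
    rw [Finset.mul_sum, Finset.sum_mul]
    exact Finset.sum_congr rfl fun c _ => by ring
  calc (∑ f : Edge n 2, ∑ g : Edge n 2,
          k * (a f * b g) * (∑ c ∈ s, χ c f * χ c g) * (y f * y g))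
      = ∑ f : Edge n 2, ∑ g : Edge n 2, ∑ c ∈ s,
          k * ((a f * χ c f) * (b g * χ c g)) * (y f * y g) :=
        Finset.sum_congr rfl fun f _ => Finset.sum_congr rfl fun g _ => h1 f g
    _ = ∑ f : Edge n 2, ∑ c ∈ s, ∑ g : Edge n 2,
          k * ((a f * χ c f) * (b g * χ c g)) * (y f * y g) :=
        Finset.sum_congr rfl fun f _ => Finset.sum_comm
    _ = ∑ c ∈ s, ∑ f : Edge n 2, ∑ g : Edge n 2,
          k * ((a f * χ c f) * (b g * χ c g)) * (y f * y g) := Finset.sum_comm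
    _ = ∑ c ∈ s, k * ((∑ f : Edge n 2, (a f * χ c f) * y f)
          * (∑ g : Edge n 2, (b g * χ c g) * y g)) :=
        Finset.sum_congr rfl fun c _ => dsum_factor k _ _ y
    _ = k * ∑ c ∈ s,
          (∑ f : Edge n 2, a f * χ c f * y f) * (∑ g : Edge n 2, b g * χ c g * y g) := by
        rw [Finset.mul_sum]

lemma dsum_diag (K y : Edge n 2 → ℝ) :
    (∑ f : Edge n 2, ∑ g : Edge n 2, (if f = g then (1:ℝ) else 0) * K f * (y f * y g))
      = ∑ f : Edge n 2, K f * (y f * y f) := by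
  refine Finset.sum_congr rfl fun f _ => ?_
  have h1 : ∀ g : Edge n 2, (if f = g then (1:ℝ) else 0) * K f * (y f * y g)
      = if f = g then K f * (y f * y g) else 0 := by
    intro g; by_cases h : f = g <;> simp [h]
  rw [Finset.sum_congr rfl fun g _ => h1 g, Finset.sum_ite_eq]
  simp

lemma q_sos (e : Edge n 2) (y : Edge n 2 → ℝ) :
    48 * q e y
      = 18 * ((∑ f : Edge n 2, zeta e f * y f) * (∑ f : Edge n 2, zeta e f * y f))
      + (295/324) * ((∑ f : Edge n 2, sigma' e f * y f) * (∑ f : Edge n 2, sigma' e f * y f))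
      + (39/295) * ((∑ f : Edge n 2, ι e 0 f * y f) * (∑ f : Edge n 2, ι e 0 f * y f))
      + (1/2) * (∑ c ∈ e.1, (∑ f : Edge n 2, ι e 1 f * χ c f * y f)
          * (∑ f : Edge n 2, ι e 1 f * χ c f * y f))
      - (1/4) * ((∑ f : Edge n 2, ι e 1 f * y f) * (∑ f : Edge n 2, ι e 1 f * y f))
      + (∑ c ∈ e.1ᶜ, (∑ f : Edge n 2, rho e f * χ c f * y f)
          * (∑ f : Edge n 2, rho e f * χ c f * y f))
      + (1/4) * (∑ c ∈ e.1ᶜ, (∑ f : Edge n 2, ι e 1 f * χ c f * y f)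
          * (∑ f : Edge n 2, ι e 1 f * χ c f * y f))
      + (∑ f : Edge n 2, ((5/6) * ι e 1 f + ι e 0 f) * (y f * y f)) := by
  have hq' : q e y = ∑ f : Edge n 2, ∑ g : Edge n 2,
      (C e f g + C f e g + C f g e) * y f * y g := rfl
  have hs : q e y = ∑ f : Edge n 2, ∑ g : Edge n 2,
      (C e g f + C g e f + C g f e) * y f * y g := by
    rw [hq', Finset.sum_comm]
    exact Finset.sum_congr rfl fun f _ => Finset.sum_congr rfl fun g _ => by ring
  have h48 : 48 * q e y = ∑ f : Edge n 2, ∑ g : Edge n 2,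
      (24*((C e f g + C f e g + C f g e) + (C e g f + C g e f + C g f e))) * (y f * y g) := by
    have step : ∀ f g : Edge n 2,
        (24*((C e f g + C f e g + C f g e) + (C e g f + C g e f + C g f e))) * (y f * y g)
        = 24 * ((C e f g + C f e g + C f g e) * y f * y g)
          + 24 * ((C e g f + C g e f + C g f e) * y f * y g) := fun f g => by ring
    rw [Finset.sum_congr rfl fun f _ => Finset.sum_congr rfl fun g _ => step f g]
    rw [Finset.sum_congr rfl fun f (_ : f ∈ Finset.univ) => Finset.sum_add_distrib]
    rw [Finset.sum_add_distrib]
    have t1 : (∑ f : Edge n 2, ∑ g : Edge n 2,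
        24 * ((C e f g + C f e g + C f g e) * y f * y g)) = 24 * q e y := by
      rw [hq', Finset.mul_sum]
      exact Finset.sum_congr rfl fun f _ => (Finset.mul_sum _ _ _).symm
    have t2 : (∑ f : Edge n 2, ∑ g : Edge n 2,
        24 * ((C e g f + C g e f + C g f e) * y f * y g)) = 24 * q e y := by
      rw [hs, Finset.mul_sum]
      exact Finset.sum_congr rfl fun f _ => (Finset.mul_sum _ _ _).symm
    rw [t1, t2]
    ring
  have hM : 48 * q e y = ∑ f : Edge n 2, ∑ g : Edge n 2, M e f g * (y f * y g) := by
    rw [h48]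
    exact Finset.sum_congr rfl fun f _ => Finset.sum_congr rfl fun g _ => by
      rw [pointwise e f g]
  have hexp : ∀ f g : Edge n 2, M e f g * (y f * y g)
      = 18 * (zeta e f * zeta e g) * (y f * y g)
      + (295/324) * (sigma' e f * sigma' e g) * (y f * y g)
      + (39/295) * (ι e 0 f * ι e 0 g) * (y f * y g)
      + ((1/2) * (ι e 1 f * ι e 1 g) * (∑ c ∈ e.1, χ c f * χ c g) * (y f * y g)
      + ((-1/4) * (ι e 1 f * ι e 1 g) * (y f * y g)
      + ((1:ℝ) * (rho e f * rho e g) * (∑ c ∈ e.1ᶜ, χ c f * χ c g) * (y f * y g)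
      + ((1/4) * (ι e 1 f * ι e 1 g) * (∑ c ∈ e.1ᶜ, χ c f * χ c g) * (y f * y g)
      + (if f = g then (1:ℝ) else 0) * ((5/6) * ι e 1 f + ι e 0 f) * (y f * y g))))) := by
    intro f g
    unfold M
    rw [jcast e f g, wcast e f g]
    ring
  rw [hM, Finset.sum_congr rfl fun f (_ : f ∈ Finset.univ) =>
    Finset.sum_congr rfl fun g _ => hexp f g]
  simp only [Finset.sum_add_distrib]
  rw [dsum_factor 18 (zeta e) (zeta e) y,
    dsum_factor (295/324) (sigma' e) (sigma' e) y,
    dsum_factor (39/295) (ι e 0) (ι e 0) y,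
    dsum_factor2 (1/2) e.1 (ι e 1) (ι e 1) y,
    dsum_factor (-1/4) (ι e 1) (ι e 1) y,
    dsum_factor2 1 e.1ᶜ (rho e) (rho e) y,
    dsum_factor2 (1/4) e.1ᶜ (ι e 1) (ι e 1) y,
    dsum_diag (fun f => (5/6) * ι e 1 f + ι e 0 f) y]
  ring

lemma S_split (e : Edge n 2) (y : Edge n 2 → ℝ) {a b : Fin n} (hab : a ≠ b)
    (he : e.1 = {a, b}) :
    (∑ f : Edge n 2, ι e 1 f * y f)
      = (∑ f : Edge n 2, ι e 1 f * χ a f * y f) + (∑ f : Edge n 2, ι e 1 f * χ b f * y f) := by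
  rw [← Finset.sum_add_distrib]
  refine Finset.sum_congr rfl fun f _ => ?_
  have hχ : χ a f + χ b f = ((f.1 ∩ e.1).card : ℝ) := by
    have h1 : f.1 ∩ e.1 = e.1.filter (fun c => c ∈ f.1) := by
      ext c; simp only [Finset.mem_inter, Finset.mem_filter]; tauto
    rw [h1, Finset.card_filter, he, Finset.sum_pair hab]
    push_cast
    unfold χ
    norm_num
  unfold ι
  by_cases h1 : (f.1 ∩ e.1).card = 1
  · have hχ1 : χ a f + χ b f = 1 := by rw [hχ, h1]; norm_num
    rw [if_pos h1]
    linear_combination (-(y f)) * hχ1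
  · rw [if_neg h1]
    ring

lemma q_nonneg (e : Edge n 2) (y : Edge n 2 → ℝ) : 0 ≤ q e y := by
  obtain ⟨a, b, hab, he⟩ := Finset.card_eq_two.1 e.2
  have h := q_sos e y
  rw [he, Finset.sum_pair hab, ← he, S_split e y hab he] at h
  have key : 0 ≤ (1/2) * ((∑ f : Edge n 2, ι e 1 f * χ a f * y f)
        * (∑ f : Edge n 2, ι e 1 f * χ a f * y f)
      + (∑ f : Edge n 2, ι e 1 f * χ b f * y f)
        * (∑ f : Edge n 2, ι e 1 f * χ b f * y f))
      - (1/4) * (((∑ f : Edge n 2, ι e 1 f * χ a f * y f)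
          + (∑ f : Edge n 2, ι e 1 f * χ b f * y f))
        * ((∑ f : Edge n 2, ι e 1 f * χ a f * y f)
          + (∑ f : Edge n 2, ι e 1 f * χ b f * y f))) := by
    nlinarith [sq_nonneg ((∑ f : Edge n 2, ι e 1 f * χ a f * y f)
      - (∑ f : Edge n 2, ι e 1 f * χ b f * y f))]
  have h1 : 0 ≤ ∑ c ∈ e.1ᶜ, (∑ f : Edge n 2, rho e f * χ c f * y f)
      * (∑ f : Edge n 2, rho e f * χ c f * y f) :=
    Finset.sum_nonneg fun c _ => mul_self_nonneg _
  have h2 : 0 ≤ ∑ c ∈ e.1ᶜ, (∑ f : Edge n 2, ι e 1 f * χ c f * y f)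
      * (∑ f : Edge n 2, ι e 1 f * χ c f * y f) :=
    Finset.sum_nonneg fun c _ => mul_self_nonneg _
  have h3 : 0 ≤ ∑ f : Edge n 2, ((5/6) * ι e 1 f + ι e 0 f) * (y f * y f) :=
    Finset.sum_nonneg fun f _ => mul_nonneg
      (add_nonneg (by nlinarith [ι_nonneg e 1 f]) (ι_nonneg e 0 f)) (mul_self_nonneg _)
  nlinarith [h, key, h1, h2, h3,
    mul_self_nonneg (∑ f : Edge n 2, zeta e f * y f),
    mul_self_nonneg (∑ f : Edge n 2, sigma' e f * y f),
    mul_self_nonneg (∑ f : Edge n 2, ι e 0 f * y f)]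

end Stmt13Aux

/-- For `d = 3` and `L = 2`, `f_3` attains its global minimum over the standard simplex
at the barycenter. -/
theorem stmt13 (n : ℕ) (hn : 2 ≤ n) :
    ∀ x ∈ stdSimplex ℝ (Edge n 2),
      fPoly n 2 3 (fun _ => ((n.choose 2 : ℝ))⁻¹) ≤ fPoly n 2 3 x := by
  intro x hx
  obtain ⟨hx0, hx1⟩ := hx
  set xs : Edge n 2 → ℝ := fun _ => ((n.choose 2 : ℝ))⁻¹ with hxs
  have hm0 : (0:ℝ) < ((n.choose 2 : ℕ) : ℝ) :=
    Nat.cast_pos.2 (Nat.choose_pos hn)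
  have hxs0 : ∀ e : Edge n 2, 0 ≤ xs e := fun e => inv_nonneg.2 hm0.le
  have hsum_xs : ∑ e : Edge n 2, xs e = 1 := by
    rw [Finset.sum_const, Finset.card_univ, Stmt13Aux.card_E, nsmul_eq_mul]
    exact mul_inv_cancel₀ hm0.ne'
  have hy : ∑ e : Edge n 2, (x - xs) e = 0 := by
    simp only [Pi.sub_apply]
    rw [Finset.sum_sub_distrib, hx1, hsum_xs]
    ring
  obtain ⟨e₀⟩ : Nonempty (Edge n 2) := by
    rw [← Fintype.card_pos_iff, Stmt13Aux.card_E]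
    exact Nat.choose_pos hn
  have hlin : Stmt13Aux.T (x - xs) xs xs + Stmt13Aux.T xs (x - xs) xs
      + Stmt13Aux.T xs xs (x - xs) = 0 := by
    have h2 := Stmt13Aux.quad_eq (x - xs) xs
    have h3 : ∀ e : Edge n 2, Stmt13Aux.q e xs
        = (((n.choose 2 : ℝ))⁻¹)^2 * Stmt13Aux.q e₀ (fun _ => (1:ℝ)) := by
      intro e
      rw [hxs, Stmt13Aux.q_const, Stmt13Aux.q_one_const e e₀]
    rw [Finset.sum_congr rfl (fun e _ => by rw [h3 e])] at h2
    rw [← Finset.sum_mul] at h2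
    rw [hy] at h2
    simp only [zero_mul] at h2
    linarith [h2]
  have hqx : 0 ≤ ∑ e : Edge n 2, x e * Stmt13Aux.q e (x - xs) :=
    Finset.sum_nonneg fun e _ => mul_nonneg (hx0 e) (Stmt13Aux.q_nonneg e _)
  have hqxs : 0 ≤ ∑ e : Edge n 2, xs e * Stmt13Aux.q e (x - xs) :=
    Finset.sum_nonneg fun e _ => mul_nonneg (hxs0 e) (Stmt13Aux.q_nonneg e _)
  have hmaster := Stmt13Aux.master x xs
  rw [Stmt13Aux.fPoly_eq, Stmt13Aux.fPoly_eq]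
  linarith [hmaster, hlin, hqx, hqxs]
end

section
/- For degree d = 3 and edge size L = 2, the polynomial f_3 is convex on the standard simplex Δ_m; equivalently, its Hessian matrix H(f_3)(x) = (∂²f_3(x)/∂x_e ∂x_f)_{e,f ∈ E} is positive semidefinite at every point x ∈ Δ_m. -/
open Finset

namespace Stmt14Aux

/-- The SOS kernel. -/
noncomputable def sosK (e1 e2 k1 k2 M D : ℝ) : ℝ :=
  3/4*((e1*e2)+14/27*(e1+e2-2*(e1*e2))+1/3*((1-e1)*(1-e2)))*((k1*k2)+14/27*(k1+k2-2*(k1*k2))+1/3*((1-k1)*(1-k2)))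
  + 295/7776*((e1+e2-2*(e1*e2))+288/295*((1-e1)*(1-e2)))*((k1+k2-2*(k1*k2))+288/295*((1-k1)*(1-k2)))
  + 13/2360*((1-e1)*(1-e2))*((1-k1)*(1-k2)) + 1/96*(e1-e2)*(k1-k2)
  + M*(35/288*((e1+e2-2*(e1*e2))+18/35*((1-e1)*(1-e2)))*((k1+k2-2*(k1*k2))+18/35*((1-k1)*(1-k2)))
       + 1/105*((1-e1)*(1-e2))*((1-k1)*(1-k2)) + 5/288*(e1-e2)*(k1-k2))
  + D*(1/24*((1-e1)*(1-e2)))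

lemma numeric_ne (i1 i2 k1 k2 m A B C N : ℕ)
    (h1 : i1 ≤ 1) (h2 : i2 ≤ 1) (h3 : k1 ≤ 1) (h4 : k2 ≤ 1)
    (hA : A + i1 + i2 = 4) (hB : B + k1 + k2 = 4)
    (hC : C + m + i1*k1 + i2*k2 = 4)
    (hN : N + i1 + i2 + k1 + k2 + m = 6)
    (hmf : m + i1 + i2 ≤ 2) (hmg : m + k1 + k2 ≤ 2)
    (hne : m + i1*k1 + i2*k2 ≤ 1) :
    ((2:ℝ)*A*N)⁻¹ + ((2:ℝ)*A*N)⁻¹ + ((2:ℝ)*C*N)⁻¹ + (((2:ℝ)*B*N)⁻¹ + ((2:ℝ)*B*N)⁻¹ + ((2:ℝ)*C*N)⁻¹)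
      = sosK i1 i2 k1 k2 m 0 := by
  have hm' : m ≤ 1 := by omega
  have hA' : A ≤ 4 := by omega
  have hB' : B ≤ 4 := by omega
  have hC' : C ≤ 4 := by omega
  have hN' : N ≤ 6 := by omega
  interval_cases i1 <;> interval_cases i2 <;> interval_cases k1 <;> interval_cases k2 <;>
    interval_cases m <;> first | (exfalso; omega) | (
    interval_cases A <;> first | (exfalso; omega) | (
    interval_cases B <;> first | (exfalso; omega) | (
    interval_cases C <;> first | (exfalso; omega) | (
    interval_cases N <;> first | (exfalso; omega) | (norm_num [sosK])))))

lemma numeric_diag (i1 i2 m A : ℕ) (h1 : i1 ≤ 1) (h2 : i2 ≤ 1)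
    (hA : A + i1 + i2 = 4) (hm : m + i1 + i2 = 2) :
    ((2:ℝ)*A*A)⁻¹ + ((2:ℝ)*A*A)⁻¹ + ((2:ℝ)*2*A)⁻¹ + (((2:ℝ)*A*A)⁻¹ + ((2:ℝ)*A*A)⁻¹ + ((2:ℝ)*2*A)⁻¹)
      = sosK i1 i2 i1 i2 m 1 := by
  have hm' : m ≤ 2 := by omega
  have hA' : A ≤ 4 := by omega
  interval_cases i1 <;> interval_cases i2 <;> interval_cases m <;> first | (exfalso; omega) | (
    interval_cases A <;> first | (exfalso; omega) | (norm_num [sosK]))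

variable {n : ℕ}

noncomputable def w (a b c : Edge n 2) : ℝ :=
  ((a.1.card : ℝ) * (((a.1 ∪ b.1).card : ℝ)) * (((a.1 ∪ b.1 ∪ c.1).card : ℝ)))⁻¹

noncomputable def fE (x : Edge n 2 → ℝ) : ℝ :=
  ∑ a : Edge n 2, ∑ b : Edge n 2, ∑ c : Edge n 2, x a * x b * x c * w a b c

def eq3 {α : Type*} : (α × α × α) ≃ (Fin 3 → α) where
  toFun p := ![p.1, p.2.1, p.2.2]
  invFun t := (t 0, t 1, t 2)
  left_inv p := rfl
  right_inv t := by funext i; fin_cases i <;> rfl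

lemma sum_fn3 {α : Type*} [Fintype α] (F : (Fin 3 → α) → ℝ) :
    ∑ t : Fin 3 → α, F t = ∑ a : α, ∑ b : α, ∑ c : α, F ![a,b,c] := by
  rw [← Equiv.sum_comp (eq3 (α := α)) F, Fintype.sum_prod_type]
  simp only [Fintype.sum_prod_type]
  rfl

lemma fPoly_eq (x : Edge n 2 → ℝ) : fPoly n 2 3 x = fE x := by
  unfold fPoly fE
  rw [sum_fn3]
  refine Finset.sum_congr rfl fun a _ => Finset.sum_congr rfl fun b _ => Finset.sum_congr rfl fun c _ => ?_
  rw [Fin.prod_univ_three]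
  have h0 : (Finset.Iic (0 : Fin 3)) = {0} := by decide
  have h1 : (Finset.Iic (1 : Fin 3)) = {0,1} := by decide
  have h2 : (Finset.Iic (2 : Fin 3)) = {0,1,2} := by decide
  rw [h0, h1, h2]
  simp only [Finset.singleton_biUnion, Finset.biUnion_insert]
  simp only [Matrix.cons_val_zero, Matrix.cons_val_one, Matrix.head_cons, Matrix.cons_val_two, Matrix.tail_cons]
  unfold w
  rw [Finset.union_assoc]
  field_simp

noncomputable def K (z v : Edge n 2 → ℝ) : ℝ :=
  ∑ a : Edge n 2, ∑ b : Edge n 2, ∑ c : Edge n 2,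
    w a b c * (z a * v b * v c + v a * z b * v c + v a * v b * z c)

lemma skeleton (x y : Edge n 2 → ℝ) (a b : ℝ) (hab : a + b = 1) :
    a * fE x + b * fE y - fE (fun e => a * x e + b * y e)
      = a * b / 3 * ((1 + a) * K x (fun e => x e - y e) + (1 + b) * K y (fun e => x e - y e)) := by
  unfold fE K
  simp only [Finset.mul_sum, ← Finset.sum_sub_distrib, ← Finset.sum_add_distrib]
  refine Finset.sum_congr rfl fun e1 _ => Finset.sum_congr rfl fun e2 _ => Finset.sum_congr rfl fun e3 _ => ?_
  have hb : b = 1 - a := by linarith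
  subst hb
  ring

noncomputable def Q (e : Edge n 2) (v : Edge n 2 → ℝ) : ℝ :=
  ∑ f : Edge n 2, ∑ g : Edge n 2, (w e f g + w f e g + w f g e) * (v f * v g)

lemma K_eq (z v : Edge n 2 → ℝ) : K z v = ∑ e : Edge n 2, z e * Q e v := by
  unfold K Q
  have p1 : (∑ a : Edge n 2, ∑ b : Edge n 2, ∑ c : Edge n 2, w a b c * (z a * v b * v c))
      = ∑ e : Edge n 2, ∑ f : Edge n 2, ∑ g : Edge n 2, z e * (w e f g * (v f * v g)) := by
    refine Finset.sum_congr rfl fun e _ => Finset.sum_congr rfl fun f _ => Finset.sum_congr rfl fun g _ => by ring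
  have p2 : (∑ a : Edge n 2, ∑ b : Edge n 2, ∑ c : Edge n 2, w a b c * (v a * z b * v c))
      = ∑ e : Edge n 2, ∑ f : Edge n 2, ∑ g : Edge n 2, z e * (w f e g * (v f * v g)) := by
    rw [Finset.sum_comm]
    refine Finset.sum_congr rfl fun e _ => Finset.sum_congr rfl fun f _ => Finset.sum_congr rfl fun g _ => by ring
  have p3 : (∑ a : Edge n 2, ∑ b : Edge n 2, ∑ c : Edge n 2, w a b c * (v a * v b * z c))
      = ∑ e : Edge n 2, ∑ f : Edge n 2, ∑ g : Edge n 2, z e * (w f g e * (v f * v g)) := by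
    rw [show (∑ a : Edge n 2, ∑ b : Edge n 2, ∑ c : Edge n 2, w a b c * (v a * v b * z c))
        = ∑ a : Edge n 2, ∑ c : Edge n 2, ∑ b : Edge n 2, w a b c * (v a * v b * z c) from
        Finset.sum_congr rfl fun a _ => Finset.sum_comm, Finset.sum_comm]
    refine Finset.sum_congr rfl fun e _ => Finset.sum_congr rfl fun f _ => Finset.sum_congr rfl fun g _ => by ring
  calc ∑ a : Edge n 2, ∑ b : Edge n 2, ∑ c : Edge n 2,
      w a b c * (z a * v b * v c + v a * z b * v c + v a * v b * z c)
      = (∑ a : Edge n 2, ∑ b : Edge n 2, ∑ c : Edge n 2, w a b c * (z a * v b * v c))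
        + (∑ a : Edge n 2, ∑ b : Edge n 2, ∑ c : Edge n 2, w a b c * (v a * z b * v c))
        + (∑ a : Edge n 2, ∑ b : Edge n 2, ∑ c : Edge n 2, w a b c * (v a * v b * z c)) := by
        simp only [← Finset.sum_add_distrib]
        exact Finset.sum_congr rfl fun e1 _ => Finset.sum_congr rfl fun e2 _ => Finset.sum_congr rfl fun e3 _ => by ring
    _ = ∑ e : Edge n 2, z e * Q e v := by
        rw [p1, p2, p3]
        unfold Q
        simp only [← Finset.sum_add_distrib, Finset.mul_sum]
        exact Finset.sum_congr rfl fun e _ => Finset.sum_congr rfl fun f _ => Finset.sum_congr rfl fun g _ => by ring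


/-! ### membership statistics -/

def iP (p : Fin n) (f : Edge n 2) : ℕ := if p ∈ f.1 then 1 else 0

lemma iP_le (p : Fin n) (f : Edge n 2) : iP p f ≤ 1 := by
  unfold iP; split <;> omega

noncomputable def MT (p q : Fin n) (f g : Edge n 2) : ℝ :=
  ∑ u ∈ Finset.univ \ {p,q}, (iP u f : ℝ) * (iP u g : ℝ)

noncomputable def kern (p q : Fin n) (f g : Edge n 2) : ℝ :=
  sosK (iP p f) (iP q f) (iP p g) (iP q g) (MT p q f g) (if f = g then 1 else 0)

lemma card_inter_pq {p q : Fin n} (hpq : p ≠ q) (s : Finset (Fin n)) :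
    (s ∩ {p, q}).card = (if p ∈ s then 1 else 0) + (if q ∈ s then 1 else 0) := by
  rw [Finset.inter_comm, ← Finset.filter_mem_eq_inter, Finset.card_filter, Finset.sum_pair hpq]

lemma MT_eq {p q : Fin n} (f g : Edge n 2) :
    MT p q f g = (((f.1 ∩ g.1) \ {p,q}).card : ℝ) := by
  unfold MT
  have h : ∀ u : Fin n, ((iP u f : ℕ) : ℝ) * ((iP u g : ℕ) : ℝ)
      = if u ∈ f.1 ∩ g.1 then (1:ℝ) else 0 := by
    intro u
    unfold iP
    by_cases h1 : u ∈ f.1 <;> by_cases h2 : u ∈ g.1 <;>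
      simp [h1, h2, Finset.mem_inter]
  simp only [h]
  rw [Finset.sum_boole]
  congr 1
  rw [Finset.filter_mem_eq_inter]
  congr 1
  ext u
  simp [Finset.mem_sdiff, Finset.mem_inter]
  tauto

lemma FA {p q : Fin n} (hpq : p ≠ q) (e f : Edge n 2) (he : e.1 = {p,q}) :
    (e.1 ∪ f.1).card + iP p f + iP q f = 4 := by
  have h := Finset.card_union_add_card_inter e.1 f.1
  have h2 : e.1 ∩ f.1 = f.1 ∩ {p,q} := by rw [he, Finset.inter_comm]
  rw [h2, e.2, f.2, card_inter_pq hpq] at h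
  unfold iP
  omega

lemma Fdiag {p q : Fin n} (hpq : p ≠ q) (f : Edge n 2) :
    (f.1 \ {p,q}).card + iP p f + iP q f = 2 := by
  have h := Finset.card_inter_add_card_sdiff f.1 ({p,q} : Finset (Fin n))
  rw [card_inter_pq hpq, f.2] at h
  unfold iP
  omega

lemma indmul {p : Fin n} (f g : Edge n 2) :
    (if p ∈ f.1 ∩ g.1 then 1 else 0) = iP p f * iP p g := by
  unfold iP
  by_cases h1 : p ∈ f.1 <;> by_cases h2 : p ∈ g.1 <;> simp [h1, h2, Finset.mem_inter]

lemma FC {p q : Fin n} (hpq : p ≠ q) (f g : Edge n 2) :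
    (f.1 ∪ g.1).card + ((f.1 ∩ g.1) \ {p,q}).card + iP p f * iP p g + iP q f * iP q g = 4 := by
  have h := Finset.card_union_add_card_inter f.1 g.1
  have h2 := Finset.card_inter_add_card_sdiff (f.1 ∩ g.1) ({p,q} : Finset (Fin n))
  rw [card_inter_pq hpq, indmul, indmul] at h2
  rw [f.2, g.2] at h
  omega

lemma FN {p q : Fin n} (hpq : p ≠ q) (e f g : Edge n 2) (he : e.1 = {p,q}) :
    (e.1 ∪ f.1 ∪ g.1).card + iP p f + iP q f + iP p g + iP q g + ((f.1 ∩ g.1) \ {p,q}).card = 6 := by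
  have c1 := Finset.card_union_add_card_inter (e.1 ∪ f.1) g.1
  have c5 : e.1 ∩ g.1 = g.1 ∩ {p,q} := by rw [he, Finset.inter_comm]
  have c2 : (e.1 ∪ f.1) ∩ g.1 = (g.1 ∩ {p,q}) ∪ (f.1 ∩ g.1) := by
    rw [Finset.union_inter_distrib_right, c5]
  have c3 := Finset.card_union_add_card_inter (g.1 ∩ {p,q}) (f.1 ∩ g.1)
  have c4 : (g.1 ∩ {p,q}) ∩ (f.1 ∩ g.1) = (f.1 ∩ g.1) ∩ {p,q} := by
    ext u; simp only [Finset.mem_inter, Finset.mem_insert, Finset.mem_singleton]; tauto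
  rw [c2, g.2] at c1
  rw [c4, card_inter_pq hpq, card_inter_pq hpq, indmul, indmul] at c3
  have h2 := Finset.card_inter_add_card_sdiff (f.1 ∩ g.1) ({p,q} : Finset (Fin n))
  rw [card_inter_pq hpq, indmul, indmul] at h2
  have hA := FA hpq e f he
  unfold iP at hA ⊢
  omega

lemma Fne {p q : Fin n} (hpq : p ≠ q) (f g : Edge n 2) (hfg : f ≠ g) :
    ((f.1 ∩ g.1) \ {p,q}).card + iP p f * iP p g + iP q f * iP q g ≤ 1 := by
  have hle : (f.1 ∩ g.1).card ≤ 1 := by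
    by_contra hcon
    push_neg at hcon
    have h1 : f.1 ∩ g.1 ⊆ f.1 := Finset.inter_subset_left
    have h2 : f.1 = f.1 ∩ g.1 := (Finset.eq_of_subset_of_card_le h1 (by omega : f.1.card ≤ (f.1 ∩ g.1).card)).symm
    have h3 : f.1 ⊆ g.1 := h2 ▸ Finset.inter_subset_right
    have h4 : f.1 = g.1 := Finset.eq_of_subset_of_card_le h3 (by rw [f.2, g.2])
    exact hfg (Subtype.ext h4)
  have h2 := Finset.card_inter_add_card_sdiff (f.1 ∩ g.1) ({p,q} : Finset (Fin n))
  rw [card_inter_pq hpq, indmul, indmul] at h2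
  omega

lemma key {p q : Fin n} (hpq : p ≠ q) (e f g : Edge n 2) (he : e.1 = {p,q}) :
    w e f g + w f e g + w f g e + (w e g f + w g e f + w g f e) = kern p q f g := by
  have hfe : f.1 ∪ e.1 = e.1 ∪ f.1 := Finset.union_comm _ _
  have hge : g.1 ∪ e.1 = e.1 ∪ g.1 := Finset.union_comm _ _
  have hgf : g.1 ∪ f.1 = f.1 ∪ g.1 := Finset.union_comm _ _
  by_cases hfg : f = g
  · subst hfg
    have u1 : f.1 ∪ f.1 = f.1 := Finset.union_self _
    have u2 : e.1 ∪ f.1 ∪ f.1 = e.1 ∪ f.1 := by rw [Finset.union_assoc, u1]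
    unfold w kern
    rw [u1, hfe, u2, e.2, f.2]
    simp only [if_pos rfl]
    rw [MT_eq, Finset.inter_self]
    push_cast
    exact numeric_diag (iP p f) (iP q f) _ _ (iP_le p f) (iP_le q f) (FA hpq e f he) (Fdiag hpq f)
  · have u3 : f.1 ∪ g.1 ∪ e.1 = e.1 ∪ f.1 ∪ g.1 := by
      ext u; simp only [Finset.mem_union]; tauto
    have u4 : e.1 ∪ g.1 ∪ f.1 = e.1 ∪ f.1 ∪ g.1 := by
      ext u; simp only [Finset.mem_union]; tauto
    unfold w kern
    rw [hfe, hge, hgf, u3, u4, e.2, f.2, g.2]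
    simp only [if_neg hfg]
    rw [MT_eq]
    push_cast
    exact numeric_ne (iP p f) (iP q f) (iP p g) (iP q g) _ _ _ _ _
      (iP_le p f) (iP_le q f) (iP_le p g) (iP_le q g)
      (FA hpq e f he) (FA hpq e g he) (FC hpq f g) (FN hpq e f g he)
      (by have := Fdiag hpq f; have h2 : ((f.1 ∩ g.1) \ {p,q}).card ≤ (f.1 \ {p,q}).card :=
            Finset.card_le_card (Finset.sdiff_subset_sdiff Finset.inter_subset_left (le_refl _)); omega)
      (by have := Fdiag hpq g; have h2 : ((f.1 ∩ g.1) \ {p,q}).card ≤ (g.1 \ {p,q}).card :=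
            Finset.card_le_card (Finset.sdiff_subset_sdiff Finset.inter_subset_right (le_refl _)); omega)
      (Fne hpq f g hfg)


/-! ### the SOS decomposition of the quadratic form -/

noncomputable def cdW (p q : Fin n) (f : Edge n 2) : ℝ := (1 - (iP p f : ℝ)) * (1 - (iP q f : ℝ))
noncomputable def cdS (p q : Fin n) (f : Edge n 2) : ℝ :=
  (iP p f : ℝ) + (iP q f : ℝ) - 2*((iP p f : ℝ)*(iP q f : ℝ))
noncomputable def cdE (p q : Fin n) (f : Edge n 2) : ℝ := (iP p f : ℝ)*(iP q f : ℝ)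
noncomputable def muF (p q : Fin n) (f : Edge n 2) : ℝ := (iP p f : ℝ) - (iP q f : ℝ)
noncomputable def L1 (p q : Fin n) (f : Edge n 2) : ℝ := cdE p q f + 14/27*cdS p q f + 1/3*cdW p q f
noncomputable def L2 (p q : Fin n) (f : Edge n 2) : ℝ := cdS p q f + 288/295*cdW p q f
noncomputable def PP (p q : Fin n) (f : Edge n 2) : ℝ := cdS p q f + 18/35*cdW p q f

lemma kern_eq (p q : Fin n) (f g : Edge n 2) :
    kern p q f g = 3/4*(L1 p q f*L1 p q g) + 295/7776*(L2 p q f*L2 p q g)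
      + 13/2360*(cdW p q f*cdW p q g) + 1/96*(muF p q f*muF p q g)
      + MT p q f g * (35/288*(PP p q f*PP p q g) + 1/105*(cdW p q f*cdW p q g)
          + 5/288*(muF p q f*muF p q g))
      + (if f = g then 1 else 0)*(1/24*cdW p q f) := by
  simp only [kern, sosK, L1, L2, PP, cdE, cdS, cdW, muF]
  ring

lemma kern_split (p q : Fin n) (v : Edge n 2 → ℝ) (f g : Edge n 2) :
    kern p q f g * (v f * v g) =
      3/4*((L1 p q f*v f)*(L1 p q g*v g)) + 295/7776*((L2 p q f*v f)*(L2 p q g*v g))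
      + 13/2360*((cdW p q f*v f)*(cdW p q g*v g)) + 1/96*((muF p q f*v f)*(muF p q g*v g))
      + (∑ u ∈ Finset.univ \ {p,q}, (35/288*(((iP u f:ℝ)*PP p q f*v f)*((iP u g:ℝ)*PP p q g*v g))
           + 1/105*(((iP u f:ℝ)*cdW p q f*v f)*((iP u g:ℝ)*cdW p q g*v g))
           + 5/288*(((iP u f:ℝ)*muF p q f*v f)*((iP u g:ℝ)*muF p q g*v g))))
      + (if f = g then 1/24*cdW p q f*(v f*v g) else 0) := by
  rw [kern_eq]
  have h : MT p q f g * ((35/288*(PP p q f*PP p q g) + 1/105*(cdW p q f*cdW p q g)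
        + 5/288*(muF p q f*muF p q g)) * (v f * v g))
      = ∑ u ∈ Finset.univ \ {p,q}, (35/288*(((iP u f:ℝ)*PP p q f*v f)*((iP u g:ℝ)*PP p q g*v g))
           + 1/105*(((iP u f:ℝ)*cdW p q f*v f)*((iP u g:ℝ)*cdW p q g*v g))
           + 5/288*(((iP u f:ℝ)*muF p q f*v f)*((iP u g:ℝ)*muF p q g*v g))) := by
    rw [MT, Finset.sum_mul]
    exact Finset.sum_congr rfl fun u _ => by ring
  by_cases hfg : f = g
  · simp only [if_pos hfg]
    linear_combination h
  · simp only [if_neg hfg]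
    linear_combination h

lemma rank1 (v α : Edge n 2 → ℝ) (c : ℝ) (hc : 0 ≤ c) :
    0 ≤ ∑ f : Edge n 2, ∑ g : Edge n 2, c * ((α f * v f) * (α g * v g)) := by
  have h : (∑ f : Edge n 2, ∑ g : Edge n 2, c * ((α f * v f) * (α g * v g)))
      = c * ((∑ f : Edge n 2, α f * v f) * (∑ f : Edge n 2, α f * v f)) := by
    rw [Finset.sum_mul_sum, Finset.mul_sum]
    exact Finset.sum_congr rfl fun f _ => by rw [Finset.mul_sum]
  rw [h]
  exact mul_nonneg hc (mul_self_nonneg _)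

lemma cdW_nonneg (p q : Fin n) (f : Edge n 2) : 0 ≤ cdW p q f := by
  unfold cdW iP
  by_cases h1 : p ∈ f.1 <;> by_cases h2 : q ∈ f.1 <;> simp [h1, h2]

lemma rankU (v β : Edge n 2 → ℝ) (s : Finset (Fin n)) (c : ℝ) (hc : 0 ≤ c) :
    0 ≤ ∑ f : Edge n 2, ∑ g : Edge n 2, ∑ u ∈ s,
        c * (((iP u f:ℝ) * β f * v f) * ((iP u g:ℝ) * β g * v g)) := by
  rw [show (∑ f : Edge n 2, ∑ g : Edge n 2, ∑ u ∈ s,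
        c * (((iP u f:ℝ)*β f*v f)*((iP u g:ℝ)*β g*v g)))
      = ∑ f : Edge n 2, ∑ u ∈ s, ∑ g : Edge n 2,
        c * (((iP u f:ℝ)*β f*v f)*((iP u g:ℝ)*β g*v g)) from
    Finset.sum_congr rfl fun f _ => Finset.sum_comm, Finset.sum_comm]
  exact Finset.sum_nonneg fun u _ => rank1 v (fun f => (iP u f : ℝ)*β f) c hc

lemma sum_kern_nonneg (p q : Fin n) (v : Edge n 2 → ℝ) :
    0 ≤ ∑ f : Edge n 2, ∑ g : Edge n 2, kern p q f g * (v f * v g) := by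
  have hsplit : (∑ f : Edge n 2, ∑ g : Edge n 2, kern p q f g * (v f * v g))
      = ∑ f : Edge n 2, ∑ g : Edge n 2,
        (3/4*((L1 p q f*v f)*(L1 p q g*v g)) + 295/7776*((L2 p q f*v f)*(L2 p q g*v g))
        + 13/2360*((cdW p q f*v f)*(cdW p q g*v g)) + 1/96*((muF p q f*v f)*(muF p q g*v g))
        + (∑ u ∈ Finset.univ \ {p,q}, (35/288*(((iP u f:ℝ)*PP p q f*v f)*((iP u g:ℝ)*PP p q g*v g))
             + 1/105*(((iP u f:ℝ)*cdW p q f*v f)*((iP u g:ℝ)*cdW p q g*v g))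
             + 5/288*(((iP u f:ℝ)*muF p q f*v f)*((iP u g:ℝ)*muF p q g*v g))))
        + (if f = g then 1/24*cdW p q f*(v f*v g) else 0)) :=
    Finset.sum_congr rfl fun f _ => Finset.sum_congr rfl fun g _ => kern_split p q v f g
  rw [hsplit]
  simp only [Finset.sum_add_distrib]
  refine add_nonneg (add_nonneg (add_nonneg (add_nonneg (add_nonneg ?_ ?_) ?_) ?_) ?_) ?_
  · exact rank1 v (L1 p q) (3/4) (by norm_num)
  · exact rank1 v (L2 p q) (295/7776) (by norm_num)
  · exact rank1 v (cdW p q) (13/2360) (by norm_num)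
  · exact rank1 v (muF p q) (1/96) (by norm_num)
  · refine add_nonneg (add_nonneg ?_ ?_) ?_
    · exact rankU v (PP p q) _ (35/288) (by norm_num)
    · exact rankU v (cdW p q) _ (1/105) (by norm_num)
    · exact rankU v (muF p q) _ (5/288) (by norm_num)
  · simp only [Finset.sum_ite_eq, Finset.mem_univ, if_true]
    refine Finset.sum_nonneg fun f _ => ?_
    exact mul_nonneg (mul_nonneg (by norm_num) (cdW_nonneg p q f)) (mul_self_nonneg _)

lemma Q_nonneg (e : Edge n 2) (v : Edge n 2 → ℝ) : 0 ≤ Q e v := by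
  obtain ⟨p, q, hpq, he⟩ := Finset.card_eq_two.mp e.2
  have h2 : Q e v = ∑ f : Edge n 2, ∑ g : Edge n 2, (w e g f + w g e f + w g f e) * (v f * v g) := by
    unfold Q
    rw [Finset.sum_comm]
    exact Finset.sum_congr rfl fun f _ => Finset.sum_congr rfl fun g _ => by ring
  have hdouble : Q e v + Q e v = ∑ f : Edge n 2, ∑ g : Edge n 2, kern p q f g * (v f * v g) := by
    nth_rewrite 2 [h2]
    unfold Q
    simp only [← Finset.sum_add_distrib]
    refine Finset.sum_congr rfl fun f _ => Finset.sum_congr rfl fun g _ => ?_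
    have k := key hpq e f g he
    linear_combination (v f * v g) * k
  have h3 := sum_kern_nonneg p q v
  linarith [hdouble ▸ h3]

lemma K_nonneg (z v : Edge n 2 → ℝ) (hz : ∀ e, 0 ≤ z e) : 0 ≤ K z v := by
  rw [K_eq]
  exact Finset.sum_nonneg fun e _ => mul_nonneg (hz e) (Q_nonneg e v)

end Stmt14Aux

open Stmt14Aux in
/-- For `d = 3` and `L = 2`, `f_3` is convex on the standard simplex. -/
theorem stmt14 (n : ℕ) (hn : 2 ≤ n) :
    ConvexOn ℝ (stdSimplex ℝ (Edge n 2)) (fPoly n 2 3) := by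
  refine ⟨convex_stdSimplex ℝ _, fun x hx y hy a b ha hb hab => ?_⟩
  have hfun : (a • x + b • y) = (fun e => a * x e + b * y e) := by
    funext e
    simp [Pi.add_apply, Pi.smul_apply, smul_eq_mul]
  have harg : fPoly n 2 3 (a • x + b • y) = fE (fun e => a * x e + b * y e) := by
    rw [hfun, fPoly_eq]
  have hsk := skeleton x y a b hab
  have h1 : 0 ≤ K x (fun e => x e - y e) := K_nonneg _ _ (fun e => hx.1 e)
  have h2 : 0 ≤ K y (fun e => x e - y e) := K_nonneg _ _ (fun e => hy.1 e)
  have h3 : 0 ≤ a * b / 3 * ((1 + a) * K x (fun e => x e - y e)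
      + (1 + b) * K y (fun e => x e - y e)) :=
    mul_nonneg (div_nonneg (mul_nonneg ha hb) (by norm_num))
      (add_nonneg (mul_nonneg (by linarith) h1) (mul_nonneg (by linarith) h2))
  have hx' := fPoly_eq x
  have hy' := fPoly_eq y
  simp only [smul_eq_mul, harg, hx', hy']
  linarith
end

section
/- For every integer d ≥ 3 and every γ ∈ ℕ^m with |γ| = d−2, the matrix Q_γ admits the recursive Hadamard-product decomposition Q_γ = M_γ ∘ ( Σ_{k ∈ {1,…,m} : γ_k ≥ 1} Q_{γ−u_k} + R_γ ), where M_γ := (ĉ_{γ+u_i+u_j})_{i,j=1}^m, R_γ := (1/γ!)·( b̂_{γ+u_i} + b̂_{γ+u_j} )_{i,j=1}^m with b̂_α := α!·b_α, and ∘ denotes the entrywise (Hadamard) product. -/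
open Finset Matrix

/-- `ĉ_α = 1/|⋃_{ℓ : α_ℓ ≥ 1} e_ℓ|`. -/
noncomputable def cHat (n L : ℕ) (α : Edge n L → ℕ) : ℝ :=
  (((Finset.univ.filter fun ℓ : Edge n L => 1 ≤ α ℓ).biUnion fun ℓ => ℓ.1).card : ℝ)⁻¹

/-- `b_α := ∑_{ē ∈ E^{|α|} : α(ē) = α} ∏_{r=1}^{|α|} 1/|e_{i_1} ∪ ⋯ ∪ e_{i_r}|`, where
`α(ē)` records the multiplicity of each edge in the tuple `ē`. -/
noncomputable def bCoef (n L : ℕ) (α : Edge n L → ℕ) : ℝ :=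
  ∑ t ∈ (Finset.univ : Finset (Fin (∑ ℓ, α ℓ) → Edge n L)).filter
      (fun t => ∀ ℓ, (Finset.univ.filter fun r => t r = ℓ).card = α ℓ),
    ∏ i, (((Finset.Iic i).biUnion fun r => (t r).1).card : ℝ)⁻¹

/-- `b̂_α := α! · b_α`. -/
noncomputable def bHat (n L : ℕ) (α : Edge n L → ℕ) : ℝ :=
  (∏ ℓ, ((α ℓ).factorial : ℝ)) * bCoef n L α

/-- The symmetric matrix `Q_γ` with `(Q_γ)_{ij} = (γ_i+1)(γ_j+1) b_{γ+u_i+u_j}` off the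
diagonal and `(Q_γ)_{ii} = (γ_i+1)(γ_i+2) b_{γ+2u_i}`. -/
noncomputable def Qmat (n L : ℕ) (γ : Edge n L → ℕ) : Matrix (Edge n L) (Edge n L) ℝ :=
  Matrix.of fun i j =>
    if i = j then
      (((γ i + 1) * (γ i + 2) : ℕ) : ℝ) * bCoef n L (fun ℓ => γ ℓ + if ℓ = i then 2 else 0)
    else
      (((γ i + 1) * (γ j + 1) : ℕ) : ℝ) *
        bCoef n L (fun ℓ => γ ℓ + (if ℓ = i then 1 else 0) + (if ℓ = j then 1 else 0))

/-- The matrix `M_γ = (ĉ_{γ+u_i+u_j})_{i,j}`. -/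
noncomputable def Mgamma (n L : ℕ) (γ : Edge n L → ℕ) : Matrix (Edge n L) (Edge n L) ℝ :=
  Matrix.of fun i j =>
    cHat n L (fun ℓ => γ ℓ + (if ℓ = i then 1 else 0) + (if ℓ = j then 1 else 0))

/-- The matrix `R_γ = (1/γ!)(b̂_{γ+u_i} + b̂_{γ+u_j})_{i,j}`. -/
noncomputable def Rgamma (n L : ℕ) (γ : Edge n L → ℕ) : Matrix (Edge n L) (Edge n L) ℝ :=
  Matrix.of fun i j =>
    (∏ ℓ, ((γ ℓ).factorial : ℝ))⁻¹ *
      (bHat n L (fun ℓ => γ ℓ + if ℓ = i then 1 else 0)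
        + bHat n L (fun ℓ => γ ℓ + if ℓ = j then 1 else 0))


noncomputable def bAux (n L d : ℕ) (α : Edge n L → ℕ) : ℝ :=
  ∑ t ∈ (Finset.univ : Finset (Fin d → Edge n L)).filter
      (fun t => ∀ ℓ, (Finset.univ.filter fun r => t r = ℓ).card = α ℓ),
    ∏ i, (((Finset.Iic i).biUnion fun r => (t r).1).card : ℝ)⁻¹

lemma count_snoc (n L d : ℕ) (t' : Fin d → Edge n L) (k ℓ : Edge n L) :
    (Finset.univ.filter fun r : Fin (d+1) => (Fin.snoc t' k : Fin (d+1) → Edge n L) r = ℓ).card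
      = (Finset.univ.filter fun r : Fin d => t' r = ℓ).card + if k = ℓ then 1 else 0 := by
  classical
  rw [Finset.card_filter, Finset.card_filter, Fin.sum_univ_castSucc]
  simp [Fin.snoc_castSucc, Fin.snoc_last]

lemma biUnion_Iic_castSucc (n L d : ℕ) (t' : Fin d → Edge n L) (k : Edge n L) (i : Fin d) :
    ((Finset.Iic (Fin.castSucc i)).biUnion fun r => ((Fin.snoc t' k : Fin (d+1) → Edge n L) r).1)
      = (Finset.Iic i).biUnion fun r => (t' r).1 := by
  ext x
  simp only [Finset.mem_biUnion, Finset.mem_Iic]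
  constructor
  · rintro ⟨r, hr, hx⟩
    have hrd : (r : ℕ) < d := lt_of_le_of_lt hr i.2
    refine ⟨⟨r, hrd⟩, by exact_mod_cast hr, ?_⟩
    have : r = Fin.castSucc ⟨r, hrd⟩ := by ext; rfl
    rwa [this, Fin.snoc_castSucc] at hx
  · rintro ⟨r, hr, hx⟩
    exact ⟨Fin.castSucc r, by exact_mod_cast hr, by rwa [Fin.snoc_castSucc]⟩

lemma biUnion_Iic_last (n L d : ℕ) (α : Edge n L → ℕ) (t : Fin (d+1) → Edge n L)
    (ht : ∀ ℓ, (Finset.univ.filter fun r => t r = ℓ).card = α ℓ) :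
    ((Finset.Iic (Fin.last d)).biUnion fun r => (t r).1)
      = (Finset.univ.filter fun ℓ : Edge n L => 1 ≤ α ℓ).biUnion fun ℓ => ℓ.1 := by
  classical
  have h1 : Finset.Iic (Fin.last d) = Finset.univ := by
    ext r; simp [Fin.le_last]
  rw [h1]
  ext x
  simp only [Finset.mem_biUnion, Finset.mem_univ, true_and, Finset.mem_filter]
  constructor
  · rintro ⟨r, hx⟩
    refine ⟨t r, ?_, hx⟩
    rw [← ht (t r)]
    exact Finset.card_pos.2 ⟨r, by simp⟩
  · rintro ⟨ℓ, hℓ, hx⟩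
    have : 0 < (Finset.univ.filter fun r => t r = ℓ).card := by rw [ht]; exact hℓ
    obtain ⟨r, hr⟩ := Finset.card_pos.1 this
    exact ⟨r, by simp only [Finset.mem_filter] at hr; rw [hr.2]; exact hx⟩

lemma cond_iff (n L d : ℕ) (α : Edge n L → ℕ) (t' : Fin d → Edge n L) (k : Edge n L) :
    (∀ ℓ, (Finset.univ.filter fun r : Fin (d+1) =>
        (Fin.snoc t' k : Fin (d+1) → Edge n L) r = ℓ).card = α ℓ)
      ↔ (1 ≤ α k ∧ ∀ ℓ, (Finset.univ.filter fun r : Fin d => t' r = ℓ).card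
          = α ℓ - if ℓ = k then 1 else 0) := by
  classical
  simp only [count_snoc]
  constructor
  · intro h
    have hk := h k
    simp only [eq_self_iff_true, if_true] at hk
    refine ⟨by omega, fun ℓ => ?_⟩
    have hℓ := h ℓ
    by_cases hkl : k = ℓ
    · subst hkl; simp only [if_pos rfl] at hℓ ⊢; omega
    · rw [if_neg hkl] at hℓ; rw [if_neg (Ne.symm hkl)]; omega
  · rintro ⟨hk, h⟩ ℓ
    have hℓ := h ℓ
    by_cases hkl : k = ℓ
    · subst hkl; rw [if_pos rfl] at hℓ ⊢; omega
    · rw [if_neg hkl]; rw [if_neg (Ne.symm hkl)] at hℓ; omega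

lemma bAux_succ (n L d : ℕ) (α : Edge n L → ℕ) :
    bAux n L (d+1) α = cHat n L α *
      ∑ k ∈ Finset.univ.filter (fun k : Edge n L => 1 ≤ α k),
        bAux n L d (fun ℓ => α ℓ - if ℓ = k then 1 else 0) := by
  classical
  unfold bAux
  rw [Finset.sum_filter]
  rw [← (Fin.snocEquiv (fun _ => Edge n L)).sum_comp]
  rw [Fintype.sum_prod_type]
  rw [Finset.mul_sum, Finset.sum_filter]
  refine Fintype.sum_congr _ _ fun k => ?_
  simp only [Fin.snocEquiv_apply]
  rw [show (if 1 ≤ α k then cHat n L α * ∑ t ∈ (Finset.univ : Finset (Fin d → Edge n L)).filter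
      (fun t => ∀ ℓ, (Finset.univ.filter fun r => t r = ℓ).card = α ℓ - if ℓ = k then 1 else 0),
      ∏ i, (((Finset.Iic i).biUnion fun r => (t r).1).card : ℝ)⁻¹ else 0)
    = ∑ t' : Fin d → Edge n L, if (1 ≤ α k ∧ ∀ ℓ, (Finset.univ.filter fun r : Fin d => t' r = ℓ).card
          = α ℓ - if ℓ = k then 1 else 0) then
        cHat n L α * ∏ i, (((Finset.Iic i).biUnion fun r => (t' r).1).card : ℝ)⁻¹ else 0 from ?_]
  · refine Fintype.sum_congr _ _ fun t' => ?_
    by_cases h : ∀ ℓ, (Finset.univ.filter fun r : Fin (d+1) =>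
        (Fin.snoc t' k : Fin (d+1) → Edge n L) r = ℓ).card = α ℓ
    · rw [if_pos h, if_pos ((cond_iff n L d α t' k).1 h)]
      rw [Fin.prod_univ_castSucc]
      simp only [biUnion_Iic_castSucc, biUnion_Iic_last n L d α _ h]
      rw [mul_comm]
      rfl
    · rw [if_neg h, if_neg (fun hc => h ((cond_iff n L d α t' k).2 hc))]
  · by_cases hk : 1 ≤ α k
    · rw [if_pos hk, Finset.mul_sum, Finset.sum_filter]
      refine Fintype.sum_congr _ _ fun t' => ?_
      by_cases h : ∀ ℓ, (Finset.univ.filter fun r : Fin d => t' r = ℓ).card = α ℓ - if ℓ = k then 1 else 0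
      · rw [if_pos h, if_pos ⟨hk, h⟩]
      · rw [if_neg h, if_neg (fun hc => h hc.2)]
    · rw [if_neg hk]
      symm
      refine Finset.sum_eq_zero fun t' _ => ?_
      rw [if_neg (fun hc => hk hc.1)]

lemma bCoef_eq_bAux (n L : ℕ) (α : Edge n L → ℕ) : bCoef n L α = bAux n L (∑ ℓ, α ℓ) α := rfl
lemma sum_sub_single (n L : ℕ) (α : Edge n L → ℕ) (k : Edge n L) (hk : 1 ≤ α k) :
    ∑ ℓ, (α ℓ - if ℓ = k then 1 else 0) = (∑ ℓ, α ℓ) - 1 := by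
  classical
  have h1 : ∑ ℓ, α ℓ = ∑ ℓ, ((α ℓ - if ℓ = k then 1 else 0) + if ℓ = k then 1 else 0) := by
    refine Finset.sum_congr rfl fun ℓ _ => ?_
    by_cases h : ℓ = k
    · subst h; simp; omega
    · simp [h]
  rw [h1, Finset.sum_add_distrib, Finset.sum_ite_eq' Finset.univ k (fun _ => 1)]
  simp
lemma bCoef_rec (n L : ℕ) (α : Edge n L → ℕ) (d : ℕ) (hd : ∑ ℓ, α ℓ = d + 1) :
    bCoef n L α = cHat n L α *
      ∑ k ∈ Finset.univ.filter (fun k : Edge n L => 1 ≤ α k),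
        bCoef n L (fun ℓ => α ℓ - if ℓ = k then 1 else 0) := by
  classical
  rw [bCoef_eq_bAux, hd, bAux_succ]
  refine congrArg (fun x => cHat n L α * x) ?_
  refine Finset.sum_congr rfl fun k hk => ?_
  have hk' : 1 ≤ α k := (Finset.mem_filter.1 hk).2
  rw [bCoef_eq_bAux, sum_sub_single n L α k hk', hd, Nat.add_sub_cancel]

lemma core (n L : ℕ) (γ : Edge n L → ℕ) (i j : Edge n L) :
    (((γ i + 1) * ((γ j + 1) + if i = j then 1 else 0) : ℕ) : ℝ) *
        bCoef n L (fun ℓ => γ ℓ + (if ℓ = i then 1 else 0) + (if ℓ = j then 1 else 0))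
      = cHat n L (fun ℓ => γ ℓ + (if ℓ = i then 1 else 0) + (if ℓ = j then 1 else 0)) *
        ((∑ k ∈ Finset.univ.filter fun k : Edge n L => 1 ≤ γ k,
            ((((γ i - if i = k then 1 else 0) + 1) *
              (((γ j - if j = k then 1 else 0) + 1) + if i = j then 1 else 0) : ℕ) : ℝ) *
              bCoef n L (fun ℓ => ((γ ℓ - if ℓ = k then 1 else 0) + if ℓ = i then 1 else 0)
                + if ℓ = j then 1 else 0))
          + (((γ i + 1 : ℕ) : ℝ) * bCoef n L (fun ℓ => γ ℓ + if ℓ = i then 1 else 0)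
            + ((γ j + 1 : ℕ) : ℝ) * bCoef n L (fun ℓ => γ ℓ + if ℓ = j then 1 else 0))) := by
  classical
  set α : Edge n L → ℕ := fun ℓ => γ ℓ + (if ℓ = i then 1 else 0) + (if ℓ = j then 1 else 0) with hα
  have hsum : ∑ ℓ, α ℓ = (∑ ℓ, γ ℓ) + 1 + 1 := by
    simp only [hα, Finset.sum_add_distrib, Finset.sum_ite_eq' Finset.univ, Finset.mem_univ,
      if_true]
  rw [bCoef_rec n L α ((∑ ℓ, γ ℓ) + 1) hsum, mul_left_comm]
  refine congrArg (fun x => cHat n L α * x) ?_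
  rw [Finset.mul_sum, Finset.sum_filter, Finset.sum_filter]
  have hextra : ((γ i + 1 : ℕ) : ℝ) * bCoef n L (fun ℓ => γ ℓ + if ℓ = i then 1 else 0)
      + ((γ j + 1 : ℕ) : ℝ) * bCoef n L (fun ℓ => γ ℓ + if ℓ = j then 1 else 0)
      = ∑ k : Edge n L,
          ((if k = j then ((γ i + 1 : ℕ) : ℝ) * bCoef n L (fun ℓ => γ ℓ + if ℓ = i then 1 else 0) else 0)
          + (if k = i then ((γ j + 1 : ℕ) : ℝ) * bCoef n L (fun ℓ => γ ℓ + if ℓ = j then 1 else 0) else 0)) := by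
    rw [Finset.sum_add_distrib, Finset.sum_ite_eq' Finset.univ, Finset.sum_ite_eq' Finset.univ]
    simp [add_comm]
  rw [hextra, ← Finset.sum_add_distrib]
  refine Finset.sum_congr rfl fun k _ => ?_
  by_cases hki : k = i
  · by_cases hkj : k = j
    · -- k = i = j
      have hij : i = j := hki.symm.trans hkj
      subst hij
      simp only [hki]
      have hαi : 1 ≤ α i := by simp [hα]
      have hA : (fun ℓ => α ℓ - if ℓ = i then 1 else 0)
          = fun ℓ => γ ℓ + if ℓ = i then 1 else 0 := by
        funext ℓ
        by_cases h : ℓ = i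
        · subst h; simp [hα]
        · simp [hα, h]
      rw [if_pos hαi, hA]
      simp only [eq_self_iff_true, if_true]
      by_cases hg : 1 ≤ γ i
      · have hB : (fun ℓ => ((γ ℓ - if ℓ = i then 1 else 0) + if ℓ = i then 1 else 0)
            + if ℓ = i then 1 else 0) = fun ℓ => γ ℓ + if ℓ = i then 1 else 0 := by
          funext ℓ
          by_cases h : ℓ = i
          · subst h; simp; omega
          · simp [h]
        rw [if_pos hg, hB]
        have h1 : γ i - 1 + 1 = γ i := by omega
        rw [h1]
        push_cast
        ring
      · rw [if_neg hg]
        have h0 : γ i = 0 := by omega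
        simp only [h0]
        push_cast
        ring
    · -- k = i ≠ j
      subst hki
      have hij' : ¬ k = j := hkj
      have hji : ¬ j = k := fun h => hkj h.symm
      have hαk1 : 1 ≤ α k := by simp [hα, hij']
      have hA : (fun ℓ => α ℓ - if ℓ = k then 1 else 0)
          = fun ℓ => γ ℓ + if ℓ = j then 1 else 0 := by
        funext ℓ
        by_cases h : ℓ = k
        · subst h; simp [hα, hij']
        · simp [hα, h]
      rw [if_pos hαk1, hA]
      simp only [if_neg hij', eq_self_iff_true, if_true, zero_add]
      by_cases hg : 1 ≤ γ k
      · have hB : (fun ℓ => ((γ ℓ - if ℓ = k then 1 else 0) + if ℓ = k then 1 else 0)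
            + if ℓ = j then 1 else 0) = fun ℓ => γ ℓ + if ℓ = j then 1 else 0 := by
          funext ℓ
          by_cases h : ℓ = k
          · subst h; simp [hij']; omega
          · simp [h]
        rw [if_pos hg, hB]
        have h1 : γ k - 1 + 1 = γ k := by omega
        simp only [eq_self_iff_true, if_true, if_neg hji, Nat.sub_zero, h1, add_zero]
        push_cast
        ring
      · rw [if_neg hg]
        have h0 : γ k = 0 := by omega
        simp only [h0]
        push_cast
        ring
  · by_cases hkj : k = j
    · -- k = j ≠ i
      subst hkj
      have hik : ¬ i = k := fun h => hki h.symm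
      have hαk1 : 1 ≤ α k := by simp [hα, hki]
      have hA : (fun ℓ => α ℓ - if ℓ = k then 1 else 0)
          = fun ℓ => γ ℓ + if ℓ = i then 1 else 0 := by
        funext ℓ
        by_cases h : ℓ = k
        · subst h; simp [hα, hki]
        · simp [hα, h]
      rw [if_pos hαk1, hA]
      simp only [if_neg hki, eq_self_iff_true, if_true, add_zero]
      by_cases hg : 1 ≤ γ k
      · have hB : (fun ℓ => ((γ ℓ - if ℓ = k then 1 else 0) + if ℓ = i then 1 else 0)
            + if ℓ = k then 1 else 0) = fun ℓ => γ ℓ + if ℓ = i then 1 else 0 := by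
          funext ℓ
          by_cases h : ℓ = k
          · subst h; simp [hki]; omega
          · simp [h]
        rw [if_pos hg, hB]
        have h1 : γ k - 1 + 1 = γ k := by omega
        simp only [eq_self_iff_true, if_true, if_neg hik, Nat.sub_zero, h1, add_zero]
        push_cast
        ring
      · rw [if_neg hg]
        have h0 : γ k = 0 := by omega
        simp only [h0, if_neg hik]
        push_cast
        ring
    · -- k ≠ i, k ≠ j
      have hik : ¬ i = k := fun h => hki h.symm
      have hjk : ¬ j = k := fun h => hkj h.symm
      have hαk' : α k = γ k := by simp [hα, hki, hkj]
      simp only [if_neg hki, if_neg hkj, add_zero]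
      by_cases hg : 1 ≤ γ k
      · have hαk1 : 1 ≤ α k := by omega
        have hAB : (fun ℓ => α ℓ - if ℓ = k then 1 else 0)
            = fun ℓ => ((γ ℓ - if ℓ = k then 1 else 0) + if ℓ = i then 1 else 0)
                + if ℓ = j then 1 else 0 := by
          funext ℓ
          by_cases h : ℓ = k
          · subst h; simp [hα, hki, hkj]
          · simp [hα, h]
        rw [if_pos hαk1, if_pos hg, hAB]
        simp only [if_neg hik, if_neg hjk, Nat.sub_zero]
      · have hαk0 : ¬ 1 ≤ α k := by omega
        rw [if_neg hαk0, if_neg hg]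

lemma prod_fact (n L : ℕ) (γ : Edge n L → ℕ) (i : Edge n L) :
    (∏ ℓ : Edge n L, (((γ ℓ + if ℓ = i then 1 else 0).factorial : ℕ) : ℝ))
      = ((γ i + 1 : ℕ) : ℝ) * ∏ ℓ : Edge n L, (((γ ℓ).factorial : ℕ) : ℝ) := by
  classical
  have h1 : ∀ ℓ ∈ Finset.univ.erase i,
      (((γ ℓ + if ℓ = i then 1 else 0).factorial : ℕ) : ℝ) = (((γ ℓ).factorial : ℕ) : ℝ) := by
    intro ℓ hℓ
    rw [if_neg (Finset.ne_of_mem_erase hℓ), add_zero]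
  rw [← Finset.mul_prod_erase Finset.univ _ (Finset.mem_univ i),
      ← Finset.mul_prod_erase Finset.univ (fun ℓ => (((γ ℓ).factorial : ℕ) : ℝ)) (Finset.mem_univ i),
      Finset.prod_congr rfl h1, if_pos rfl, Nat.factorial_succ]
  push_cast
  ring

lemma inv_fold (P a b x y : ℝ) (hP : P ≠ 0) :
    P⁻¹ * ((a * P) * x + (b * P) * y) = a * x + b * y := by
  field_simp

set_option maxHeartbeats 1600000 in
/-- For `d ≥ 3` and `|γ| = d − 2`, the Hadamard-product recursion
`Q_γ = M_γ ∘ (∑_{k : γ_k ≥ 1} Q_{γ−u_k} + R_γ)`. -/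
theorem stmt18 (n L d : ℕ) (hn : 2 ≤ n) (hL : 2 ≤ L) (hd : 3 ≤ d)
    (γ : Edge n L → ℕ) (hγ : ∑ ℓ, γ ℓ = d - 2) :
    Qmat n L γ =
      (Mgamma n L γ) ⊙
        ((∑ k ∈ Finset.univ.filter (fun k : Edge n L => 1 ≤ γ k),
            Qmat n L (fun ℓ => γ ℓ - if ℓ = k then 1 else 0))
          + Rgamma n L γ) := by
  classical
  have hP : (∏ ℓ : Edge n L, (((γ ℓ).factorial : ℕ) : ℝ)) ≠ 0 := by
    refine ne_of_gt (Finset.prod_pos fun ℓ _ => ?_)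
    exact_mod_cast Nat.factorial_pos (γ ℓ)
  ext i j
  simp only [Matrix.hadamard_apply, Matrix.add_apply, Matrix.sum_apply, Qmat, Mgamma, Rgamma,
    Matrix.of_apply, bHat]
  by_cases hij : i = j
  · subst hij
    simp only [eq_self_iff_true, if_true]
    have hc := core n L γ i i
    simp only [eq_self_iff_true, if_true] at hc
    have h2 : (fun ℓ => γ ℓ + (if ℓ = i then 1 else 0) + (if ℓ = i then 1 else 0))
        = fun ℓ => γ ℓ + if ℓ = i then 2 else 0 := by
      funext ℓ; by_cases h : ℓ = i <;> simp [h]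
    have h3 : ∀ k : Edge n L, (fun ℓ => ((γ ℓ - if ℓ = k then 1 else 0) + if ℓ = i then 1 else 0)
          + if ℓ = i then 1 else 0)
        = fun ℓ => (γ ℓ - if ℓ = k then 1 else 0) + if ℓ = i then 2 else 0 := by
      intro k; funext ℓ; by_cases h : ℓ = i <;> simp [h]
    have h4 : ∀ m : ℕ, m + 1 + 1 = m + 2 := fun m => rfl
    simp only [h2, h3, h4] at hc
    rw [prod_fact n L γ i, inv_fold _ _ _ _ _ hP]
    simp only [h2]
    exact hc
  · simp only [if_neg hij]
    have hc := core n L γ i j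
    simp only [if_neg hij, add_zero] at hc
    rw [prod_fact n L γ i, prod_fact n L γ j, inv_fold _ _ _ _ _ hP]
    exact hc
end

section
/- For L = 2, n ≥ 2 and a fixed edge e₁ ∈ E, the symmetric E×E matrix B with entries B_{e,f} = 1/|e ∪ f| + 1/|e₁ ∪ e| + 1/|e₁ ∪ f| is positive semidefinite. -/
open Finset

/-- The edge set of the complete graph on `n` vertices (2-element subsets). -/
abbrev Edge2 (n : ℕ) := {e : Finset (Fin n) // e.card = 2}

/-- The matrix `B` with entries `B_{e,f} = 1/|e ∪ f| + 1/|e₁ ∪ e| + 1/|e₁ ∪ f|`. -/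
noncomputable def Bmat (n : ℕ) (e₁ : Edge2 n) : Matrix (Edge2 n) (Edge2 n) ℝ :=
  Matrix.of fun e f =>
    ((e.1 ∪ f.1).card : ℝ)⁻¹ + ((e₁.1 ∪ e.1).card : ℝ)⁻¹ + ((e₁.1 ∪ f.1).card : ℝ)⁻¹

lemma edge2_eq_iff {n : ℕ} (e f : Edge2 n) : e = f ↔ (e.1 ∩ f.1).card = 2 := by
  constructor
  · rintro rfl; simp [e.2]
  · intro h
    have h1 : e.1 ∩ f.1 = e.1 :=
      Finset.eq_of_subset_of_card_le Finset.inter_subset_left (by rw [h, e.2])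
    have h2 : e.1 ∩ f.1 = f.1 :=
      Finset.eq_of_subset_of_card_le Finset.inter_subset_right (by rw [h, f.2])
    exact Subtype.ext (h1.symm.trans h2)

lemma union_card_formula {n : ℕ} (e f : Edge2 n) :
    ((e.1 ∪ f.1).card : ℝ)⁻¹ =
      ((if e = f then (1:ℝ) else 0) + 3 + ((e.1 ∩ f.1).card : ℝ)) / 12 := by
  have hsum : (e.1 ∪ f.1).card + (e.1 ∩ f.1).card = 4 := by
    rw [Finset.card_union_add_card_inter, e.2, f.2]
  have hk : (e.1 ∩ f.1).card ≤ 2 :=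
    le_trans (Finset.card_le_card Finset.inter_subset_left) (le_of_eq e.2)
  rcases (by omega : (e.1 ∩ f.1).card = 0 ∨ (e.1 ∩ f.1).card = 1 ∨ (e.1 ∩ f.1).card = 2)
    with h | h | h
  · have hne : ¬ e = f := by rw [edge2_eq_iff]; omega
    have hu : (e.1 ∪ f.1).card = 4 := by omega
    rw [if_neg hne, hu, h]; norm_num
  · have hne : ¬ e = f := by rw [edge2_eq_iff]; omega
    have hu : (e.1 ∪ f.1).card = 3 := by omega
    rw [if_neg hne, hu, h]; norm_num
  · have heq : e = f := (edge2_eq_iff e f).2 h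
    have hu : (e.1 ∪ f.1).card = 2 := by omega
    rw [if_pos heq, hu, h]; norm_num

lemma card_inter_as_sum {n : ℕ} (e f : Edge2 n) :
    ((e.1 ∩ f.1).card : ℝ) =
      ∑ v : Fin n, (if v ∈ e.1 then (1:ℝ) else 0) * (if v ∈ f.1 then (1:ℝ) else 0) := by
  have h : ∀ v : Fin n, (if v ∈ e.1 then (1:ℝ) else 0) * (if v ∈ f.1 then (1:ℝ) else 0)
      = if v ∈ e.1 ∩ f.1 then (1:ℝ) else 0 := by
    intro v
    by_cases h1 : v ∈ e.1 <;> by_cases h2 : v ∈ f.1 <;> simp [h1, h2]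
  rw [Finset.sum_congr rfl fun v _ => h v, Finset.sum_boole, Finset.filter_univ_mem]

lemma card_inter_as_sum' {n : ℕ} (e₁ e : Edge2 n) :
    ((e₁.1 ∩ e.1).card : ℝ) = ∑ v ∈ e₁.1, (if v ∈ e.1 then (1:ℝ) else 0) := by
  rw [Finset.sum_boole, Finset.filter_mem_eq_inter]

/-- For `L = 2`, the matrix `B` is positive semidefinite. -/
theorem stmt19 (n : ℕ) (hn : 2 ≤ n) (e₁ : Edge2 n) :
    (Bmat n e₁).PosSemidef := by
  rw [Matrix.posSemidef_iff_dotProduct_mulVec]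
  constructor
  · ext e f
    simp only [Matrix.conjTranspose_apply, Bmat, Matrix.of_apply, star_trivial]
    rw [Finset.union_comm f.1 e.1]
    ring
  · intro x
    have hx : star x = x := by funext i; exact star_trivial _
    rw [hx]
    have hB : ∀ e f : Edge2 n, Bmat n e₁ e f =
        ((if e = f then (1:ℝ) else 0) + (if e₁ = e then (1:ℝ) else 0)
          + (if e₁ = f then (1:ℝ) else 0) + 9
          + ((e.1 ∩ f.1).card : ℝ) + ((e₁.1 ∩ e.1).card : ℝ)
          + ((e₁.1 ∩ f.1).card : ℝ)) / 12 := by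
      intro e f
      show ((e.1 ∪ f.1).card : ℝ)⁻¹ + ((e₁.1 ∪ e.1).card : ℝ)⁻¹ + ((e₁.1 ∪ f.1).card : ℝ)⁻¹ = _
      rw [union_card_formula e f, union_card_formula e₁ e, union_card_formula e₁ f]
      ring
    have hdot : dotProduct x (Matrix.mulVec (Bmat n e₁) x)
        = ∑ e : Edge2 n, ∑ f : Edge2 n, x e * x f * Bmat n e₁ e f := by
      simp only [dotProduct, Matrix.mulVec, Finset.mul_sum]
      exact Finset.sum_congr rfl fun e _ => Finset.sum_congr rfl fun f _ => by ring
    -- abbreviations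
    set S : ℝ := ∑ e : Edge2 n, x e with hS
    set W : Fin n → ℝ := fun v => ∑ e : Edge2 n, x e * (if v ∈ e.1 then (1:ℝ) else 0) with hW
    -- the seven pieces
    have E1 : ∑ e : Edge2 n, ∑ f : Edge2 n, x e * x f * (if e = f then (1:ℝ) else 0)
        = ∑ e : Edge2 n, (x e)^2 := by
      refine Finset.sum_congr rfl fun e _ => ?_
      simp [mul_ite, mul_one, mul_zero, Finset.sum_ite_eq, sq]
    have E2 : ∑ e : Edge2 n, ∑ f : Edge2 n, x e * x f * (if e₁ = e then (1:ℝ) else 0)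
        = x e₁ * S := by
      have h : ∀ e : Edge2 n, ∑ f : Edge2 n, x e * x f * (if e₁ = e then (1:ℝ) else 0)
          = if e₁ = e then x e * S else 0 := by
        intro e
        by_cases h : e₁ = e <;> simp [h, ← Finset.mul_sum, hS]
      rw [Finset.sum_congr rfl fun e _ => h e, Finset.sum_ite_eq]
      simp
    have E3 : ∑ e : Edge2 n, ∑ f : Edge2 n, x e * x f * (if e₁ = f then (1:ℝ) else 0)
        = S * x e₁ := by
      have h : ∀ e : Edge2 n, ∑ f : Edge2 n, x e * x f * (if e₁ = f then (1:ℝ) else 0)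
          = x e * x e₁ := by
        intro e
        simp [mul_ite, mul_one, mul_zero, Finset.sum_ite_eq]
      rw [Finset.sum_congr rfl fun e _ => h e, ← Finset.sum_mul, ← hS]
    have E4 : ∑ e : Edge2 n, ∑ f : Edge2 n, x e * x f * (9:ℝ) = 9 * S^2 := by
      have h : ∀ e : Edge2 n, ∑ f : Edge2 n, x e * x f * (9:ℝ) = x e * S * 9 := by
        intro e
        rw [← Finset.sum_mul, ← Finset.mul_sum, ← hS]
      rw [Finset.sum_congr rfl fun e _ => h e, ← Finset.sum_mul, ← Finset.sum_mul, ← hS]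
      ring
    have E5 : ∑ e : Edge2 n, ∑ f : Edge2 n, x e * x f * ((e.1 ∩ f.1).card : ℝ)
        = ∑ v : Fin n, (W v)^2 := by
      have h : ∀ e f : Edge2 n, x e * x f * ((e.1 ∩ f.1).card : ℝ)
          = ∑ v : Fin n, (x e * (if v ∈ e.1 then (1:ℝ) else 0))
              * (x f * (if v ∈ f.1 then (1:ℝ) else 0)) := by
        intro e f
        rw [card_inter_as_sum, Finset.mul_sum]
        exact Finset.sum_congr rfl fun v _ => by ring
      calc ∑ e : Edge2 n, ∑ f : Edge2 n, x e * x f * ((e.1 ∩ f.1).card : ℝ)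
          = ∑ e : Edge2 n, ∑ v : Fin n, ∑ f : Edge2 n,
              (x e * (if v ∈ e.1 then (1:ℝ) else 0))
                * (x f * (if v ∈ f.1 then (1:ℝ) else 0)) := by
            refine Finset.sum_congr rfl fun e _ => ?_
            rw [Finset.sum_congr rfl fun f _ => h e f]
            exact Finset.sum_comm
        _ = ∑ v : Fin n, ∑ e : Edge2 n, ∑ f : Edge2 n,
              (x e * (if v ∈ e.1 then (1:ℝ) else 0))
                * (x f * (if v ∈ f.1 then (1:ℝ) else 0)) := Finset.sum_comm
        _ = ∑ v : Fin n, (W v)^2 := by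
            refine Finset.sum_congr rfl fun v _ => ?_
            rw [← Finset.sum_mul_sum, hW, sq]
    have E6 : ∑ e : Edge2 n, ∑ f : Edge2 n, x e * x f * ((e₁.1 ∩ e.1).card : ℝ)
        = (∑ v ∈ e₁.1, W v) * S := by
      have h : ∀ e : Edge2 n, ∑ f : Edge2 n, x e * x f * ((e₁.1 ∩ e.1).card : ℝ)
          = (x e * ((e₁.1 ∩ e.1).card : ℝ)) * S := by
        intro e
        have h' : ∑ f : Edge2 n, x e * x f * ((e₁.1 ∩ e.1).card : ℝ)
            = (x e * ((e₁.1 ∩ e.1).card : ℝ)) * ∑ f : Edge2 n, x f := by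
          rw [Finset.mul_sum]
          exact Finset.sum_congr rfl fun f _ => by ring
        rw [h', ← hS]
      have hsum6 : ∑ e : Edge2 n, x e * ((e₁.1 ∩ e.1).card : ℝ) = ∑ v ∈ e₁.1, W v := by
        calc ∑ e : Edge2 n, x e * ((e₁.1 ∩ e.1).card : ℝ)
            = ∑ e : Edge2 n, ∑ v ∈ e₁.1, x e * (if v ∈ e.1 then (1:ℝ) else 0) := by
              refine Finset.sum_congr rfl fun e _ => ?_
              rw [card_inter_as_sum', Finset.mul_sum]
          _ = ∑ v ∈ e₁.1, W v := Finset.sum_comm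
      rw [Finset.sum_congr rfl fun e _ => h e, ← Finset.sum_mul, hsum6]
    have E7 : ∑ e : Edge2 n, ∑ f : Edge2 n, x e * x f * ((e₁.1 ∩ f.1).card : ℝ)
        = S * (∑ v ∈ e₁.1, W v) := by
      have h : ∀ e : Edge2 n, ∑ f : Edge2 n, x e * x f * ((e₁.1 ∩ f.1).card : ℝ)
          = x e * (∑ f : Edge2 n, x f * ((e₁.1 ∩ f.1).card : ℝ)) := by
        intro e
        rw [Finset.mul_sum]
        exact Finset.sum_congr rfl fun f _ => by ring
      have hsum7 : ∑ f : Edge2 n, x f * ((e₁.1 ∩ f.1).card : ℝ) = ∑ v ∈ e₁.1, W v := by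
        calc ∑ f : Edge2 n, x f * ((e₁.1 ∩ f.1).card : ℝ)
            = ∑ f : Edge2 n, ∑ v ∈ e₁.1, x f * (if v ∈ f.1 then (1:ℝ) else 0) := by
              refine Finset.sum_congr rfl fun f _ => ?_
              rw [card_inter_as_sum', Finset.mul_sum]
          _ = ∑ v ∈ e₁.1, W v := Finset.sum_comm
      have h2 : ∑ e : Edge2 n, x e * (∑ f : Edge2 n, x f * ((e₁.1 ∩ f.1).card : ℝ))
          = (∑ e : Edge2 n, x e) * (∑ v ∈ e₁.1, W v) := by
        rw [← Finset.sum_mul, hsum7]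
      rw [Finset.sum_congr rfl fun e _ => h e, h2, ← hS]
    set A : ℝ := ∑ e : Edge2 n, (x e)^2 with hA
    set Q : ℝ := ∑ v : Fin n, (W v)^2 with hQ
    set T : ℝ := ∑ v ∈ e₁.1, W v with hT
    have key : dotProduct x (Matrix.mulVec (Bmat n e₁) x)
        = (A + 2 * (x e₁) * S + 9 * S^2 + Q + 2 * S * T) / 12 := by
      have hstep : ∑ e : Edge2 n, ∑ f : Edge2 n, x e * x f * Bmat n e₁ e f
          = (∑ e : Edge2 n, ∑ f : Edge2 n,
              (x e * x f * (if e = f then (1:ℝ) else 0)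
               + x e * x f * (if e₁ = e then (1:ℝ) else 0)
               + x e * x f * (if e₁ = f then (1:ℝ) else 0)
               + x e * x f * (9:ℝ)
               + x e * x f * ((e.1 ∩ f.1).card : ℝ)
               + x e * x f * ((e₁.1 ∩ e.1).card : ℝ)
               + x e * x f * ((e₁.1 ∩ f.1).card : ℝ))) * (12:ℝ)⁻¹ := by
        rw [Finset.sum_mul]
        refine Finset.sum_congr rfl fun e _ => ?_
        rw [Finset.sum_mul]
        refine Finset.sum_congr rfl fun f _ => ?_
        rw [hB e f]; ring
      have hsplit : ∑ e : Edge2 n, ∑ f : Edge2 n,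
              (x e * x f * (if e = f then (1:ℝ) else 0)
               + x e * x f * (if e₁ = e then (1:ℝ) else 0)
               + x e * x f * (if e₁ = f then (1:ℝ) else 0)
               + x e * x f * (9:ℝ)
               + x e * x f * ((e.1 ∩ f.1).card : ℝ)
               + x e * x f * ((e₁.1 ∩ e.1).card : ℝ)
               + x e * x f * ((e₁.1 ∩ f.1).card : ℝ))
          = (∑ e : Edge2 n, ∑ f : Edge2 n, x e * x f * (if e = f then (1:ℝ) else 0))
            + (∑ e : Edge2 n, ∑ f : Edge2 n, x e * x f * (if e₁ = e then (1:ℝ) else 0))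
            + (∑ e : Edge2 n, ∑ f : Edge2 n, x e * x f * (if e₁ = f then (1:ℝ) else 0))
            + (∑ e : Edge2 n, ∑ f : Edge2 n, x e * x f * (9:ℝ))
            + (∑ e : Edge2 n, ∑ f : Edge2 n, x e * x f * ((e.1 ∩ f.1).card : ℝ))
            + (∑ e : Edge2 n, ∑ f : Edge2 n, x e * x f * ((e₁.1 ∩ e.1).card : ℝ))
            + (∑ e : Edge2 n, ∑ f : Edge2 n, x e * x f * ((e₁.1 ∩ f.1).card : ℝ)) := by
        simp only [Finset.sum_add_distrib]
      rw [hdot, hstep, hsplit, E1, E2, E3, E4, E5, E6, E7]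
      ring
    rw [key]
    have hxA : (x e₁)^2 ≤ A :=
      Finset.single_le_sum (fun e _ => sq_nonneg (x e)) (Finset.mem_univ e₁)
    have hTQ : T^2 ≤ 2 * Q := by
      have cs := Finset.sum_mul_sq_le_sq_mul_sq e₁.1 (fun _ => (1:ℝ)) W
      simp only [one_mul, one_pow] at cs
      have hc : (∑ _v ∈ e₁.1, (1:ℝ)) = 2 := by
        rw [Finset.sum_const, e₁.2]; norm_num
      have hsub : (∑ v ∈ e₁.1, (W v)^2) ≤ Q := by
        refine Finset.sum_le_sum_of_subset_of_nonneg (Finset.subset_univ _) ?_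
        intro v _ _; exact sq_nonneg _
      calc T^2 ≤ (∑ _v ∈ e₁.1, (1:ℝ)) * (∑ v ∈ e₁.1, (W v)^2) := cs
        _ = 2 * (∑ v ∈ e₁.1, (W v)^2) := by rw [hc]
        _ ≤ 2 * Q := by linarith
    have h0 : 0 ≤ A + 2 * (x e₁) * S + 9 * S^2 + Q + 2 * S * T := by
      nlinarith [sq_nonneg (x e₁ + S), sq_nonneg (T + 2*S), sq_nonneg S]
    exact div_nonneg h0 (by norm_num)
end
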